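/- arXiv:2310.06314 — 12 statements merged into one kernel-verified Lean document; each statement's English description precedes it below -/
import Mathlib

section
/- For every positive integer n, (z+1)·s_n(z) = S_n(z), where S_n(z) is the large Schröder polynomial and s_n(z) is the little Schröder polynomial. -/
open Finset

/-- Large Schröder polynomial `S_n(z)`. -/
noncomputable def schroederS (n : ℕ) (z : ℚ) : ℚ :=
  ∑ k ∈ Finset.range (n + 1),
    (n.choose k : ℚ) * ((n + k).choose k : ℚ) * z ^ k / (k + 1)

/-- Little Schröder polynomial `s_n(z)`. -/
noncomputable def schroederLittle (n : ℕ) (z : ℚ) : ℚ :=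
  ∑ k ∈ Finset.Icc 1 n,
    (1 / (n : ℚ)) * (n.choose k : ℚ) * (n.choose (k - 1) : ℚ) * z ^ (k - 1) * (z + 1) ^ (n - k)

/-- Central Delannoy polynomial `D_n(z)`. -/
noncomputable def delannoy (n : ℕ) (z : ℚ) : ℚ :=
  ∑ k ∈ Finset.range (n + 1), (n.choose k : ℚ) * ((n + k).choose k : ℚ) * z ^ k

lemma keyNat (n k : ℕ) (hk : k ≤ n) :
    ∑ i ∈ Finset.range (k + 1),
      n.choose (i + 1) * (n.choose i * (n - i).choose (k - i)) =
    n.choose k * (n + k).choose (k + 1) := by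
  have h1 : ∀ i ∈ Finset.range (k + 1),
      n.choose (i + 1) * (n.choose i * (n - i).choose (k - i)) =
      n.choose k * (n.choose (i + 1) * k.choose i) := by
    intro i hi
    rw [Finset.mem_range] at hi
    have hik : i ≤ k := Nat.lt_succ_iff.mp hi
    rw [← Nat.choose_mul hik]
    ring
  rw [Finset.sum_congr rfl h1, ← Finset.mul_sum]
  congr 1
  -- Vandermonde: (n+k).choose (k+1) = ∑ over antidiagonal
  rw [Nat.add_choose_eq n k (k + 1), Finset.Nat.sum_antidiagonal_eq_sum_range_succ_mk,
    Finset.sum_range_succ' (fun a => n.choose a * k.choose (k + 1 - a)) (k + 1)]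
  have h0 : n.choose 0 * k.choose (k + 1 - 0) = 0 := by simp
  rw [h0, add_zero]
  apply Finset.sum_congr rfl
  intro i hi
  rw [Finset.mem_range] at hi
  have hik : i ≤ k := Nat.lt_succ_iff.mp hi
  have h2 : k + 1 - (i + 1) = k - i := by omega
  rw [h2, ← Nat.choose_symm hik]

lemma keyNat' (n k : ℕ) (hk : k ≤ n) :
    ∑ i ∈ Finset.range (k + 1),
      n.choose (i + 1) * (n.choose i * (n - i).choose (k - i)) =
    n.choose k * (n + k).choose (k + 1) := keyNat n k hk

lemma keyQ (n k : ℕ) (hn : 1 ≤ n) (hk : k ≤ n) (z : ℚ) :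
    ∑ j ∈ Finset.Icc 1 (k + 1),
      (1 / (n : ℚ)) * (n.choose j : ℚ) * (n.choose (j - 1) : ℚ) *
        ((n + 1 - j).choose (k + 1 - j) : ℚ) =
    (n.choose k : ℚ) * ((n + k).choose k : ℚ) / (k + 1) := by
  have hIcc : Finset.Icc 1 (k + 1) = Finset.Ico 1 (k + 2) := by
    rw [← Finset.Ico_add_one_right_eq_Icc]; rfl
  rw [hIcc, Finset.sum_Ico_eq_sum_range]
  have hrange : k + 2 - 1 = k + 1 := by omega
  rw [hrange]
  have hterm : ∀ i ∈ Finset.range (k + 1),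
      (1 / (n : ℚ)) * (n.choose (1 + i) : ℚ) * (n.choose ((1 + i) - 1) : ℚ) *
        ((n + 1 - (1 + i)).choose (k + 1 - (1 + i)) : ℚ) =
      (1 / (n : ℚ)) * ((n.choose (i + 1) * (n.choose i * (n - i).choose (k - i)) : ℕ) : ℚ) := by
    intro i hi
    have h1 : 1 + i - 1 = i := by omega
    have h2 : n + 1 - (1 + i) = n - i := by omega
    have h3 : k + 1 - (1 + i) = k - i := by omega
    have h4 : 1 + i = i + 1 := by omega
    rw [h1, h2, h3, h4]
    push_cast
    ring
  rw [Finset.sum_congr rfl hterm, ← Finset.mul_sum, ← Nat.cast_sum, keyNat n k hk]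
  have hchoose : ((n + k).choose (k + 1) : ℚ) * (k + 1) = ((n + k).choose k : ℚ) * n := by
    have := Nat.choose_succ_right_eq (n + k) k
    have hs : n + k - k = n := by omega
    rw [hs] at this
    exact_mod_cast congrArg (Nat.cast : ℕ → ℚ) this
  have hn0 : (n : ℚ) ≠ 0 := by positivity
  have hk0 : ((k : ℚ) + 1) ≠ 0 := by positivity
  push_cast
  field_simp
  nlinarith [hchoose]

theorem little_times_zplus1_eq_large (n : ℕ) (hn : 1 ≤ n) (z : ℚ) :
    (z + 1) * schroederLittle n z = schroederS n z := by
  unfold schroederLittle schroederS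
  rw [Finset.mul_sum]
  -- rewrite LHS summand
  have step1 : ∀ j ∈ Finset.Icc 1 n,
      (z + 1) * ((1 / (n : ℚ)) * (n.choose j : ℚ) * (n.choose (j - 1) : ℚ) *
        z ^ (j - 1) * (z + 1) ^ (n - j)) =
      (1 / (n : ℚ)) * (n.choose j : ℚ) * (n.choose (j - 1) : ℚ) *
        z ^ (j - 1) * (z + 1) ^ (n + 1 - j) := by
    intro j hj
    rw [Finset.mem_Icc] at hj
    have : n + 1 - j = (n - j) + 1 := by omega
    rw [this, pow_succ]
    ring
  rw [Finset.sum_congr rfl step1]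
  -- extend to Icc 1 (n+1): extra term is zero
  have hext : ∑ j ∈ Finset.Icc 1 (n + 1),
      (1 / (n : ℚ)) * (n.choose j : ℚ) * (n.choose (j - 1) : ℚ) *
        z ^ (j - 1) * (z + 1) ^ (n + 1 - j)
      = ∑ j ∈ Finset.Icc 1 n,
      (1 / (n : ℚ)) * (n.choose j : ℚ) * (n.choose (j - 1) : ℚ) *
        z ^ (j - 1) * (z + 1) ^ (n + 1 - j) := by
    rw [Finset.sum_Icc_succ_top (by omega)]
    simp [Nat.choose_succ_self]
  rw [← hext]
  -- binomial expansion of (z+1)^(n+1-j)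
  have step2 : ∀ j ∈ Finset.Icc 1 (n + 1),
      (1 / (n : ℚ)) * (n.choose j : ℚ) * (n.choose (j - 1) : ℚ) *
        z ^ (j - 1) * (z + 1) ^ (n + 1 - j) =
      ∑ m ∈ Finset.range (n + 2 - j),
        (1 / (n : ℚ)) * (n.choose j : ℚ) * (n.choose (j - 1) : ℚ) *
          ((n + 1 - j).choose m : ℚ) * z ^ (j - 1 + m) := by
    intro j hj
    rw [Finset.mem_Icc] at hj
    have hr : n + 2 - j = (n + 1 - j) + 1 := by omega
    rw [add_pow, hr, Finset.mul_sum]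
    apply Finset.sum_congr rfl
    intro m hm
    rw [pow_add]
    push_cast
    ring
  rw [Finset.sum_congr rfl step2]
  -- rewrite RHS via keyQ
  have step3 : ∀ k ∈ Finset.range (n + 1),
      (n.choose k : ℚ) * ((n + k).choose k : ℚ) * z ^ k / (k + 1) =
      ∑ j ∈ Finset.Icc 1 (k + 1),
        (1 / (n : ℚ)) * (n.choose j : ℚ) * (n.choose (j - 1) : ℚ) *
          ((n + 1 - j).choose (k + 1 - j) : ℚ) * z ^ k := by
    intro k hk
    rw [Finset.mem_range] at hk
    rw [← Finset.sum_mul, keyQ n k hn (by omega) z]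
    ring
  rw [Finset.sum_congr rfl step3]
  -- now both are double sums; use sigma reindexing
  rw [Finset.sum_sigma' (Finset.Icc 1 (n + 1)), Finset.sum_sigma' (Finset.range (n + 1))]
  apply Finset.sum_nbij' (i := fun p => ⟨p.1 - 1 + p.2, p.1⟩)
    (j := fun p => ⟨p.2, p.1 + 1 - p.2⟩)
  · rintro ⟨j, m⟩ hp
    simp only [Finset.mem_sigma, Finset.mem_Icc, Finset.mem_range] at hp ⊢
    omega
  · rintro ⟨k, j⟩ hp
    simp only [Finset.mem_sigma, Finset.mem_Icc, Finset.mem_range] at hp ⊢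
    omega
  · rintro ⟨j, m⟩ hp
    simp only [Finset.mem_sigma, Finset.mem_Icc, Finset.mem_range] at hp
    have h : j - 1 + m + 1 - j = m := by omega
    simp [h]
  · rintro ⟨k, j⟩ hp
    simp only [Finset.mem_sigma, Finset.mem_Icc, Finset.mem_range] at hp
    have h : j - 1 + (k + 1 - j) = k := by omega
    simp [h]
  · rintro ⟨j, m⟩ hp
    simp only [Finset.mem_sigma, Finset.mem_Icc, Finset.mem_range] at hp
    have h1 : j - 1 + m + 1 - j = m := by omega
    have h2 : j - 1 + m = j - 1 + m := rfl
    simp only [h1]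
end

section
/- For every positive integer n, 2z(2n+1)·S_n(z) = D_{n+1}(z) − D_{n-1}(z), where D_n(z) is the n-th central Delannoy polynomial. -/
open Finset

open Finset

lemma key (n k : ℕ) (hn : 1 ≤ n) :
    2 * (2 * (n : ℚ) + 1) * (n.choose k : ℚ) * ((n + k).choose k : ℚ) / ((k : ℚ) + 1)
      = ((n + 1).choose (k + 1) : ℚ) * ((n + k + 2).choose (k + 1) : ℚ)
        - ((n - 1).choose (k + 1) : ℚ) * ((n + k).choose (k + 1) : ℚ) := by
  have hk1 : ((k : ℚ) + 1) ≠ 0 := by positivity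
  have hn1 : ((n : ℚ) + 1) ≠ 0 := by positivity
  have hn0 : (n : ℚ) ≠ 0 := by
    have : 0 < (n : ℚ) := by exact_mod_cast hn
    linarith
  have F1 : ((n + 1).choose (k + 1) : ℚ) * ((k : ℚ) + 1) = ((n : ℚ) + 1) * (n.choose k : ℚ) := by
    have h := Nat.add_one_mul_choose_eq n k
    exact_mod_cast h.symm
  have F2 : ((n + k).choose (k + 1) : ℚ) * ((k : ℚ) + 1) = ((n + k).choose k : ℚ) * (n : ℚ) := by
    have := Nat.choose_succ_right_eq (n + k) k
    rw [Nat.add_sub_cancel] at this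
    exact_mod_cast this
  have F3 : ((n + k + 2).choose (k + 1) : ℚ) * ((k : ℚ) + 1)
      = ((n + k + 2).choose k : ℚ) * ((n : ℚ) + 2) := by
    have := Nat.choose_succ_right_eq (n + k + 2) k
    have h2 : n + k + 2 - k = n + 2 := by omega
    rw [h2] at this
    exact_mod_cast this
  have F4 : ((n + k).choose k : ℚ) * ((n : ℚ) + (k : ℚ) + 1)
      = ((n + k + 1).choose k : ℚ) * ((n : ℚ) + 1) := by
    have := Nat.choose_mul_succ_eq (n + k) k
    have h2 : n + k + 1 - k = n + 1 := by omega
    rw [h2] at this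
    exact_mod_cast this
  have F5 : ((n + k + 1).choose k : ℚ) * ((n : ℚ) + (k : ℚ) + 2)
      = ((n + k + 2).choose k : ℚ) * ((n : ℚ) + 2) := by
    have := Nat.choose_mul_succ_eq (n + k + 1) k
    have h2 : n + k + 1 + 1 - k = n + 2 := by omega
    have h3 : n + k + 1 + 1 = n + k + 2 := by omega
    rw [h2, h3] at this
    exact_mod_cast this
  have p1 : (((n + 1).choose (k + 1) : ℚ) * ((k : ℚ) + 1))
      * (((n + k + 2).choose (k + 1) : ℚ) * (((k : ℚ) + 1) * ((n : ℚ) + 1)))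
      = (((n : ℚ) + 1) * (n.choose k : ℚ))
        * (((n + k).choose k : ℚ) * ((n : ℚ) + (k : ℚ) + 1) * ((n : ℚ) + (k : ℚ) + 2)) := by
    have e2 : ((n + k + 2).choose (k + 1) : ℚ) * (((k : ℚ) + 1) * ((n : ℚ) + 1))
        = ((n + k).choose k : ℚ) * ((n : ℚ) + (k : ℚ) + 1) * ((n : ℚ) + (k : ℚ) + 2) := by
      linear_combination ((n : ℚ) + 1) * F3 - ((n : ℚ) + 1) * F5 - ((n : ℚ) + (k : ℚ) + 2) * F4
    rw [F1, e2]
  rcases Nat.lt_or_ge k (n - 1) with hc | hc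
  · -- generic case: k + 2 ≤ n
    have hkn : k + 2 ≤ n := by omega
    have F6 : ((n - 1).choose (k + 1) : ℚ) * ((k : ℚ) + 1) * (n : ℚ)
        = (n.choose k : ℚ) * ((n : ℚ) - (k : ℚ)) * ((n : ℚ) - 1 - (k : ℚ)) := by
      have h6 : (n - 1).choose (k + 1) * (k + 1) = (n - 1).choose k * (n - 1 - k) :=
        Nat.choose_succ_right_eq (n - 1) k
      have h7 : (n - 1).choose k * n = n.choose k * (n - k) := by
        have := Nat.choose_mul_succ_eq (n - 1) k
        rw [Nat.sub_add_cancel hn] at this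
        exact this
      have hcomb : (n - 1).choose (k + 1) * (k + 1) * n = n.choose k * (n - k) * (n - 1 - k) := by
        calc (n - 1).choose (k + 1) * (k + 1) * n = (n - 1).choose k * n * (n - 1 - k) := by
              rw [h6]; ring
          _ = n.choose k * (n - k) * (n - 1 - k) := by rw [h7]
      have c1 : ((n - k : ℕ) : ℚ) = (n : ℚ) - (k : ℚ) := by
        rw [Nat.cast_sub (by omega : k ≤ n)]
      have c2 : ((n - 1 - k : ℕ) : ℚ) = (n : ℚ) - 1 - (k : ℚ) := by
        rw [Nat.cast_sub (by omega : k ≤ n - 1), Nat.cast_sub hn]; push_cast; ring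
      calc ((n - 1).choose (k + 1) : ℚ) * ((k : ℚ) + 1) * (n : ℚ)
          = (((n - 1).choose (k + 1) * (k + 1) * n : ℕ) : ℚ) := by push_cast; ring
        _ = ((n.choose k * (n - k) * (n - 1 - k) : ℕ) : ℚ) := by rw [hcomb]
        _ = (n.choose k : ℚ) * ((n : ℚ) - (k : ℚ)) * ((n : ℚ) - 1 - (k : ℚ)) := by
              push_cast [c1, c2]; ring
    have p2 : (((n - 1).choose (k + 1) : ℚ) * ((k : ℚ) + 1) * (n : ℚ))
        * (((n + k).choose (k + 1) : ℚ) * ((k : ℚ) + 1))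
        = ((n.choose k : ℚ) * ((n : ℚ) - (k : ℚ)) * ((n : ℚ) - 1 - (k : ℚ)))
          * (((n + k).choose k : ℚ) * (n : ℚ)) := by rw [F6, F2]
    rw [div_eq_iff hk1]
    have hfac : ((k : ℚ) + 1) * (n : ℚ) * ((n : ℚ) + 1) ≠ 0 :=
      mul_ne_zero (mul_ne_zero hk1 hn0) hn1
    apply mul_left_cancel₀ hfac
    linear_combination ((n : ℚ) + 1) * p2 - (n : ℚ) * p1
  · -- k ≥ n - 1
    have hc3 : (n - 1).choose (k + 1) = 0 := Nat.choose_eq_zero_of_lt (by omega)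
    rw [hc3]
    simp only [Nat.cast_zero, zero_mul, sub_zero]
    rcases Nat.lt_or_ge n k with hbig | hle
    · have ha : n.choose k = 0 := Nat.choose_eq_zero_of_lt hbig
      have hc1 : (n + 1).choose (k + 1) = 0 := Nat.choose_eq_zero_of_lt (by omega)
      rw [ha, hc1]
      simp
    · rw [div_eq_iff hk1]
      rcases Nat.eq_or_lt_of_le hle with hk | hk
      · -- k = n
        subst hk
        have hfac : ((k : ℚ) + 1) ^ 2 ≠ 0 := pow_ne_zero 2 hn1
        apply mul_left_cancel₀ hfac
        linear_combination -p1
      · -- n = k + 1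
        have hnk : n = k + 1 := by omega
        subst hnk
        have hfac : ((k : ℚ) + 1) * ((k : ℚ) + 2) ≠ 0 := by positivity
        apply mul_left_cancel₀ hfac
        push_cast
        push_cast at p1
        linear_combination -p1

theorem delannoy_schroeder_relation (n : ℕ) (hn : 1 ≤ n) (z : ℚ) :
    2 * z * (2 * (n : ℚ) + 1) * schroederS n z = delannoy (n + 1) z - delannoy (n - 1) z := by
  have hL : 2 * z * (2 * (n : ℚ) + 1) * schroederS n z
      = ∑ k ∈ Finset.range (n + 2),
          (2 * (2 * (n : ℚ) + 1) * (n.choose k : ℚ) * ((n + k).choose k : ℚ) / ((k : ℚ) + 1))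
            * z ^ (k + 1) := by
    rw [Finset.sum_range_succ, Nat.choose_succ_self]
    unfold schroederS
    rw [Finset.mul_sum]
    simp only [Nat.cast_zero, zero_mul, mul_zero, zero_div, add_zero]
    refine Finset.sum_congr rfl fun k _ => ?_
    field_simp
    ring
  have hD1 : delannoy (n + 1) z
      = ∑ j ∈ Finset.range (n + 3), ((n + 1).choose j : ℚ) * ((n + 1 + j).choose j : ℚ) * z ^ j := by
    unfold delannoy
    rw [Finset.sum_range_succ (n := n + 2), Nat.choose_succ_self]
    simp
  have hD2 : delannoy (n - 1) z
      = ∑ j ∈ Finset.range (n + 3), ((n - 1).choose j : ℚ) * ((n - 1 + j).choose j : ℚ) * z ^ j := by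
    unfold delannoy
    refine Finset.sum_subset (Finset.range_subset_range.2 (by omega)) fun j _ hj => ?_
    have : (n - 1).choose j = 0 := Nat.choose_eq_zero_of_lt (by simp [Finset.mem_range] at hj; omega)
    rw [this]
    simp
  rw [hL, hD1, hD2, ← Finset.sum_sub_distrib]
  conv_rhs => rw [Finset.sum_range_succ']
  simp only [Nat.choose_zero_right, Nat.cast_one, pow_zero, mul_one, Nat.add_zero, one_mul,
    sub_self, add_zero]
  apply Finset.sum_congr rfl
  intro k _
  have e1 : n + 1 + (k + 1) = n + k + 2 := by omega
  have e2 : n - 1 + (k + 1) = n + k := by omega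
  rw [e1, e2]
  rw [key n k hn]
  ring
end

section
/- For n ≥ 1, the sequence F_n(z) = ε^n·S_n(z) (with ε ∈ {−1,1}) satisfies the recurrence (n+2)·F_{n+1}(z) = ε(2n+1)(1+2z)·F_n(z) − (n−1)·F_{n-1}(z). -/
open Finset

open Nat in
private lemma factq (a : ℕ) : ((a+1)! : ℚ) = ((a:ℚ)+1) * (a ! : ℚ) := by
  push_cast [Nat.factorial_succ]; ring

/-- shifted term for `z * S (m+1)`. -/
private noncomputable def zterm (m : ℕ) (z : ℚ) : ℕ → ℚ
  | 0 => 0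
  | (j+1) => ((m+1).choose j : ℚ) * ((m+1+j).choose j : ℚ) * z ^ (j+1) / ((j:ℚ)+1)

open Nat in
private lemma key_gen (j m : ℕ) (z : ℚ) :
    ((j:ℚ)+m+4) * (((j+m+3).choose (j+1) : ℚ) * ((2*j+m+4).choose (j+1) : ℚ) * z^(j+1) / ((j:ℚ)+2))
    + ((j:ℚ)+m+1) * (((j+m+1).choose (j+1) : ℚ) * ((2*j+m+2).choose (j+1) : ℚ) * z^(j+1) / ((j:ℚ)+2))
    = (2*(j:ℚ)+2*m+5) * (((j+m+2).choose (j+1) : ℚ) * ((2*j+m+3).choose (j+1) : ℚ) * z^(j+1) / ((j:ℚ)+2))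
    + 2*(2*(j:ℚ)+2*m+5) * (((j+m+2).choose j : ℚ) * ((2*j+m+2).choose j : ℚ) * z^(j+1) / ((j:ℚ)+1)) := by
  rw [Nat.cast_choose ℚ (show j+1 ≤ j+m+3 by omega),
      Nat.cast_choose ℚ (show j+1 ≤ 2*j+m+4 by omega),
      Nat.cast_choose ℚ (show j+1 ≤ j+m+1 by omega),
      Nat.cast_choose ℚ (show j+1 ≤ 2*j+m+2 by omega),
      Nat.cast_choose ℚ (show j+1 ≤ j+m+2 by omega),
      Nat.cast_choose ℚ (show j+1 ≤ 2*j+m+3 by omega),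
      Nat.cast_choose ℚ (show j ≤ j+m+2 by omega),
      Nat.cast_choose ℚ (show j ≤ 2*j+m+2 by omega),
      show j+m+3 - (j+1) = m+2 by omega,
      show 2*j+m+4 - (j+1) = j+m+3 by omega,
      show j+m+1 - (j+1) = m by omega,
      show 2*j+m+2 - (j+1) = j+m+1 by omega,
      show j+m+2 - (j+1) = m+1 by omega,
      show 2*j+m+3 - (j+1) = j+m+2 by omega,
      show j+m+2 - j = m+2 by omega,
      show 2*j+m+2 - j = j+m+2 by omega,
      show j+m+3 = (j+m+2)+1 by ring, show j+m+2 = (j+m+1)+1 by ring,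
      show 2*j+m+4 = (2*j+m+3)+1 by ring, show 2*j+m+3 = (2*j+m+2)+1 by ring,
      show 2*j+m+2 = (2*j+m+1)+1 by ring,
      show m+2 = (m+1)+1 by ring]
  simp only [factq]
  have h1 : ((2*j+m+1)! : ℚ) ≠ 0 := by positivity
  have h2 : ((j+m+1)! : ℚ) ≠ 0 := by positivity
  have h3 : ((j)! : ℚ) ≠ 0 := by positivity
  have h4 : ((m)! : ℚ) ≠ 0 := by positivity
  have h5 : ((m+1)! : ℚ) ≠ 0 := by positivity
  have h6 : ((j+1)! : ℚ) ≠ 0 := by positivity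
  push_cast
  field_simp
  ring

open Nat in
private lemma key2 (m : ℕ) (z : ℚ) :
    ((m:ℚ)+3) * (((m+2).choose (m+1) : ℚ) * ((m+2+(m+1)).choose (m+1) : ℚ) * z^(m+1) / ((m:ℚ)+2))
    + (m:ℚ) * ((m.choose (m+1) : ℚ) * ((m+(m+1)).choose (m+1) : ℚ) * z^(m+1) / ((m:ℚ)+2))
    = (2*(m:ℚ)+3) * (((m+1).choose (m+1) : ℚ) * ((m+1+(m+1)).choose (m+1) : ℚ) * z^(m+1) / ((m:ℚ)+2))
    + 2*(2*(m:ℚ)+3) * (((m+1).choose m : ℚ) * ((m+1+m).choose m : ℚ) * z^(m+1) / ((m:ℚ)+1)) := by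
  rw [Nat.choose_self, Nat.choose_eq_zero_of_lt (by omega : m < m+1),
      Nat.choose_succ_self_right, Nat.choose_succ_self_right,
      Nat.cast_choose ℚ (show m+1 ≤ m+2+(m+1) by omega),
      Nat.cast_choose ℚ (show m+1 ≤ m+1+(m+1) by omega),
      Nat.cast_choose ℚ (show m ≤ m+1+m by omega),
      show m+2+(m+1) - (m+1) = m+2 by omega,
      show m+1+(m+1) - (m+1) = m+1 by omega,
      show m+1+m - m = m+1 by omega,
      show m+2+(m+1) = (2*m+2)+1 by ring,
      show m+1+(m+1) = (2*m+1)+1 by ring,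
      show m+1+m = (2*m)+1 by ring,
      show m+2 = (m+1)+1 by ring,
      show m+1 = m+1 from rfl]
  simp only [factq]
  have h1 : ((2*m)! : ℚ) ≠ 0 := by positivity
  have h3 : ((m)! : ℚ) ≠ 0 := by positivity
  push_cast
  field_simp
  ring

open Nat in
private lemma key3 (m : ℕ) (z : ℚ) :
    ((m:ℚ)+3) * (((m+2).choose (m+2) : ℚ) * ((m+2+(m+2)).choose (m+2) : ℚ) * z^(m+2) / ((m:ℚ)+3))
    + (m:ℚ) * ((m.choose (m+2) : ℚ) * ((m+(m+2)).choose (m+2) : ℚ) * z^(m+2) / ((m:ℚ)+3))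
    = (2*(m:ℚ)+3) * (((m+1).choose (m+2) : ℚ) * ((m+1+(m+2)).choose (m+2) : ℚ) * z^(m+2) / ((m:ℚ)+3))
    + 2*(2*(m:ℚ)+3) * (((m+1).choose (m+1) : ℚ) * ((m+1+(m+1)).choose (m+1) : ℚ) * z^(m+2) / ((m:ℚ)+2)) := by
  rw [Nat.choose_self, Nat.choose_self,
      Nat.choose_eq_zero_of_lt (by omega : m < m+2),
      Nat.choose_eq_zero_of_lt (by omega : m+1 < m+2),
      show m+2+(m+2) = 2*(m+2) by ring, show m+1+(m+1) = 2*(m+1) by ring]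
  have hc' : ((m:ℚ)+2) * ((2*(m+2)).choose (m+2) : ℚ)
      = (2*(2*(m:ℚ)+3)) * ((2*(m+1)).choose (m+1) : ℚ) := by
    have hc := Nat.succ_mul_centralBinom_succ (m+1)
    rw [Nat.centralBinom, Nat.centralBinom, show (m+1)+1 = m+2 from rfl] at hc
    have : ((((m+2) * (2*(m+2)).choose (m+2)) : ℕ) : ℚ)
        = (((2 * (2*(m+1)+1) * (2*(m+1)).choose (m+1)) : ℕ) : ℚ) := by exact_mod_cast hc
    push_cast at this
    linarith [this]
  have h1 : (m:ℚ)+3 ≠ 0 := by positivity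
  have h2 : (m:ℚ)+2 ≠ 0 := by positivity
  field_simp
  linear_combination (z^(m+2)) * ((m:ℚ)+3) * hc'

private lemma keyk (m k : ℕ) (z : ℚ) :
    ((m:ℚ)+3) * (((m+2).choose k : ℚ) * ((m+2+k).choose k : ℚ) * z^k / ((k:ℚ)+1))
    + (m:ℚ) * ((m.choose k : ℚ) * ((m+k).choose k : ℚ) * z^k / ((k:ℚ)+1))
    = (2*(m:ℚ)+3) * (((m+1).choose k : ℚ) * ((m+1+k).choose k : ℚ) * z^k / ((k:ℚ)+1))
    + 2*(2*(m:ℚ)+3) * zterm m z k := by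
  rcases k with _ | j
  · simp [zterm]; ring
  · rcases lt_trichotomy j m with hj | rfl | hj
    · obtain ⟨mm, rfl⟩ : ∃ mm, m = j + 1 + mm := ⟨m - (j+1), by omega⟩
      have h := key_gen j mm z
      simp only [zterm]
      rw [show j+1+mm+2+(j+1) = 2*j+mm+4 by ring, show j+1+mm+1+(j+1) = 2*j+mm+3 by ring,
          show j+1+mm+1+j = 2*j+mm+2 by ring, show j+1+mm+(j+1) = 2*j+mm+2 by ring,
          show j+1+mm+2 = j+mm+3 by ring, show j+1+mm+1 = j+mm+2 by ring,
          show (j+1+mm).choose (j+1) = (j+mm+1).choose (j+1) by rw [show j+1+mm = j+mm+1 by ring]]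
      push_cast at h ⊢
      linear_combination h
    · have h := key2 j z
      simp only [zterm]
      push_cast at h ⊢
      linear_combination h
    · rcases Nat.lt_or_ge j (m+2) with hj2 | hj2
      · obtain rfl : j = m + 1 := by omega
        have h := key3 m z
        simp only [zterm]
        push_cast at h ⊢
        linear_combination h
      · simp only [zterm]
        rw [Nat.choose_eq_zero_of_lt (by omega : m+2 < j+1),
            Nat.choose_eq_zero_of_lt (by omega : m < j+1),
            Nat.choose_eq_zero_of_lt (by omega : m+1 < j+1),
            Nat.choose_eq_zero_of_lt (by omega : m+1 < j)]
        push_cast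
        ring

private lemma S_rec (m : ℕ) (z : ℚ) :
    ((m:ℚ)+3) * schroederS (m+2) z + (m:ℚ) * schroederS m z
    = (2*(m:ℚ)+3) * schroederS (m+1) z + 2*(2*(m:ℚ)+3) * (z * schroederS (m+1) z) := by
  have e2 : schroederS (m+2) z
      = ∑ k ∈ Finset.range (m+3), ((m+2).choose k : ℚ) * ((m+2+k).choose k : ℚ) * z^k / ((k:ℚ)+1) := rfl
  have e1 : schroederS (m+1) z
      = ∑ k ∈ Finset.range (m+3), ((m+1).choose k : ℚ) * ((m+1+k).choose k : ℚ) * z^k / ((k:ℚ)+1) := by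
    rw [schroederS]
    refine Finset.sum_subset (Finset.range_subset_range.mpr (by omega)) (fun x hx hnx => ?_)
    simp only [Finset.mem_range] at hx hnx
    rw [Nat.choose_eq_zero_of_lt (show m+1 < x by omega)]
    simp
  have e0 : schroederS m z
      = ∑ k ∈ Finset.range (m+3), (m.choose k : ℚ) * ((m+k).choose k : ℚ) * z^k / ((k:ℚ)+1) := by
    rw [schroederS]
    refine Finset.sum_subset (Finset.range_subset_range.mpr (by omega)) (fun x hx hnx => ?_)
    simp only [Finset.mem_range] at hx hnx
    rw [Nat.choose_eq_zero_of_lt (show m < x by omega)]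
    simp
  have hz : z * schroederS (m+1) z = ∑ k ∈ Finset.range (m+3), zterm m z k := by
    rw [show m+3 = (m+2)+1 from rfl, Finset.sum_range_succ', schroederS, Finset.mul_sum]
    simp only [zterm, add_zero]
    exact Finset.sum_congr rfl fun k _ => by ring
  rw [hz, e2, e1, e0, Finset.mul_sum, Finset.mul_sum, Finset.mul_sum, Finset.mul_sum,
      ← Finset.sum_add_distrib, ← Finset.sum_add_distrib]
  exact Finset.sum_congr rfl fun k _ => keyk m k z

theorem F_recurrence (ε : ℚ) (hε : ε = 1 ∨ ε = -1) (z : ℚ)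
    (F : ℕ → ℚ) (hF : ∀ n, F n = ε ^ n * schroederS n z) (n : ℕ) (hn : 1 ≤ n) :
    ((n : ℚ) + 2) * F (n + 1) =
      ε * (2 * (n : ℚ) + 1) * (1 + 2 * z) * F n - ((n : ℚ) - 1) * F (n - 1) := by
  obtain ⟨m, rfl⟩ : ∃ m, n = m + 1 := ⟨n - 1, by omega⟩
  simp only [hF, Nat.add_sub_cancel]
  have hsq : ε * ε = 1 := by rcases hε with rfl | rfl <;> norm_num
  have h := S_rec m z
  push_cast
  linear_combination (ε^m) * h + (((m:ℚ)+3) * ε^m * schroederS (m+2) z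
    - (2*(m:ℚ)+3) * (1+2*z) * ε^m * schroederS (m+1) z) * hsq
end

section
/- For n ≥ 1, the large Schröder polynomials satisfy the recurrence (n+2)·S_{n+1}(z) = (2n+1)(1+2z)·S_n(z) − (n−1)·S_{n-1}(z). -/
open Finset

open Nat


noncomputable def aS (n k : ℕ) : ℚ := (n.choose k : ℚ) * ((n + k).choose k : ℚ) / (k + 1)

lemma aS_zero (n k : ℕ) (h : n < k) : aS n k = 0 := by
  simp [aS, Nat.choose_eq_zero_of_lt h]

lemma aS_eq (n k : ℕ) (h : k ≤ n) :
    aS n k = ((n + k)! : ℚ) / (((n - k)! : ℚ) * (k ! : ℚ) * ((k + 1)! : ℚ)) := by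
  rw [aS, Nat.cast_choose ℚ h, Nat.cast_choose ℚ (Nat.le_add_left k n), Nat.add_sub_cancel,
    Nat.factorial_succ]
  have h1 : (n ! : ℚ) ≠ 0 := by positivity
  have h2 : (k ! : ℚ) ≠ 0 := by positivity
  have h3 : (((n - k)!) : ℚ) ≠ 0 := by positivity
  have h4 : ((k : ℚ) + 1) ≠ 0 := by positivity
  push_cast
  field_simp

lemma keyS (n k : ℕ) (hn : 1 ≤ n) :
    ((n : ℚ) + 2) * aS (n + 1) k =
      (2 * (n : ℚ) + 1) * aS n k + 2 * (2 * (n : ℚ) + 1) * (if k = 0 then 0 else aS n (k - 1))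
        - ((n : ℚ) - 1) * aS (n - 1) k := by
  rcases Nat.eq_zero_or_pos k with rfl | hk
  · simp only [if_pos rfl]
    simp [aS]
    ring
  rw [if_neg (by omega)]
  rcases lt_or_ge (n + 1) k with h | h
  · -- k ≥ n + 2 : everything vanishes
    rw [aS_zero (n+1) k h, aS_zero n k (by omega), aS_zero n (k-1) (by omega),
      aS_zero (n-1) k (by omega)]
    ring
  rcases eq_or_lt_of_le h with rfl | h2
  · -- k = n + 1
    rw [aS_eq (n+1) (n+1) le_rfl, aS_zero n (n+1) (by omega), aS_zero (n-1) (n+1) (by omega),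
      Nat.add_sub_cancel, aS_eq n n le_rfl]
    rw [show n + 1 + (n + 1) = (2*n + 1) + 1 from by ring, show n + 1 - (n + 1) = 0 from by omega,
      show n + n = 2 * n from by ring, show n - n = 0 from by omega,
      Nat.factorial_succ (2*n+1), show (2*n + 1) = (2*n) + 1 from rfl, Nat.factorial_succ (2*n),
      Nat.factorial_succ (n+1), Nat.factorial_succ n, Nat.factorial_zero]
    have hA : ((2*n)! : ℚ) ≠ 0 := by positivity
    have hB : ((n)! : ℚ) ≠ 0 := by positivity
    push_cast
    field_simp
    ring
  · -- 1 ≤ k ≤ n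
    have hkn : k ≤ n := by omega
    rcases eq_or_lt_of_le hkn with rfl | hlt
    · -- k = n
      obtain ⟨i, rfl⟩ : ∃ i, k = i + 1 := ⟨k - 1, by omega⟩
      rw [aS_eq (i+2) (i+1) (by omega), aS_eq (i+1) (i+1) le_rfl, Nat.add_sub_cancel,
        aS_eq (i+1) i (by omega), aS_zero i (i+1) (by omega)]
      rw [show i + 2 + (i + 1) = (2*i + 2) + 1 from by ring,
        show i + 2 - (i + 1) = 1 from by omega,
        show i + 1 + (i + 1) = (2*i + 1) + 1 from by ring,
        show i + 1 - (i + 1) = 0 from by omega,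
        show i + 1 + i = (2*i) + 1 from by ring,
        show i + 1 - i = 1 from by omega,
        Nat.factorial_succ (2*i+2), show (2*i+2) = (2*i+1) + 1 from rfl,
        Nat.factorial_succ (2*i+1), show (2*i+1) = (2*i) + 1 from rfl,
        Nat.factorial_succ (2*i), Nat.factorial_succ (i+1), Nat.factorial_succ i,
        Nat.factorial_zero, Nat.factorial_one]
      have hA : ((2*i)! : ℚ) ≠ 0 := by positivity
      have hC : ((i)! : ℚ) ≠ 0 := by positivity
      push_cast
      field_simp
      ring
    · -- 1 ≤ k ≤ n - 1
      obtain ⟨i, rfl⟩ : ∃ i, k = i + 1 := ⟨k - 1, by omega⟩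
      obtain ⟨j, rfl⟩ : ∃ j, n = i + j + 2 := ⟨n - i - 2, by omega⟩
      rw [aS_eq (i+j+2+1) (i+1) (by omega), aS_eq (i+j+2) (i+1) (by omega),
        Nat.add_sub_cancel, aS_eq (i+j+2) i (by omega),
        aS_eq (i+j+2-1) (i+1) (by omega)]
      rw [show i + j + 2 + 1 + (i + 1) = (2*i + j + 3) + 1 from by ring,
        show i + j + 2 + 1 - (i + 1) = (j + 1) + 1 from by omega,
        show i + j + 2 + (i + 1) = (2*i + j + 2) + 1 from by ring,
        show i + j + 2 - (i + 1) = j + 1 from by omega,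
        show i + j + 2 + i = (2*i + j + 1) + 1 from by ring,
        show i + j + 2 - i = (j + 1) + 1 from by omega,
        show i + j + 2 - 1 + (i + 1) = (2*i + j + 1) + 1 from by omega,
        show i + j + 2 - 1 - (i + 1) = j from by omega,
        Nat.factorial_succ (2*i+j+3), show (2*i+j+3) = (2*i+j+2) + 1 from rfl,
        Nat.factorial_succ (2*i+j+2), show (2*i+j+2) = (2*i+j+1) + 1 from rfl,
        Nat.factorial_succ (2*i+j+1),
        Nat.factorial_succ (j+1), Nat.factorial_succ j,
        Nat.factorial_succ (i+1), Nat.factorial_succ i]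
      have hA : (((2*i+j+1))! : ℚ) ≠ 0 := by positivity
      have hB : ((j)! : ℚ) ≠ 0 := by positivity
      have hC : ((i)! : ℚ) ≠ 0 := by positivity
      push_cast
      field_simp
      ring

lemma schroederS_eq_sum' (n N : ℕ) (h : n + 1 ≤ N) (z : ℚ) :
    schroederS n z = ∑ k ∈ Finset.range N, aS n k * z ^ k := by
  rw [schroederS, Finset.sum_subset (Finset.range_subset_range.2 h)]
  · exact Finset.sum_congr rfl fun k _ => by rw [aS]; ring
  · intro k _ hk
    rw [Finset.mem_range, not_lt] at hk
    rw [Nat.choose_eq_zero_of_lt (by omega : n < k)]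
    simp

lemma shiftS (n : ℕ) (z : ℚ) :
    z * schroederS n z = ∑ k ∈ Finset.range (n + 3),
      (if k = 0 then 0 else aS n (k - 1)) * z ^ k := by
  rw [Finset.sum_range_succ' (fun k => (if k = 0 then (0:ℚ) else aS n (k-1)) * z ^ k) (n+2),
    schroederS_eq_sum' n (n + 2) (by omega), Finset.mul_sum]
  simp only [Nat.succ_ne_zero, if_false, Nat.add_sub_cancel, if_pos, zero_mul, add_zero,
    reduceIte]
  exact Finset.sum_congr rfl fun k _ => by ring

theorem schroederS_recurrence (n : ℕ) (hn : 1 ≤ n) (z : ℚ) :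
    ((n : ℚ) + 2) * schroederS (n + 1) z =
      (2 * (n : ℚ) + 1) * (1 + 2 * z) * schroederS n z - ((n : ℚ) - 1) * schroederS (n - 1) z := by
  have e1 : schroederS (n+1) z = ∑ k ∈ Finset.range (n+3), aS (n+1) k * z ^ k :=
    schroederS_eq_sum' (n+1) (n+3) (by omega) z
  have e2 : schroederS n z = ∑ k ∈ Finset.range (n+3), aS n k * z ^ k :=
    schroederS_eq_sum' n (n+3) (by omega) z
  have e3 : schroederS (n-1) z = ∑ k ∈ Finset.range (n+3), aS (n-1) k * z ^ k :=
    schroederS_eq_sum' (n-1) (n+3) (by omega) z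
  have e4 := shiftS n z
  have expand : (2 * (n : ℚ) + 1) * (1 + 2 * z) * schroederS n z
      = (2 * (n : ℚ) + 1) * schroederS n z + 2 * (2 * (n : ℚ) + 1) * (z * schroederS n z) := by
    ring
  rw [expand, e4, e1, e2, e3, Finset.mul_sum, Finset.mul_sum, Finset.mul_sum, Finset.mul_sum,
    ← Finset.sum_add_distrib, ← Finset.sum_sub_distrib]
  exact Finset.sum_congr rfl fun k _ => by linear_combination z ^ k * keyS n k hn
end

section
/- For any odd prime p, any ε ∈ {−1,1}, and any integer z, the identity 2z·Σ_{k=0}^{p-1} (2k+1)·ε^k·S_k(z) = D_p(z) + ε·D_{p-1}(z) − 1 − ε holds. -/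
open Finset

lemma my_L1 (m i : ℕ) :
    (i+1)*(i+1)*((m+2).choose (i+1) * (m+i+3).choose (i+1)) =
      (m+i+3)*(m+i+2)*((m+1).choose i * (m+i+1).choose i) := by
  have h1 : (m+2) * (m+1).choose i = (m+2).choose (i+1) * (i+1) :=
    Nat.add_one_mul_choose_eq (m+1) i
  have h2 : (m+i+3) * (m+i+2).choose (i+1) = (m+i+3).choose (i+2) * (i+2) :=
    Nat.add_one_mul_choose_eq (m+i+2) (i+1)
  have h2' : (m+i+3) * (m+i+2).choose i = (m+i+3).choose (i+1) * (i+1) :=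
    Nat.add_one_mul_choose_eq (m+i+2) i
  have h3 : (m+i+2) * (m+i+1).choose (m+1) = (m+i+2).choose (m+2) * (m+2) :=
    Nat.add_one_mul_choose_eq (m+i+1) (m+1)
  have e1 : (m+i+1).choose (m+1) = (m+i+1).choose i := by
    have : m+i+1 = (m+1)+i := by omega
    rw [this]; exact Nat.choose_symm_add
  have e2 : (m+i+2).choose (m+2) = (m+i+2).choose i := by
    have : m+i+2 = (m+2)+i := by omega
    rw [this]; exact Nat.choose_symm_add
  rw [e1, e2] at h3
  calc (i+1)*(i+1)*((m+2).choose (i+1) * (m+i+3).choose (i+1))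
      = ((m+2).choose (i+1) * (i+1)) * ((m+i+3).choose (i+1) * (i+1)) := by ring
    _ = ((m+2) * (m+1).choose i) * ((m+i+3) * (m+i+2).choose i) := by rw [← h1, ← h2']
    _ = (m+i+3) * (m+1).choose i * ((m+i+2).choose i * (m+2)) := by ring
    _ = (m+i+3) * (m+1).choose i * ((m+i+2) * (m+i+1).choose i) := by rw [← h3]
    _ = (m+i+3)*(m+i+2)*((m+1).choose i * (m+i+1).choose i) := by ring

lemma my_L2 (m i : ℕ) :
    (i+1)*(i+1)*(m.choose (i+1) * (m+i+1).choose (i+1)) =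
      (m-i)*((m+1)-i)*((m+1).choose i * (m+i+1).choose i) := by
  have h1 : m.choose (i+1) * (i+1) = m.choose i * (m - i) :=
    Nat.choose_succ_right_eq m i
  have h2 : (m+i+1).choose (i+1) * (i+1) = (m+i+1).choose i * (m+1) := by
    have := Nat.choose_succ_right_eq (m+i+1) i
    rwa [show m+i+1-i = m+1 by omega] at this
  have h3 : (m+1) * m.choose i = (m+1).choose i * ((m+1) - i) := by
    have ha : (m+1) * m.choose i = (m+1).choose (i+1) * (i+1) :=
      Nat.add_one_mul_choose_eq m i
    have hb : (m+1).choose (i+1) * (i+1) = (m+1).choose i * (m+1-i) :=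
      Nat.choose_succ_right_eq (m+1) i
    rw [ha, hb]
  calc (i+1)*(i+1)*(m.choose (i+1) * (m+i+1).choose (i+1))
      = (m.choose (i+1) * (i+1)) * ((m+i+1).choose (i+1) * (i+1)) := by ring
    _ = (m.choose i * (m-i)) * ((m+i+1).choose i * (m+1)) := by rw [h1, h2]
    _ = (m-i) * (m+i+1).choose i * ((m+1) * m.choose i) := by ring
    _ = (m-i) * (m+i+1).choose i * ((m+1).choose i * ((m+1)-i)) := by rw [h3]
    _ = (m-i)*((m+1)-i)*((m+1).choose i * (m+i+1).choose i) := by ring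

lemma my_key (m i : ℕ) :
    ((i:ℚ)+1) * (((m+2).choose (i+1) : ℚ) * ((m+2+(i+1)).choose (i+1) : ℚ)) =
      ((i:ℚ)+1) * ((m.choose (i+1) : ℚ) * ((m+(i+1)).choose (i+1) : ℚ)) +
      (4*(m:ℚ)+6) * (((m+1).choose i : ℚ) * ((m+1+i).choose i : ℚ)) := by
  rw [show m+2+(i+1)=m+i+3 by omega, show m+(i+1)=m+i+1 by omega,
    show m+1+i=m+i+1 by omega]
  have hne : ((i:ℚ)+1) ≠ 0 := by positivity
  refine mul_left_cancel₀ hne ?_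
  have l1 : ((i:ℚ)+1)*((i:ℚ)+1)*(((m+2).choose (i+1):ℚ) * ((m+i+3).choose (i+1):ℚ)) =
      ((m:ℚ)+i+3)*((m:ℚ)+i+2)*(((m+1).choose i:ℚ) * ((m+i+1).choose i:ℚ)) := by
    exact_mod_cast my_L1 m i
  rcases le_or_gt i m with hi | hi
  · have l2 : (((i+1)*(i+1)*(m.choose (i+1) * (m+i+1).choose (i+1)) : ℕ) : ℚ) =
        (((m-i)*((m+1)-i)*((m+1).choose i * (m+i+1).choose i) : ℕ) : ℚ) := by
      exact_mod_cast congrArg (Nat.cast : ℕ → ℚ) (my_L2 m i)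
    push_cast [Nat.cast_sub hi, Nat.cast_sub (show i ≤ m+1 by omega)] at l2
    linear_combination l1 - l2
  · have hB : m.choose (i+1) = 0 := Nat.choose_eq_zero_of_lt (by omega)
    rcases eq_or_lt_of_le (show m+1 ≤ i by omega) with hi2 | hi2
    · subst hi2
      simp only [hB, Nat.cast_zero]
      push_cast at l1 ⊢
      linear_combination l1
    · have hA : (m+2).choose (i+1) = 0 := Nat.choose_eq_zero_of_lt (by omega)
      have hX : (m+1).choose i = 0 := Nat.choose_eq_zero_of_lt (by omega)
      simp [hA, hB, hX]

lemma my_rec (m : ℕ) (z : ℚ) :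
    2*z*(2*(m:ℚ)+3) * schroederS (m+1) z = delannoy (m+2) z - delannoy m z := by
  have hext : delannoy m z
      = ∑ k ∈ Finset.range (m+3), (m.choose k : ℚ) * ((m+k).choose k : ℚ) * z^k := by
    rw [delannoy, Finset.sum_range_succ (n := m+2), Finset.sum_range_succ (n := m+1),
        Nat.choose_eq_zero_of_lt (show m < m+1 by omega),
        Nat.choose_eq_zero_of_lt (show m < m+2 by omega)]
    push_cast; ring
  rw [hext, delannoy, ← Finset.sum_sub_distrib, Finset.sum_range_succ',
      schroederS, Finset.mul_sum]
  have h0 : ((m+2).choose 0 : ℚ) * (((m+2)+0).choose 0 : ℚ) * z^0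
      - (m.choose 0 : ℚ) * ((m+0).choose 0 : ℚ) * z^0 = 0 := by simp
  rw [h0, add_zero]
  refine Finset.sum_congr rfl fun k _ => ?_
  have hk : ((k:ℚ)+1) ≠ 0 := by positivity
  have hkey := my_key m k
  show _ = ((m+2).choose (k+1):ℚ) * ((m+2+(k+1)).choose (k+1) : ℚ) * z^(k+1)
      - (m.choose (k+1):ℚ) * ((m+(k+1)).choose (k+1) : ℚ) * z^(k+1)
  have hdiff : ((m+2).choose (k+1):ℚ) * ((m+2+(k+1)).choose (k+1) : ℚ)
      - (m.choose (k+1):ℚ) * ((m+(k+1)).choose (k+1) : ℚ)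
      = (4*(m:ℚ)+6) * (((m+1).choose k:ℚ) * ((m+1+k).choose k : ℚ)) / ((k:ℚ)+1) := by
    rw [eq_div_iff hk]
    linear_combination hkey
  linear_combination (-(z^(k+1))) * hdiff

lemma my_tel (ε : ℚ) (hε2 : ε^2 = 1) (z : ℚ) (M : ℕ) :
    ∑ k ∈ Finset.range (M+1), 2*z*((2*(k:ℚ)+1) * ε^k * schroederS k z)
      = ε^M * delannoy (M+1) z + ε^(M+1) * delannoy M z - 1 - ε := by
  induction M with
  | zero =>
    simp [schroederS, delannoy, Finset.sum_range_succ]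
    ring
  | succ M ih =>
    rw [Finset.sum_range_succ, ih]
    have hr := my_rec M z
    have hp : ε^(M+2) = ε^M := by rw [pow_add, hε2, mul_one]
    push_cast
    linear_combination ε^(M+1) * hr + delannoy (M+1) z * hp - 2*ε^M*delannoy (M+1) z * hε2

theorem telescoping_identity (p : ℕ) (hp : p.Prime) (hodd : Odd p)
    (ε : ℚ) (hε : ε = 1 ∨ ε = -1) (z : ℤ) :
    2 * (z : ℚ) * ∑ k ∈ Finset.range p, (2 * (k : ℚ) + 1) * ε ^ k * schroederS k (z : ℚ) =
      delannoy p (z : ℚ) + ε * delannoy (p - 1) (z : ℚ) - 1 - ε := by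
  have hε2 : ε^2 = 1 := by rcases hε with h | h <;> simp [h]
  obtain ⟨t, ht⟩ := hodd
  obtain ⟨M, hM⟩ : ∃ M, p = M + 1 := ⟨p - 1, by omega⟩
  have hEven : Even M := ⟨t, by omega⟩
  have h1 : ε^M = 1 := by
    rcases hε with h | h
    · rw [h, one_pow]
    · rw [h, hEven.neg_one_pow]
  have h2 : ε^(M+1) = ε := by rw [pow_succ, h1, one_mul]
  have hsum : 2 * (z:ℚ) * ∑ k ∈ Finset.range p, (2*(k:ℚ)+1) * ε^k * schroederS k (z:ℚ)
      = ∑ k ∈ Finset.range (M+1), 2*(z:ℚ)*((2*(k:ℚ)+1) * ε^k * schroederS k (z:ℚ)) := by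
    rw [hM, Finset.mul_sum]
  rw [hsum, my_tel ε hε2 (z:ℚ) M, h1, h2, one_mul, hM, Nat.add_sub_cancel]
end

section
/- For any odd prime p, any ε ∈ {−1,1}, and any integer z with gcd(p, z) = 1, Σ_{k=0}^{p-1} (2k+1)·ε^k·S_k(z) ≡ 1 (mod p). -/
open Finset

namespace SchroederAux

open Nat

lemma key_id (n j : ℕ) :
    (2*j+1) * ((n+j).choose (2*j)) + 2*((2*j+1) * ((n+j).choose (2*j+1)))
      = (2*n+1) * ((n+j).choose (2*j)) := by
  have hb : (n+j).choose (2*j+1) * (2*j+1) = (n+j).choose (2*j) * ((n+j) - 2*j) :=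
    Nat.choose_succ_right_eq _ _
  rcases le_or_gt j n with h | h
  · obtain ⟨d, rfl⟩ := Nat.le.dest h
    have h2 : j + d + j - 2*j = d := by omega
    rw [h2] at hb
    calc (2*j+1) * ((j+d+j).choose (2*j)) + 2*((2*j+1) * ((j+d+j).choose (2*j+1)))
        = (2*j+1) * ((j+d+j).choose (2*j)) + 2*((j+d+j).choose (2*j+1) * (2*j+1)) := by ring
      _ = (2*j+1) * ((j+d+j).choose (2*j)) + 2*((j+d+j).choose (2*j) * d) := by rw [hb]
      _ = (2*(j+d)+1) * ((j+d+j).choose (2*j)) := by ring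
  · have h1 : (n+j).choose (2*j) = 0 := Nat.choose_eq_zero_of_lt (by omega)
    have h2 : (n+j).choose (2*j+1) = 0 := Nat.choose_eq_zero_of_lt (by omega)
    simp [h1, h2]

lemma lemA (j : ℕ) : ∀ n, ∑ k ∈ range n, (2*k+1) * ((k+j).choose (2*j))
    = (2*j+1) * ((n+j).choose (2*j+1)) + (4*j+2) * ((n+j).choose (2*j+2)) := by
  intro n
  induction n with
  | zero =>
      have h1 : j.choose (2*j+1) = 0 := Nat.choose_eq_zero_of_lt (by omega)
      have h2 : j.choose (2*j+2) = 0 := Nat.choose_eq_zero_of_lt (by omega)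
      simp [h1, h2]
  | succ n ih =>
      rw [sum_range_succ, ih]
      have p1 : (n+1+j).choose (2*j+1) = (n+j).choose (2*j) + (n+j).choose (2*j+1) := by
        rw [show n+1+j = (n+j)+1 by omega]; exact Nat.choose_succ_succ' _ _
      have p2 : (n+1+j).choose (2*j+2) = (n+j).choose (2*j+1) + (n+j).choose (2*j+2) := by
        rw [show n+1+j = (n+j)+1 by omega]; exact Nat.choose_succ_succ' _ _
      rw [p1, p2]
      have hk := key_id n j
      zify at hk ⊢
      linear_combination -hk

lemma lemB (j : ℕ) : ∀ n, ∑ k ∈ range n, ((2*k+1 : ℤ)) * (-1)^k * ((k+j).choose (2*j) : ℤ)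
    = (-1)^(n+1) * (2*j+1) * ((n+j).choose (2*j+1) : ℤ) := by
  intro n
  induction n with
  | zero => simp [Nat.choose_eq_zero_of_lt (show j < 2*j+1 by omega)]
  | succ n ih =>
      rw [sum_range_succ, ih]
      have p1 : (n+1+j).choose (2*j+1) = (n+j).choose (2*j) + (n+j).choose (2*j+1) := by
        rw [show n+1+j = (n+j)+1 by omega]; exact Nat.choose_succ_succ' _ _
      have hk := key_id n j
      zify at hk
      rw [p1]
      push_cast
      have hs : ((-1:ℤ))^(n+1+1) = (-1)^n := by ring
      have hs2 : ((-1:ℤ))^(n+1) = -(-1)^n := by ring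
      rw [hs, hs2]
      linear_combination (-(-1:ℤ)^n) * hk

lemma prod_id (k j : ℕ) (h : j ≤ k) :
    k.choose j * (k+j).choose j = (k+j).choose (2*j) * (2*j).choose j := by
  have h1 := Nat.choose_mul (n := k + j) (show j ≤ 2*j by omega)
  have h2 : k + j - j = k := by omega
  have h3 : 2*j - j = j := by omega
  rw [h2, h3] at h1
  rw [h1]; ring

lemma coeff_int (k j : ℕ) (h : j ≤ k) :
    k.choose j * (k+j).choose j = (k+j).choose (2*j) * catalan j * (j+1) := by
  rw [prod_id k j h, mul_assoc]
  congr 1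
  rw [mul_comm (catalan j) (j+1), succ_mul_catalan_eq_centralBinom]
  rfl

lemma schroeder_sum (k : ℕ) (z : ℤ) :
    schroederS k (z:ℚ)
      = ∑ j ∈ range (k+1), (((k+j).choose (2*j) * catalan j : ℕ) : ℚ) * (z:ℚ)^j := by
  unfold schroederS
  refine Finset.sum_congr rfl fun j hj => ?_
  have hjk : j ≤ k := by simpa [Nat.lt_succ_iff] using hj
  have h1 : ((j:ℚ)+1) ≠ 0 := by positivity
  rw [div_eq_iff h1]
  have h2 := congrArg (fun n : ℕ => (n : ℚ)) (coeff_int k j hjk)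
  push_cast at h2 ⊢
  linear_combination (z:ℚ)^j * h2

lemma fac_prod (a : ℕ) : ∀ m, a ! * ∏ i ∈ range m, (a+1+i) = (a+m)! := by
  intro m
  induction m with
  | zero => simp
  | succ m ih =>
      rw [prod_range_succ, ← mul_assoc, ih, show a + (m+1) = (a+m)+1 by omega,
        Nat.factorial_succ]
      ring

lemma prod_one_add (m : ℕ) : ∏ x ∈ range m, (1+x) = m ! := by
  induction m with
  | zero => simp
  | succ m ih => rw [prod_range_succ, ih, Nat.factorial_succ]; ring

lemma choose_wilson (p : ℕ) (hp : p.Prime) [Fact p.Prime] :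
    (((2*p-1).choose (p-1) : ℕ) : ZMod p) = 1 := by
  have hp1 : 1 ≤ p := hp.one_lt.le
  have hkey : (2*p-1).choose (p-1) * (p-1)! * p ! = (2*p-1)! := by
    have h := Nat.choose_mul_factorial_mul_factorial (show p-1 ≤ 2*p-1 by omega)
    rw [show 2*p-1-(p-1) = p by omega] at h
    exact h
  have hprod := fac_prod p (p-1)
  rw [show p + (p-1) = 2*p-1 by omega] at hprod
  have hcancel : (2*p-1).choose (p-1) * (p-1)! = ∏ i ∈ range (p-1), (p+1+i) := by
    have hpos : 0 < p ! := Nat.factorial_pos p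
    apply Nat.eq_of_mul_eq_mul_right hpos
    rw [hkey, ← hprod]; ring
  have hcast := congrArg (Nat.cast : ℕ → ZMod p) hcancel
  push_cast at hcast
  rw [ZMod.natCast_self] at hcast
  simp only [zero_add] at hcast
  have hfac : (∏ x ∈ range (p-1), ((1:ZMod p) + (x:ZMod p))) = ((p-1)! : ZMod p) := by
    have h' : (∏ x ∈ range (p-1), ((1:ZMod p) + (x:ZMod p)))
        = ((∏ x ∈ range (p-1), (1+x) : ℕ) : ZMod p) := by push_cast; rfl
    rw [h', prod_one_add]
  rw [hfac, ZMod.wilsons_lemma] at hcast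
  have hne : (-1 : ZMod p) ≠ 0 := neg_ne_zero.mpr one_ne_zero
  exact mul_right_cancel₀ hne (hcast.trans (by ring : (-1:ZMod p) = 1 * -1))

lemma catalan_choose (p : ℕ) (hp : 1 ≤ p) :
    catalan (p-1) * (2*p-1) = (2*p-1).choose (p-1) := by
  apply Nat.eq_of_mul_eq_mul_left (show 0 < p by omega)
  have h1 : ((p-1)+1) * catalan (p-1) = Nat.centralBinom (p-1) :=
    succ_mul_catalan_eq_centralBinom _
  have h2 := Nat.add_one_mul_choose_eq (2*(p-1)) (p-1)
  have h3 : (2*(p-1)).succ = 2*p-1 := by omega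
  have h4 : (p-1).succ = p := by omega
  rw [← Nat.succ_eq_add_one (2*(p-1)), ← Nat.succ_eq_add_one (p-1), h3, h4] at h2
  have h5 : (2*p-1).choose p = (2*p-1).choose (p-1) := by
    have h6 := Nat.choose_symm (show p-1 ≤ 2*p-1 by omega)
    rw [show 2*p-1-(p-1) = p by omega] at h6
    exact h6
  rw [h5] at h2
  calc p * (catalan (p-1) * (2*p-1)) = (((p-1)+1) * catalan (p-1)) * (2*p-1) := by
        rw [show (p-1)+1 = p by omega]; ring
    _ = Nat.centralBinom (p-1) * (2*p-1) := by rw [h1]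
    _ = (2*p-1) * (2*(p-1)).choose (p-1) := by rw [Nat.centralBinom]; ring
    _ = (2*p-1).choose (p-1) * p := h2
    _ = p * (2*p-1).choose (p-1) := by ring

lemma dvd_coeff (p j : ℕ) (hp : p.Prime) (hodd : Odd p) (hj : j < p-1) (X : ℕ)
    (hX : X = (2*j+1) * ((p+j).choose (2*j+1)) + (4*j+2) * ((p+j).choose (2*j+2))
        ∨ X = (2*j+1) * ((p+j).choose (2*j+1))) :
    p ∣ catalan j * X := by
  obtain ⟨t, ht⟩ := hodd
  have hp1 : 1 < p := hp.one_lt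
  have hcop : Nat.Coprime p (j+1) :=
    hp.coprime_iff_not_dvd.mpr (fun h => by have := Nat.le_of_dvd (by omega) h; omega)
  have hsuff : p ∣ (j+1) * (catalan j * X) → p ∣ catalan j * X :=
    fun h => (Nat.Coprime.dvd_of_dvd_mul_left hcop h)
  apply hsuff
  have hcb : (j+1) * (catalan j * X) = (2*j).choose j * X := by
    rw [← mul_assoc, succ_mul_catalan_eq_centralBinom, Nat.centralBinom]
  rw [hcb]
  rcases lt_trichotomy (2*j+1) p with hlt | heq | hgt
  · have d1 : p ∣ (p+j).choose (2*j+1) :=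
      Nat.Prime.dvd_choose hp (by omega) (by omega) (by omega)
    have hlt2 : 2*j+2 < p := by omega
    apply Dvd.dvd.mul_left
    rcases hX with rfl | rfl
    · have d2 : p ∣ (p+j).choose (2*j+2) :=
        Nat.Prime.dvd_choose hp (by omega) (by omega) (by omega)
      exact dvd_add (Dvd.dvd.mul_left d1 _) (Dvd.dvd.mul_left d2 _)
    · exact Dvd.dvd.mul_left d1 _
  · apply Dvd.dvd.mul_left
    have h21 : p ∣ 2*j+1 := ⟨1, by omega⟩
    have h42 : p ∣ 4*j+2 := ⟨2, by omega⟩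
    rcases hX with rfl | rfl
    · exact dvd_add (h21.mul_right _) (h42.mul_right _)
    · exact h21.mul_right _
  · apply Dvd.dvd.mul_right
    have hd : p ∣ (j+j).choose j := Nat.Prime.dvd_choose_add hp (by omega) (by omega) (by omega)
    rwa [show j+j = 2*j by ring] at hd

lemma int_swap (p : ℕ) (z e : ℤ) :
    (∑ k ∈ range p, (2*(k:ℤ)+1) * e^k *
       (∑ j ∈ range (k+1), (((k+j).choose (2*j) * catalan j : ℕ) : ℤ) * z^j))
    = ∑ j ∈ range p, (catalan j : ℤ) * z^j *
       (∑ k ∈ range p, (2*(k:ℤ)+1) * e^k * ((k+j).choose (2*j) : ℤ)) := by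
  calc (∑ k ∈ range p, (2*(k:ℤ)+1) * e^k *
       (∑ j ∈ range (k+1), (((k+j).choose (2*j) * catalan j : ℕ) : ℤ) * z^j))
      = ∑ k ∈ range p, ∑ j ∈ range p,
          (catalan j : ℤ) * z^j * ((2*(k:ℤ)+1) * e^k * ((k+j).choose (2*j) : ℤ)) := by
        refine Finset.sum_congr rfl fun k hk => ?_
        rw [Finset.sum_subset (Finset.range_subset_range.mpr (Finset.mem_range.mp hk))
          (fun j _ hj' => by
            have hlt : k + j < 2*j := by
              simp only [Finset.mem_range, not_lt] at hj'; omega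
            simp [Nat.choose_eq_zero_of_lt hlt])]
        rw [Finset.mul_sum]
        refine Finset.sum_congr rfl fun j _ => ?_
        push_cast
        ring
    _ = ∑ j ∈ range p, (catalan j : ℤ) * z^j *
          (∑ k ∈ range p, (2*(k:ℤ)+1) * e^k * ((k+j).choose (2*j) : ℤ)) := by
        rw [Finset.sum_comm]
        exact Finset.sum_congr rfl fun j _ => (Finset.mul_sum _ _ _).symm

lemma final_sum (p : ℕ) (hp : p.Prime) [Fact p.Prime] (hodd : Odd p) (z : ℤ)
    (hz0 : ((z : ZMod p)) ≠ 0) (X : ℕ → ℕ)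
    (hX : ∀ j, (X j = (2*j+1) * ((p+j).choose (2*j+1)) + (4*j+2) * ((p+j).choose (2*j+2)))
            ∨ (X j = (2*j+1) * ((p+j).choose (2*j+1)))) :
    ((∑ j ∈ range p, (catalan j : ℤ) * z^j * (X j : ℤ) : ℤ) : ZMod p) = 1 := by
  have hp1 : 1 < p := hp.one_lt
  push_cast
  obtain ⟨q, hq⟩ : ∃ q, p = q + 1 := ⟨p-1, by omega⟩
  rw [show range p = range (q+1) from by rw [hq], Finset.sum_range_succ]
  have hzero : ∀ j ∈ range q,
      (catalan j : ZMod p) * ((z:ℤ):ZMod p)^j * (X j : ZMod p) = 0 := by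
    intro j hj
    have hjq : j < q := Finset.mem_range.mp hj
    have hd : p ∣ catalan j * X j := dvd_coeff p j hp hodd (by omega) (X j) (hX j)
    have h0 : ((catalan j * X j : ℕ) : ZMod p) = 0 := (ZMod.natCast_eq_zero_iff _ _).mpr hd
    push_cast at h0
    calc (catalan j : ZMod p) * ((z:ℤ):ZMod p)^j * (X j : ZMod p)
        = ((catalan j : ZMod p) * (X j : ZMod p)) * ((z:ℤ):ZMod p)^j := by ring
      _ = 0 := by rw [h0]; ring
  rw [Finset.sum_eq_zero hzero, zero_add]
  have c1 : (p+q).choose (2*q+1) = 1 := by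
    rw [show 2*q+1 = p+q by omega]; exact Nat.choose_self _
  have c2 : (p+q).choose (2*q+2) = 0 := Nat.choose_eq_zero_of_lt (by omega)
  have hXq : X q = 2*p-1 := by
    rcases hX q with h | h
    · rw [h, c1, c2]; omega
    · rw [h, c1]; omega
  have hq' : q = p - 1 := by omega
  have hzq : ((z:ℤ):ZMod p)^q = 1 := by
    rw [hq']; exact ZMod.pow_card_sub_one_eq_one hz0
  have hcc : catalan q * (2*p-1) = (2*p-1).choose (p-1) := by
    rw [hq']; exact catalan_choose p (by omega)
  rw [hXq, hzq]
  calc (catalan q : ZMod p) * 1 * ((2*p-1 : ℕ) : ZMod p)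
      = ((catalan q * (2*p-1) : ℕ) : ZMod p) := by push_cast; ring
    _ = (((2*p-1).choose (p-1) : ℕ) : ZMod p) := by rw [hcc]
    _ = 1 := choose_wilson p hp

end SchroederAux

theorem sum_linear_weight_S_congr (p : ℕ) (hp : p.Prime) (hodd : Odd p)
    (ε : ℚ) (hε : ε = 1 ∨ ε = -1) (z : ℤ) (hz : Int.gcd (p : ℤ) z = 1) :
    ∃ m : ℤ, (∑ k ∈ Finset.range p, (2 * (k : ℚ) + 1) * ε ^ k * schroederS k (z : ℚ)) - 1
      = (p : ℚ) * m := by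
  haveI : Fact p.Prime := ⟨hp⟩
  have hp1 : 1 < p := hp.one_lt
  obtain ⟨e, he, heε⟩ : ∃ e : ℤ, (e = 1 ∨ e = -1) ∧ (e : ℚ) = ε := by
    rcases hε with rfl | rfl
    exacts [⟨1, Or.inl rfl, by norm_num⟩, ⟨-1, Or.inr rfl, by norm_num⟩]
  have hz0 : ((z : ZMod p)) ≠ 0 := by
    intro h0
    have hdvd : (p:ℤ) ∣ z := (ZMod.intCast_zmod_eq_zero_iff_dvd z p).mp h0
    have h1 : (p:ℤ) ∣ (1:ℤ) := by
      have h2 := Int.dvd_gcd (dvd_refl (p:ℤ)) hdvd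
      rw [hz] at h2
      exact_mod_cast h2
    have := Int.le_of_dvd one_pos h1
    omega
  set N : ℤ := ∑ k ∈ range p, (2*(k:ℤ)+1) * e^k *
      (∑ j ∈ range (k+1), (((k+j).choose (2*j) * catalan j : ℕ) : ℤ) * z^j) with hN
  have hsum : (∑ k ∈ Finset.range p, (2 * (k : ℚ) + 1) * ε ^ k * schroederS k (z : ℚ))
      = (N : ℚ) := by
    rw [hN]
    push_cast
    refine Finset.sum_congr rfl fun k hk => ?_
    rw [SchroederAux.schroeder_sum k z, ← heε, Finset.mul_sum]
    push_cast
    rw [Finset.mul_sum]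
  suffices hdvd : (p:ℤ) ∣ N - 1 by
    obtain ⟨m, hm⟩ := hdvd
    refine ⟨m, ?_⟩
    rw [hsum]
    have h3 : ((N - 1 : ℤ) : ℚ) = (((p:ℤ) * m : ℤ) : ℚ) := by rw [hm]
    push_cast at h3
    linarith [h3]
  have hmod : ((N : ZMod p)) = 1 := by
    rw [hN, SchroederAux.int_swap p z e]
    rcases he with rfl | rfl
    · have hform : ∀ j, (∑ k ∈ range p, (2*(k:ℤ)+1) * (1:ℤ)^k * ((k+j).choose (2*j) : ℤ))
          = (((2*j+1) * ((p+j).choose (2*j+1)) + (4*j+2) * ((p+j).choose (2*j+2)) : ℕ) : ℤ) := by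
        intro j
        simp only [one_pow, mul_one]
        exact_mod_cast SchroederAux.lemA j p
      rw [Finset.sum_congr rfl (fun j _ => by rw [hform j])]
      exact SchroederAux.final_sum p hp hodd z hz0 _ (fun j => Or.inl rfl)
    · have hform : ∀ j, (∑ k ∈ range p, (2*(k:ℤ)+1) * (-1:ℤ)^k * ((k+j).choose (2*j) : ℤ))
          = (((2*j+1) * ((p+j).choose (2*j+1)) : ℕ) : ℤ) := by
        intro j
        rw [SchroederAux.lemB j p]
        have : ((-1:ℤ))^(p+1) = 1 := (hodd.add_one).neg_one_pow
        rw [this]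
        push_cast
        ring
      rw [Finset.sum_congr rfl (fun j _ => by rw [hform j])]
      exact SchroederAux.final_sum p hp hodd z hz0 _ (fun j => Or.inr rfl)
  rw [← ZMod.intCast_zmod_eq_zero_iff_dvd, Int.cast_sub, Int.cast_one, hmod, sub_self]
end

section
/- For any odd prime p, any ε ∈ {−1,1}, and any integer z with gcd(p, z(z+1)) = 1, Σ_{k=0}^{p-1} (2k+1)·ε^k·s_k(z) ≡ 0 (mod p). -/
open Finset

/-- integer-valued little Schröder value -/
def tE (x : ℤ) (n : ℕ) : ℤ :=
  ∑ j ∈ Finset.range n,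
    ((n.choose (j+1) : ℤ) * ((n-1).choose j : ℤ) - (n.choose j : ℤ) * ((n-1).choose (j+1) : ℤ))
      * x ^ j * (x + 1) ^ (n - 1 - j)

/-- Delannoy value in the mixed basis -/
def EE (x : ℤ) (n : ℕ) : ℤ :=
  ∑ k ∈ Finset.range (n+1), ((n.choose k : ℤ))^2 * x ^ k * (x + 1) ^ (n - k)

lemma narayana (m j : ℕ) (hj : j ≤ m) :
    ((m+1).choose (j+1) : ℤ) * ((m+1).choose j : ℤ)
      = (m+1) * (((m+1).choose (j+1) : ℤ) * (m.choose j : ℤ)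
          - ((m+1).choose j : ℤ) * (m.choose (j+1) : ℤ)) := by
  have h1 : ((m+1 : ℕ) * m.choose j : ℤ) = ((m+1).choose (j+1) : ℤ) * ((j:ℤ)+1) := by
    exact_mod_cast congrArg (Nat.cast (R := ℤ)) (Nat.add_one_mul_choose_eq m j)
  have h2 : ((m+1 : ℕ) * m.choose (j+1) : ℤ) = ((m+1).choose (j+2) : ℤ) * ((j:ℤ)+2) := by
    exact_mod_cast congrArg (Nat.cast (R := ℤ)) (Nat.add_one_mul_choose_eq m (j+1))
  have h3 : ((m+1).choose (j+2) : ℤ) * ((j:ℤ)+2)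
      = ((m+1).choose (j+1) : ℤ) * ((m:ℤ) - j) := by
    have h := Nat.choose_succ_right_eq (m+1) (j+1)
    zify [show j+1 ≤ m+1 by omega] at h
    linear_combination h
  have h4 : ((m+1).choose (j+1) : ℤ) * ((j:ℤ)+1)
      = ((m+1).choose j : ℤ) * ((m:ℤ) + 1 - j) := by
    have h := Nat.choose_succ_right_eq (m+1) j
    zify [show j ≤ m+1 by omega] at h
    linear_combination h
  push_cast at h1 h2
  linear_combination (-((m+1).choose (j+1) : ℤ)) * h1 + ((m+1).choose j : ℤ) * h2
    + ((m+1).choose j : ℤ) * h3 + (-((m+1).choose (j+1) : ℤ)) * h4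

lemma schroederLittle_eq_tE (z : ℤ) (n : ℕ) :
    schroederLittle n (z : ℚ) = ((tE z n : ℤ) : ℚ) := by
  cases n with
  | zero => simp [schroederLittle, tE]
  | succ m =>
    rw [schroederLittle, tE, ← Finset.Ico_add_one_right_eq_Icc, Finset.sum_Ico_eq_sum_range]
    push_cast
    refine Finset.sum_congr rfl fun j hj => ?_
    have hj' : j ≤ m := by simpa using Nat.lt_succ_iff.mp (Finset.mem_range.mp hj)
    have e1 : 1 + j - 1 = j := by omega
    have e2 : m + 1 - (1 + j) = m - j := by omega
    have e3 : 1 + j = j + 1 := by omega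
    rw [e1, e2, e3]
    have key : ((m:ℚ)+1) * (((m+1).choose (j+1) : ℚ) * (m.choose j : ℚ)
        - ((m+1).choose j : ℚ) * (m.choose (j+1) : ℚ))
        = ((m+1).choose (j+1) : ℚ) * ((m+1).choose j : ℚ) := by
      exact_mod_cast (narayana m j hj').symm
    have hm : ((m:ℚ)+1) ≠ 0 := by positivity
    field_simp
    linear_combination (-(z:ℚ)^j * ((z:ℚ)+1)^(m-j)) * key

lemma keyid (m j : ℕ) :
    ((m+2).choose (j+2) : ℤ)^2 + 2*((m.choose (j+1) : ℤ))^2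
      = ((m.choose (j+2) : ℤ))^2 + ((m.choose j : ℤ))^2
        + 2*(2*(m:ℤ)+3) * (((m+1).choose (j+2) : ℤ) * (m.choose (j+1) : ℤ)
            - ((m+1).choose (j+1) : ℤ) * (m.choose (j+2) : ℤ)) := by
  have p1 : ((m+1).choose (j+1) : ℤ) = (m.choose j : ℤ) + (m.choose (j+1) : ℤ) := by
    exact_mod_cast congrArg (Nat.cast (R := ℤ)) (Nat.choose_succ_succ m j)
  have p2 : ((m+1).choose (j+2) : ℤ) = (m.choose (j+1) : ℤ) + (m.choose (j+2) : ℤ) := by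
    exact_mod_cast congrArg (Nat.cast (R := ℤ)) (Nat.choose_succ_succ m (j+1))
  have p3 : ((m+2).choose (j+2) : ℤ) = ((m+1).choose (j+1) : ℤ) + ((m+1).choose (j+2) : ℤ) := by
    exact_mod_cast congrArg (Nat.cast (R := ℤ)) (Nat.choose_succ_succ (m+1) (j+1))
  by_cases hj : j < m
  · have r1 : (m.choose (j+1) : ℤ) * ((j:ℤ)+1) = (m.choose j : ℤ) * ((m:ℤ) - j) := by
      have h := Nat.choose_succ_right_eq m j
      zify [show j ≤ m by omega] at h
      linear_combination h
    have r2 : (m.choose (j+2) : ℤ) * ((j:ℤ)+2) = (m.choose (j+1) : ℤ) * ((m:ℤ) - 1 - j) := by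
      have h := Nat.choose_succ_right_eq m (j+1)
      zify [show j+1 ≤ m by omega] at h
      linear_combination h
    rw [p3, p1, p2]
    apply mul_left_cancel₀ (a := ((j:ℤ)+1) * ((j:ℤ)+2)) (by positivity)
    linear_combination (-4*((j:ℤ)+2)*((m:ℤ)*(m.choose (j+1) : ℤ) - (m.choose (j+2) : ℤ))) * r1
      + (4*(m.choose j : ℤ)*(((m:ℤ)-(j:ℤ)) + ((m:ℤ)+2)*((j:ℤ)+1))) * r2
  · have hb : m.choose (j+1) = 0 := Nat.choose_eq_zero_of_lt (by omega)
    have hc : m.choose (j+2) = 0 := Nat.choose_eq_zero_of_lt (by omega)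
    rw [p3, p1, p2, hb, hc]
    push_cast
    ring

lemma lemB (x : ℤ) (m : ℕ) :
    EE x (m+2) = EE x m + 2*(2*(m:ℤ)+3)*(x*(x+1)) * tE x (m+1) := by
  -- notation for the Narayana-type coefficient
  have hL : EE x (m+2)
      = (∑ i ∈ Finset.range m, ((m+2).choose (i+2) : ℤ)^2 * x^(i+2) * (x+1)^(m-i))
        + ((m:ℤ)+2)^2 * (x * (x+1)^(m+1)) + (x+1)^(m+2) + x^(m+2) := by
    rw [EE, Finset.sum_range_succ', Finset.sum_range_succ', Finset.sum_range_succ]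
    have hs : (∑ i ∈ Finset.range m,
          ((m+2).choose (i+1+1) : ℤ)^2 * x^(i+1+1) * (x+1)^(m+2-(i+1+1)))
        = ∑ i ∈ Finset.range m, ((m+2).choose (i+2) : ℤ)^2 * x^(i+2) * (x+1)^(m-i) := by
      refine Finset.sum_congr rfl fun i hi => ?_
      have h2 : m+2-(i+1+1) = m-i := by omega
      have h1 : i+1+1 = i+2 := by omega
      rw [h2, h1]
    rw [hs]
    have h3 : m+1+1 = m+2 := by omega
    have h4 : m+2-(m+1+1) = 0 := by omega
    have h5 : m+2-(0+1) = m+1 := by omega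
    rw [h3, h4, h5]
    simp only [Nat.choose_self, Nat.choose_zero_right, Nat.choose_one_right, Nat.sub_zero,
      Nat.zero_add, pow_zero, pow_one]
    push_cast
    ring
  have hR : EE x m + 2*(2*(m:ℤ)+3)*(x*(x+1)) * tE x (m+1)
      = (∑ i ∈ Finset.range m, ((m+2).choose (i+2) : ℤ)^2 * x^(i+2) * (x+1)^(m-i))
        + ((m:ℤ)+2)^2 * (x * (x+1)^(m+1)) + (x+1)^(m+2) + x^(m+2) := by
    rw [EE, tE]
    simp only [Nat.add_sub_cancel]
    rw [Finset.mul_sum, ← Finset.sum_add_distrib]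
    have hdec : ∀ j ∈ Finset.range (m+1),
        ((m.choose j : ℤ)^2 * x^j * (x+1)^(m-j)
          + 2*(2*(m:ℤ)+3)*(x*(x+1)) *
            ((((m+1).choose (j+1) : ℤ) * (m.choose j : ℤ)
              - ((m+1).choose j : ℤ) * (m.choose (j+1) : ℤ)) * x^j * (x+1)^(m-j)))
        = (m.choose j : ℤ)^2 * x^j * (x+1)^((m-j)+2)
          - 2*((m.choose j : ℤ)^2 * x^(j+1) * (x+1)^((m-j)+1))
          + (m.choose j : ℤ)^2 * x^(j+2) * (x+1)^(m-j)
          + (2*(2*(m:ℤ)+3)) *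
            ((((m+1).choose (j+1) : ℤ) * (m.choose j : ℤ)
              - ((m+1).choose j : ℤ) * (m.choose (j+1) : ℤ)) * x^(j+1) * (x+1)^((m-j)+1)) :=
      fun j hj => by ring
    rw [Finset.sum_congr rfl hdec]
    simp only [Finset.sum_add_distrib, Finset.sum_sub_distrib, ← Finset.mul_sum]
    -- peel each sum
    have hA1 : (∑ j ∈ Finset.range (m+1), (m.choose j : ℤ)^2 * x^j * (x+1)^((m-j)+2))
        = (∑ i ∈ Finset.range m, (m.choose (i+1) : ℤ)^2 * x^(i+1) * (x+1)^((m-(i+1))+2))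
          + (x+1)^(m+2) := by
      rw [Finset.sum_range_succ']
      simp only [Nat.choose_zero_right, Nat.sub_zero, pow_zero]
      push_cast
      ring
    have hg : (∑ i ∈ Finset.range m, (m.choose (i+1) : ℤ)^2 * x^(i+1) * (x+1)^((m-(i+1))+2))
        = (∑ i ∈ Finset.range m, (m.choose (i+2) : ℤ)^2 * x^(i+2) * (x+1)^((m-(i+1))+1))
          + (m.choose 1 : ℤ)^2 * (x * (x+1)^(m+1)) := by
      cases m with
      | zero => simp
      | succ m' =>
        rw [Finset.sum_range_succ']
        conv_rhs => rw [Finset.sum_range_succ]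
        have hz : m'+2 = m'+1+1 := by omega
        rw [hz, Nat.choose_succ_self]
        have hs : (∑ i ∈ Finset.range m',
              ((m'+1).choose (i+1+1) : ℤ)^2 * x^(i+1+1) * (x+1)^((m'+1-(i+1+1))+2))
            = ∑ i ∈ Finset.range m',
                ((m'+1).choose (i+2) : ℤ)^2 * x^(i+2) * (x+1)^((m'+1-(i+1))+1) := by
          refine Finset.sum_congr rfl fun i hi => ?_
          have hi' : i < m' := Finset.mem_range.mp hi
          have h1 : i+1+1 = i+2 := by omega
          have h2 : (m'+1-(i+1+1))+2 = (m'+1-(i+1))+1 := by omega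
          rw [h2, h1]
        rw [hs]
        have h3 : (m'+1-(0+1))+2 = m'+2 := by omega
        rw [h3]
        push_cast
        ring
    have hA2 : (∑ j ∈ Finset.range (m+1), (m.choose j : ℤ)^2 * x^(j+1) * (x+1)^((m-j)+1))
        = (∑ i ∈ Finset.range m, (m.choose (i+1) : ℤ)^2 * x^(i+2) * (x+1)^((m-(i+1))+1))
          + x * (x+1)^(m+1) := by
      rw [Finset.sum_range_succ']
      have hs : (∑ i ∈ Finset.range m,
            (m.choose (i+1) : ℤ)^2 * x^(i+1+1) * (x+1)^((m-(i+1))+1))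
          = ∑ i ∈ Finset.range m, (m.choose (i+1) : ℤ)^2 * x^(i+2) * (x+1)^((m-(i+1))+1) := by
        refine Finset.sum_congr rfl fun i hi => ?_
        have h : i+1+1 = i+2 := by omega
        rw [h]
      rw [hs]
      simp only [Nat.choose_zero_right, Nat.sub_zero, pow_zero]
      push_cast
      ring
    have hA3 : (∑ j ∈ Finset.range (m+1), (m.choose j : ℤ)^2 * x^(j+2) * (x+1)^(m-j))
        = (∑ j ∈ Finset.range m, (m.choose j : ℤ)^2 * x^(j+2) * (x+1)^(m-j)) + x^(m+2) := by
      rw [Finset.sum_range_succ]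
      simp only [Nat.choose_self, Nat.sub_self, pow_zero]
      push_cast
      ring
    have hN : (∑ j ∈ Finset.range (m+1),
          ((((m+1).choose (j+1) : ℤ) * (m.choose j : ℤ)
            - ((m+1).choose j : ℤ) * (m.choose (j+1) : ℤ)) * x^(j+1) * (x+1)^((m-j)+1)))
        = (∑ i ∈ Finset.range m,
            ((((m+1).choose (i+2) : ℤ) * (m.choose (i+1) : ℤ)
              - ((m+1).choose (i+1) : ℤ) * (m.choose (i+2) : ℤ)) * x^(i+2) * (x+1)^((m-(i+1))+1)))
          + (((m+1).choose 1 : ℤ) * (m.choose 0 : ℤ)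
              - ((m+1).choose 0 : ℤ) * (m.choose 1 : ℤ)) * x * (x+1)^(m+1) := by
      rw [Finset.sum_range_succ']
      have hs : (∑ i ∈ Finset.range m,
            ((((m+1).choose (i+1+1) : ℤ) * (m.choose (i+1) : ℤ)
              - ((m+1).choose (i+1) : ℤ) * (m.choose (i+1+1) : ℤ)) * x^(i+1+1) * (x+1)^((m-(i+1))+1)))
          = ∑ i ∈ Finset.range m,
              ((((m+1).choose (i+2) : ℤ) * (m.choose (i+1) : ℤ)
                - ((m+1).choose (i+1) : ℤ) * (m.choose (i+2) : ℤ)) * x^(i+2) * (x+1)^((m-(i+1))+1)) := by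
        refine Finset.sum_congr rfl fun i hi => ?_
        have h : i+1+1 = i+2 := by omega
        rw [h]
      rw [hs]
      simp only [Nat.sub_zero, pow_one]
      push_cast
      ring
    rw [hA1, hg, hA2, hA3, hN]
    -- combine the four range-m sums pointwise via keyid
    have hfin : (∑ i ∈ Finset.range m,
          ((m.choose (i+2) : ℤ)^2 * x^(i+2) * (x+1)^((m-(i+1))+1)
            - 2*((m.choose (i+1) : ℤ)^2 * x^(i+2) * (x+1)^((m-(i+1))+1))
            + (m.choose i : ℤ)^2 * x^(i+2) * (x+1)^(m-i)
            + (2*(2*(m:ℤ)+3)) *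
              ((((m+1).choose (i+2) : ℤ) * (m.choose (i+1) : ℤ)
                - ((m+1).choose (i+1) : ℤ) * (m.choose (i+2) : ℤ)) * x^(i+2) * (x+1)^((m-(i+1))+1))))
        = ∑ i ∈ Finset.range m, ((m+2).choose (i+2) : ℤ)^2 * x^(i+2) * (x+1)^(m-i) := by
      refine Finset.sum_congr rfl fun i hi => ?_
      have hi' : i < m := Finset.mem_range.mp hi
      have h1 : (m-(i+1))+1 = m-i := by omega
      rw [h1]
      linear_combination (-(x^(i+2))*(x+1)^(m-i)) * keyid m i
    simp only [Finset.sum_add_distrib, Finset.sum_sub_distrib, ← Finset.mul_sum] at hfin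
    simp only [Nat.choose_zero_right, Nat.choose_one_right, Nat.choose_self]
    push_cast
    linear_combination hfin
  rw [hL, hR]

lemma tE_zero (x : ℤ) : tE x 0 = 0 := by simp [tE]

lemma EE_zero (x : ℤ) : EE x 0 = 1 := by simp [EE]

lemma EE_one (x : ℤ) : EE x 1 = 2*x + 1 := by
  simp [EE, Finset.sum_range_succ]
  ring

lemma telescope (x η : ℤ) (hη : η * η = 1) (n : ℕ) :
    (∑ k ∈ Finset.range (n+1), (2*(k:ℤ)+1) * η^k * tE x k) * (2*x*(x+1))
      = η^n * (EE x (n+1) + η * EE x n) - (EE x 1 + η * EE x 0) := by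
  induction n with
  | zero => simp [tE_zero]
  | succ n ih =>
    rw [Finset.sum_range_succ, add_mul, ih]
    have hB := lemB x n
    push_cast
    linear_combination (-(η^(n+1))) * hB - (η^n * EE x (n+1)) * hη

lemma choose_cast_zmod (p : ℕ) (hp : p.Prime) (q : ℕ) (hq : p = q + 1) :
    ∀ k, k ≤ q → ((q.choose k : ℕ) : ZMod p) = (-1)^k := by
  intro k
  induction k with
  | zero => intro _; simp
  | succ k ih =>
    intro hk
    have hk' : k ≤ q := by omega
    have hP : (q+1).choose (k+1) = q.choose k + q.choose (k+1) := Nat.choose_succ_succ q k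
    have hdvd : p ∣ (q+1).choose (k+1) := by
      rw [← hq]
      exact hp.dvd_choose_self (by omega) (by omega)
    have hcast : ((((q+1).choose (k+1) : ℕ)) : ZMod p) = 0 :=
      (ZMod.natCast_eq_zero_iff _ _).mpr hdvd
    rw [hP] at hcast
    push_cast at hcast
    rw [ih hk'] at hcast
    have : ((q.choose (k+1) : ℕ) : ZMod p) = -(-1)^k := by linear_combination hcast
    rw [this]
    ring

lemma EEp_cast (p : ℕ) (hp : p.Prime) (z : ℤ) :
    ((EE z p : ℤ) : ZMod p) = 2*(z : ZMod p) + 1 := by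
  haveI : Fact p.Prime := ⟨hp⟩
  rw [EE]
  push_cast
  have hsub : ({0, p} : Finset ℕ) ⊆ Finset.range (p+1) := by
    intro a ha
    simp only [Finset.mem_insert, Finset.mem_singleton] at ha
    rcases ha with rfl | rfl <;> simp [Finset.mem_range] <;> omega
  rw [← Finset.sum_subset hsub (fun k hk hnk => ?_)]
  · have h0p : (0 : ℕ) ∉ ({p} : Finset ℕ) := by
      simp [hp.ne_zero, Ne.symm hp.ne_zero]
    rw [Finset.sum_insert h0p, Finset.sum_singleton]
    simp only [Nat.choose_self, Nat.choose_zero_right, Nat.cast_one, one_pow, pow_zero,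
      Nat.sub_self, Nat.sub_zero, mul_one, one_mul]
    rw [ZMod.pow_card, ZMod.pow_card]
    ring
  · simp only [Finset.mem_insert, Finset.mem_singleton] at hnk
    push_neg at hnk
    have : ((p.choose k : ℕ) : ZMod p) = 0 := by
      refine (ZMod.natCast_eq_zero_iff _ _).mpr ?_
      exact hp.dvd_choose_self hnk.1 (by have := Finset.mem_range.mp hk; omega)
    rw [this]
    ring

lemma EEq_cast (p : ℕ) (hp : p.Prime) (q : ℕ) (hq : p = q + 1) (z : ℤ) :
    ((EE z q : ℤ) : ZMod p) = 1 := by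
  haveI : Fact p.Prime := ⟨hp⟩
  rw [EE]
  push_cast
  have hS : (∑ k ∈ Finset.range (q+1),
        ((q.choose k : ℕ) : ZMod p)^2 * (z : ZMod p)^k * ((z : ZMod p)+1)^(q-k))
      = ∑ k ∈ Finset.range (q+1), (z : ZMod p)^k * ((z : ZMod p)+1)^(q-k) := by
    refine Finset.sum_congr rfl fun k hk => ?_
    rw [choose_cast_zmod p hp q hq k (by have := Finset.mem_range.mp hk; omega)]
    have : ((-1 : ZMod p)^k)^2 = 1 := by
      rw [← pow_mul, mul_comm k 2, pow_mul]
      norm_num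
    rw [this, one_mul]
  rw [hS, show q+1 = p from hq.symm]
  have hg := geom_sum₂_mul (z : ZMod p) ((z : ZMod p)+1) (q+1)
  simp only [Nat.add_sub_cancel] at hg
  rw [show q+1 = p from hq.symm] at hg
  rw [ZMod.pow_card] at hg
  have h2 : ((z : ZMod p) + 1)^p = (z : ZMod p) + 1 := ZMod.pow_card _
  rw [h2] at hg
  linear_combination (-1 : ZMod p) * hg

theorem sum_linear_weight_little_congr (p : ℕ) (hp : p.Prime) (hodd : Odd p)
    (ε : ℚ) (hε : ε = 1 ∨ ε = -1) (z : ℤ) (hz : Int.gcd (p : ℤ) (z * (z + 1)) = 1) :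
    ∃ m : ℤ, (∑ k ∈ Finset.range p, (2 * (k : ℚ) + 1) * ε ^ k * schroederLittle k (z : ℚ))
      = (p : ℚ) * m := by
  obtain ⟨q, hq⟩ : ∃ q, p = q + 1 := ⟨p - 1, by have := hp.pos; omega⟩
  have hstep : ∀ η : ℤ, η = 1 ∨ η = -1 →
      (p:ℤ) ∣ (∑ k ∈ Finset.range p, (2*(k:ℤ)+1) * η^k * tE z k) := by
    intro η hη
    have hη2 : η * η = 1 := by rcases hη with rfl | rfl <;> norm_num
    have htel := telescope z η hη2 q
    rw [← hq] at htel
    have hqeven : η^q = 1 := by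
      rcases hη with rfl | rfl
      · simp
      · have he : Even q := by
          rcases hodd with ⟨t, ht⟩
          exact ⟨t, by omega⟩
        exact he.neg_one_pow
    rw [hqeven, one_mul, EE_one, EE_zero] at htel
    have hz0 : (((∑ k ∈ Finset.range p, (2*(k:ℤ)+1) * η^k * tE z k) * (2*z*(z+1)) : ℤ)
        : ZMod p) = 0 := by
      rw [htel]
      push_cast
      rw [EEp_cast p hp z, EEq_cast p hp q hq z]
      ring
    have hdvd : (p:ℤ) ∣ (∑ k ∈ Finset.range p, (2*(k:ℤ)+1) * η^k * tE z k) * (2*z*(z+1)) :=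
      (ZMod.intCast_zmod_eq_zero_iff_dvd _ _).mp hz0
    have hpZ : Prime (p:ℤ) := Int.prime_iff_natAbs_prime.mpr (by simpa using hp)
    rcases hpZ.dvd_mul.mp hdvd with h | h
    · exact h
    · exfalso
      have h' : (p:ℤ) ∣ 2*(z*(z+1)) := by
        rw [show (2:ℤ)*(z*(z+1)) = 2*z*(z+1) by ring]
        exact h
      rcases hpZ.dvd_mul.mp h' with h2 | hzz
      · have h2n : p ∣ 2 := by exact_mod_cast h2
        have hle := Nat.le_of_dvd (by norm_num) h2n
        have := hp.two_le
        have hp2 : p = 2 := by omega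
        rcases hodd with ⟨t, ht⟩
        omega
      · have hcop : IsCoprime (p:ℤ) (z*(z+1)) := Int.isCoprime_iff_gcd_eq_one.mpr hz
        exact hpZ.not_unit (hcop.isUnit_of_dvd' (dvd_refl _) hzz)
  rcases hε with rfl | rfl
  · obtain ⟨m, hm⟩ := hstep 1 (Or.inl rfl)
    refine ⟨m, ?_⟩
    have hconv : (∑ k ∈ Finset.range p, (2 * (k : ℚ) + 1) * (1:ℚ) ^ k * schroederLittle k (z : ℚ))
        = ((∑ k ∈ Finset.range p, (2*(k:ℤ)+1) * (1:ℤ)^k * tE z k : ℤ) : ℚ) := by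
      push_cast
      refine Finset.sum_congr rfl fun k hk => ?_
      rw [schroederLittle_eq_tE]
    rw [hconv]
    exact_mod_cast hm
  · obtain ⟨m, hm⟩ := hstep (-1) (Or.inr rfl)
    refine ⟨m, ?_⟩
    have hconv : (∑ k ∈ Finset.range p, (2 * (k : ℚ) + 1) * (-1:ℚ) ^ k * schroederLittle k (z : ℚ))
        = ((∑ k ∈ Finset.range p, (2*(k:ℤ)+1) * (-1:ℤ)^k * tE z k : ℤ) : ℚ) := by
      push_cast
      refine Finset.sum_congr rfl fun k hk => ?_
      rw [schroederLittle_eq_tE]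
    rw [hconv]
    exact_mod_cast hm
end

section
/- For any odd prime p, any nonnegative integer r, any ε ∈ {−1,1}, and any integer z with gcd(p, z(z+1)) = 1, Σ_{k=0}^{p-1} (2k+1)^{2r+1}·ε^k·S_k(z) ≡ 1 (mod p). -/
open Finset

section AuxSchroeder
open Polynomial Finset


lemma descPoch_reflect {R : Type*} [CommRing R] (j : ℕ) (x : R) :
    (descPochhammer R j).eval (x + j) = (-1)^j * (descPochhammer R j).eval (-1 - x) := by
  induction j generalizing x with
  | zero => simp
  | succ j ih =>
    nth_rewrite 2 [descPochhammer_succ_right]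
    rw [descPochhammer_succ_left]
    push_cast
    rw [eval_mul, eval_comp]
    simp only [eval_mul, eval_sub, eval_X, eval_one, eval_natCast]
    have h1 : x + (j + 1) - 1 = x + j := by ring
    rw [h1, ih x]
    ring

lemma choose_reflect (p : ℕ) (hp : p.Prime) (k j : ℕ) (hk : k < p) (hj : j < p) :
    (((k + j).choose j : ℕ) : ZMod p) = (-1)^j * (((p - 1 - k).choose j : ℕ) : ZMod p) := by
  have hfac : ((j.factorial : ℕ) : ZMod p) ≠ 0 := by
    rw [Ne, ZMod.natCast_eq_zero_iff]
    intro h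
    exact absurd ((Nat.Prime.dvd_factorial hp).mp h) (Nat.not_le.mpr hj)
  have : Fact p.Prime := ⟨hp⟩
  apply mul_left_cancel₀ hfac
  have h1 : ((j.factorial * (k + j).choose j : ℕ) : ZMod p)
      = (descPochhammer (ZMod p) j).eval (((k + j : ℕ) : ZMod p)) := by
    rw [descPochhammer_eval_eq_descFactorial, Nat.descFactorial_eq_factorial_mul_choose]
  have h2 : ((j.factorial * (p - 1 - k).choose j : ℕ) : ZMod p)
      = (descPochhammer (ZMod p) j).eval (((p - 1 - k : ℕ) : ZMod p)) := by
    rw [descPochhammer_eval_eq_descFactorial, Nat.descFactorial_eq_factorial_mul_choose]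
  have hcast : ((p - 1 - k : ℕ) : ZMod p) = -1 - (k : ZMod p) := by
    have h3 : p - 1 - k = p - (1 + k) := by omega
    rw [h3, Nat.cast_sub (by omega)]
    push_cast
    rw [ZMod.natCast_self]
    ring
  push_cast at h1 h2 ⊢
  rw [h1]
  have := descPoch_reflect j ((k : ZMod p))
  push_cast at this
  rw [this, ← hcast, ← h2]
  ring

lemma descPoch_eval_neg_one {R : Type*} [CommRing R] (j : ℕ) :
    (descPochhammer R j).eval (-1) = (-1)^j * (j.factorial : R) := by
  have h := descPoch_reflect j (0 : R)
  rw [zero_add, descPochhammer_eval_eq_descFactorial, Nat.descFactorial_self, sub_zero] at h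
  have h2 : ((-1 : R)^j) * ((-1)^j) = 1 := by
    rw [← pow_add]; exact Even.neg_one_pow ⟨j, rfl⟩
  calc (descPochhammer R j).eval (-1)
      = ((-1:R)^j * (-1)^j) * (descPochhammer R j).eval (-1) := by rw [h2, one_mul]
    _ = (-1)^j * ((-1:R)^j * (descPochhammer R j).eval (-1)) := by ring
    _ = (-1)^j * (j.factorial : R) := by rw [← h]

lemma catalan_reflect (p : ℕ) (hp : p.Prime) (hodd : Odd p) :
    ((catalan (p - 1) : ℕ) : ZMod p) = -1 := by
  have hp2 : 2 ≤ p := hp.two_le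
  obtain ⟨n, hn⟩ : ∃ n, p = n + 1 := ⟨p - 1, by omega⟩
  have hn1 : 1 ≤ n := by omega
  subst hn
  simp only [Nat.add_sub_cancel]
  -- step: C(2n, n+1) * (n+1) = C(2n, n) * n
  have e1 : (2*n).choose (n+1) * (n+1) = (2*n).choose n * n := by
    have h := Nat.choose_succ_right_eq (2*n) n
    have h2 : 2*n - n = n := by omega
    rw [h2] at h
    exact h
  have e2 : (n+1) * catalan n = (2*n).choose n := succ_mul_catalan_eq_centralBinom n
  have e3 : (2*n).choose (n+1) = catalan n * n := by
    have h := e1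
    rw [← e2] at h
    -- (2n).choose (n+1) * (n+1) = (n+1) * catalan n * n
    apply Nat.eq_of_mul_eq_mul_left (show 0 < n+1 by omega)
    calc (n+1) * ((2*n).choose (n+1)) = (2*n).choose (n+1) * (n+1) := by ring
      _ = (n+1) * catalan n * n := h
      _ = (n+1) * (catalan n * n) := by ring
  have e4 : (2*n).choose (n+1) = (2*n).choose (n-1) := by
    rw [← Nat.choose_symm (show n+1 ≤ 2*n by omega)]
    congr 1
    omega
  -- In ZMod p: C(2n, n-1) = 1
  have hfac : ((n-1).factorial : ZMod (n+1)) ≠ 0 := by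
    rw [Ne, ZMod.natCast_eq_zero_iff]
    intro h
    have := (Nat.Prime.dvd_factorial hp).mp h
    omega
  have : Fact (Nat.Prime (n+1)) := ⟨hp⟩
  have e5 : (((2*n).choose (n-1) : ℕ) : ZMod (n+1)) = 1 := by
    apply mul_left_cancel₀ hfac
    have h1 : (((n-1).factorial * (2*n).choose (n-1) : ℕ) : ZMod (n+1))
        = (descPochhammer (ZMod (n+1)) (n-1)).eval (((2*n : ℕ) : ZMod (n+1))) := by
      rw [descPochhammer_eval_eq_descFactorial, Nat.descFactorial_eq_factorial_mul_choose]
    have hsum : (2*n : ℕ) = (n+1) + (n-1) := by omega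
    have hc2 : ((2*n : ℕ) : ZMod (n+1)) = (0 : ZMod (n+1)) + ((n-1 : ℕ) : ZMod (n+1)) := by
      rw [hsum, Nat.cast_add, ZMod.natCast_self]
    rw [Nat.cast_mul] at h1
    rw [h1, hc2, descPoch_reflect]
    have hm1 : (-1 - (0:ZMod (n+1))) = -1 := by ring
    rw [hm1, descPoch_eval_neg_one, mul_one, ← mul_assoc, ← pow_add,
      Even.neg_one_pow ⟨n-1, rfl⟩, one_mul]
  -- conclude
  have e6 : ((catalan n * n : ℕ) : ZMod (n+1)) = 1 := by
    rw [← e3, e4]; exact e5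
  have hn' : ((n : ℕ) : ZMod (n+1)) = -1 := by
    have : ((n+1 : ℕ) : ZMod (n+1)) = 0 := ZMod.natCast_self _
    push_cast at this ⊢
    linear_combination this
  push_cast at e6
  rw [hn'] at e6
  linear_combination -e6

lemma nat_key (k j : ℕ) :
    (j+1) * catalan j * ((k+j).choose (2*j)) = k.choose j * ((k+j).choose j) := by
  rw [succ_mul_catalan_eq_centralBinom, Nat.centralBinom]
  rcases le_or_gt j k with h | h
  · have := Nat.choose_mul (n := k+j) (k := 2*j) (s := j) (by omega)
    have h1 : k + j - j = k := by omega
    have h2 : 2*j - j = j := by omega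
    rw [h1, h2] at this
    calc (2*j).choose j * (k+j).choose (2*j) = (k+j).choose (2*j) * (2*j).choose j := by ring
      _ = (k+j).choose j * k.choose j := this
      _ = k.choose j * (k+j).choose j := by ring
  · rw [Nat.choose_eq_zero_of_lt (show k+j < 2*j by omega),
      Nat.choose_eq_zero_of_lt h]
    ring

lemma stepB (p r : ℕ) (hp : p.Prime) (hodd : Odd p) (e z : ℤ)
    (he : e = 1 ∨ e = -1) (hz : ¬ (p:ℤ) ∣ z) :
    ((∑ k ∈ Finset.range p, (2*(k:ℤ)+1)^(2*r+1) * e^k *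
      ∑ j ∈ Finset.range p, (((k+j).choose (2*j) * catalan j : ℕ) : ℤ) * z^j : ℤ) : ZMod p)
      = 1 := by
  have hfp : Fact p.Prime := ⟨hp⟩
  have hp2 : 2 ≤ p := hp.two_le
  -- basic cast facts
  have hzc : ((z : ℤ) : ZMod p) ≠ 0 := by
    rw [Ne, ZMod.intCast_zmod_eq_zero_iff_dvd]; exact hz
  have hzpow : ((z : ℤ) : ZMod p)^(p-1) = 1 := ZMod.pow_card_sub_one_eq_one hzc
  have hEpow : ∀ k : ℕ, k < p → ((e : ZMod p))^(p-1-k) = ((e : ZMod p))^k := by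
    intro k hk
    rcases he with h | h <;> subst h
    · simp
    · push_cast
      have hsq : ((-1 : ZMod p))^k * ((-1 : ZMod p))^k = 1 := by
        rw [← pow_add]; exact Even.neg_one_pow ⟨k, rfl⟩
      have h1 : ((-1 : ZMod p))^(p-1-k) * ((-1 : ZMod p))^k = 1 := by
        rw [← pow_add]
        have : p - 1 - k + k = p - 1 := by omega
        rw [this]
        rcases hodd with ⟨t, ht⟩
        exact Even.neg_one_pow ⟨t, by omega⟩
      calc ((-1 : ZMod p))^(p-1-k) = ((-1 : ZMod p))^(p-1-k) * (((-1 : ZMod p))^k * ((-1 : ZMod p))^k) := by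
            rw [hsq, mul_one]
        _ = (((-1 : ZMod p))^(p-1-k) * ((-1 : ZMod p))^k) * ((-1 : ZMod p))^k := by ring
        _ = ((-1 : ZMod p))^k := by rw [h1, one_mul]
  have hcastsub : ∀ k : ℕ, k < p → ((p - 1 - k : ℕ) : ZMod p) = -1 - (k : ZMod p) := by
    intro k hk
    have h3 : p - 1 - k = p - (1 + k) := by omega
    rw [h3, Nat.cast_sub (by omega)]
    push_cast [ZMod.natCast_self]
    ring
  push_cast
  simp only [Finset.mul_sum]
  rw [Finset.sum_comm]
  obtain ⟨n, hpn⟩ : ∃ n, p = n + 1 := ⟨p - 1, by omega⟩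
  have hne : Even n := by rcases hodd with ⟨t, ht⟩; exact ⟨t, by omega⟩
  have hrange : Finset.range p = Finset.range (n+1) := by rw [hpn]
  rw [hrange, Finset.sum_range_succ]
  have hlast : ∑ k ∈ Finset.range (n+1),
      (2*(k:ZMod p) + 1)^(2*r+1) * (e : ZMod p)^k *
        ((((k+n).choose (2*n) : ℕ) : ZMod p) * ((catalan n : ℕ) : ZMod p) * ((z:ZMod p))^n) = 1 := by
    rw [Finset.sum_eq_single n]
    · have hnc : ((n : ℕ) : ZMod p) = -1 := by
        have h0 : ((n+1 : ℕ) : ZMod p) = 0 := by rw [← hpn]; exact ZMod.natCast_self p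
        push_cast at h0
        linear_combination h0
      have hch : ((n+n).choose (2*n) : ℕ) = 1 := by
        rw [two_mul, Nat.choose_self]
      have hcat : ((catalan n : ℕ) : ZMod p) = -1 := by
        have := catalan_reflect p hp hodd
        rw [show p - 1 = n from by omega] at this
        exact this
      have hzn : ((z:ZMod p))^n = 1 := by
        have := hzpow
        rw [show p - 1 = n from by omega] at this
        exact this
      have hEn : ((e : ZMod p))^n = 1 := by
        rcases he with h | h <;> subst h
        · simp
        · push_cast
          exact Even.neg_one_pow hne
      rw [hch, hnc, hcat, hzn, hEn]
      have : (2*(-1 : ZMod p) + 1) = -1 := by ring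
      rw [this, Odd.neg_one_pow ⟨r, by ring⟩]
      norm_num
    · intro b hb hbn
      have hblt : b < n := by
        simp only [Finset.mem_range] at hb; omega
      rw [Nat.choose_eq_zero_of_lt (show b + n < 2*n by omega)]
      push_cast
      ring
    · intro h
      exact absurd (Finset.self_mem_range_succ n) h
  rw [hlast]
  have hzero : ∀ j ∈ Finset.range n,
      (∑ k ∈ Finset.range (n+1),
        (2*(k:ZMod p) + 1)^(2*r+1) * (e : ZMod p)^k *
          ((((k+j).choose (2*j) : ℕ) : ZMod p) * ((catalan j : ℕ) : ZMod p) * ((z:ZMod p))^j)) = 0 := by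
    intro j hj
    have hjn : j < n := Finset.mem_range.mp hj
    have hj1 : ((j : ZMod p) + 1) ≠ 0 := by
      have : ((j+1 : ℕ) : ZMod p) ≠ 0 := by
        rw [Ne, ZMod.natCast_eq_zero_iff]
        intro h
        have := Nat.le_of_dvd (by omega) h
        omega
      push_cast at this
      exact this
    apply mul_left_cancel₀ hj1
    rw [mul_zero, Finset.mul_sum]
    -- transform each term using nat_key
    have hterm : ∀ k : ℕ,
        ((j : ZMod p) + 1) * ((2*(k:ZMod p) + 1)^(2*r+1) * (e : ZMod p)^k *
          ((((k+j).choose (2*j) : ℕ) : ZMod p) * ((catalan j : ℕ) : ZMod p) * ((z:ZMod p))^j))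
        = (2*(k:ZMod p) + 1)^(2*r+1) * (e : ZMod p)^k *
          (((k.choose j : ℕ) : ZMod p) * (((k+j).choose j : ℕ) : ZMod p)) * ((z:ZMod p))^j := by
      intro k
      have := congrArg (fun t : ℕ => ((t : ℕ) : ZMod p)) (nat_key k j)
      push_cast at this
      linear_combination ((2*(k:ZMod p) + 1)^(2*r+1) * (e : ZMod p)^k * ((z:ZMod p))^j) * this
    simp only [hterm]
    -- now the reflection argument
    have hrefl0 : ∀ (f : ℕ → ZMod p),
        (∀ k ∈ Finset.range (n+1), f (n + 1 - 1 - k) = - f k) →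
        (∑ k ∈ Finset.range (n+1), f k) = - ∑ k ∈ Finset.range (n+1), f k := by
      intro f h
      conv_lhs => rw [← Finset.sum_range_reflect]
      rw [Finset.sum_congr rfl h, Finset.sum_neg_distrib]
    have hrefl : (∑ k ∈ Finset.range (n+1),
        (2*(k:ZMod p) + 1)^(2*r+1) * (e : ZMod p)^k *
          (((k.choose j : ℕ) : ZMod p) * (((k+j).choose j : ℕ) : ZMod p)) * ((z:ZMod p))^j)
        = - ∑ k ∈ Finset.range (n+1),
        (2*(k:ZMod p) + 1)^(2*r+1) * (e : ZMod p)^k *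
          (((k.choose j : ℕ) : ZMod p) * (((k+j).choose j : ℕ) : ZMod p)) * ((z:ZMod p))^j := by
      apply hrefl0
      intro k hk
      have hkn : k < n + 1 := Finset.mem_range.mp hk
      have hkp : k < p := by omega
      have e0 : n + 1 - 1 - k = p - 1 - k := by omega
      rw [e0]
      have e1 : ((p-1-k : ℕ) : ZMod p) = -1 - (k : ZMod p) := hcastsub k hkp
      have e2 : (2*((p-1-k : ℕ) : ZMod p) + 1)^(2*r+1) = -((2*(k:ZMod p)+1)^(2*r+1)) := by
        rw [e1]
        have : (2*(-1 - (k : ZMod p)) + 1) = -(2*(k:ZMod p)+1) := by ring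
        rw [this, Odd.neg_pow ⟨r, by ring⟩]
      have e3 : ((e : ZMod p))^(p-1-k) = ((e : ZMod p))^k := hEpow k hkp
      have hsq : ((-1 : ZMod p))^j * ((-1 : ZMod p))^j = 1 := by
        rw [← pow_add]; exact Even.neg_one_pow ⟨j, rfl⟩
      have e4 : (((p-1-k).choose j : ℕ) : ZMod p) = (-1)^j * (((k+j).choose j : ℕ) : ZMod p) := by
        have h5 := choose_reflect p hp k j hkp (by omega)
        calc (((p-1-k).choose j : ℕ) : ZMod p)
            = ((-1 : ZMod p)^j * (-1)^j) * (((p - 1 - k).choose j : ℕ) : ZMod p) := by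
              rw [hsq, one_mul]
          _ = (-1)^j * ((-1 : ZMod p)^j * (((p - 1 - k).choose j : ℕ) : ZMod p)) := by ring
          _ = (-1)^j * (((k+j).choose j : ℕ) : ZMod p) := by rw [← h5]
      have e5 : (((p-1-k+j).choose j : ℕ) : ZMod p) = (-1)^j * ((k.choose j : ℕ) : ZMod p) := by
        have h6 := choose_reflect p hp (p-1-k) j (by omega) (by omega)
        have h7 : p - 1 - (p - 1 - k) = k := by omega
        rw [h7] at h6
        exact h6
      rw [e2, e3, e4, e5]
      linear_combination (-((2*(k:ZMod p)+1)^(2*r+1) * (e:ZMod p)^k *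
        ((k.choose j : ℕ) : ZMod p) * (((k+j).choose j : ℕ) : ZMod p) * ((z:ZMod p))^j)) * hsq
    have h2V : (2 : ZMod p) * (∑ k ∈ Finset.range (n+1),
        (2*(k:ZMod p) + 1)^(2*r+1) * (e : ZMod p)^k *
          (((k.choose j : ℕ) : ZMod p) * (((k+j).choose j : ℕ) : ZMod p)) * ((z:ZMod p))^j) = 0 := by
      rw [two_mul]
      nth_rewrite 1 [hrefl]
      ring
    have h2ne : (2 : ZMod p) ≠ 0 := by
      have : ((2:ℕ) : ZMod p) ≠ 0 := by
        rw [Ne, ZMod.natCast_eq_zero_iff]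
        intro h
        have := Nat.le_of_dvd (by omega) h
        interval_cases p
        · exact absurd hodd (by decide)
      exact_mod_cast this
    exact (mul_eq_zero.mp h2V).resolve_left h2ne
  rw [Finset.sum_eq_zero hzero, zero_add]

lemma schroederS_eq (k : ℕ) (z : ℚ) :
    schroederS k z = ∑ j ∈ Finset.range (k+1),
      (((k+j).choose (2*j) * catalan j : ℕ) : ℚ) * z^j := by
  unfold schroederS
  apply Finset.sum_congr rfl
  intro j hj
  have hj1 : ((j : ℚ) + 1) ≠ 0 := by positivity
  rw [div_eq_iff hj1]
  have h := congrArg (fun t : ℕ => (t : ℚ)) (nat_key k j)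
  push_cast at h ⊢
  linear_combination (-(z^j)) * h

lemma main_aux (p r : ℕ) (hp : p.Prime) (hodd : Odd p) (e z : ℤ)
    (he : e = 1 ∨ e = -1) (hz : ¬ (p:ℤ) ∣ z) :
    ∃ m : ℤ,
      (∑ k ∈ Finset.range p, (2 * (k : ℚ) + 1) ^ (2 * r + 1) * (e:ℚ) ^ k * schroederS k (z : ℚ)) - 1
        = (p : ℚ) * m := by
  set N : ℤ := ∑ k ∈ Finset.range p, (2*(k:ℤ)+1)^(2*r+1) * e^k *
      ∑ j ∈ Finset.range p, (((k+j).choose (2*j) * catalan j : ℕ) : ℤ) * z^j with hN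
  have hsum : (∑ k ∈ Finset.range p,
      (2 * (k : ℚ) + 1) ^ (2 * r + 1) * (e:ℚ) ^ k * schroederS k (z : ℚ)) = (N : ℚ) := by
    rw [hN]
    push_cast
    apply Finset.sum_congr rfl
    intro k hk
    have hkp : k + 1 ≤ p := Finset.mem_range.mp hk
    rw [schroederS_eq]
    congr 1
    rw [Finset.sum_subset (Finset.range_subset_range.mpr hkp)]
    · apply Finset.sum_congr rfl
      intro j hj
      push_cast
      ring
    · intro x hx hnx
      have : k < x := by
        simp only [Finset.mem_range] at hx hnx ⊢
        omega
      rw [Nat.choose_eq_zero_of_lt (show k + x < 2*x by omega)]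
      push_cast
      ring
  have h1 : ((N : ℤ) : ZMod p) = 1 := stepB p r hp hodd e z he hz
  have hdvd : (p:ℤ) ∣ N - 1 := by
    rw [← ZMod.intCast_zmod_eq_zero_iff_dvd]
    push_cast
    rw [h1]
    ring
  obtain ⟨m, hm⟩ := hdvd
  refine ⟨m, ?_⟩
  rw [hsum]
  exact_mod_cast congrArg (fun t : ℤ => (t : ℚ)) hm


end AuxSchroeder

theorem sum_odd_power_weight_S_congr (p : ℕ) (hp : p.Prime) (hodd : Odd p) (r : ℕ)
    (ε : ℚ) (hε : ε = 1 ∨ ε = -1) (z : ℤ) (hz : Int.gcd (p : ℤ) (z * (z + 1)) = 1) :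
    ∃ m : ℤ,
      (∑ k ∈ Finset.range p, (2 * (k : ℚ) + 1) ^ (2 * r + 1) * ε ^ k * schroederS k (z : ℚ)) - 1
        = (p : ℚ) * m := by
  have hpz : ¬ (p:ℤ) ∣ z := by
    intro h
    have hd : (p:ℤ) ∣ (Int.gcd (p:ℤ) (z*(z+1)) : ℤ) :=
      Int.dvd_coe_gcd dvd_rfl (h.mul_right (z+1))
    rw [hz] at hd
    have := Int.le_of_dvd one_pos hd
    have := hp.two_le
    omega
  rcases hε with h | h <;> subst h
  · have := main_aux p r hp hodd 1 z (Or.inl rfl) hpz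
    simpa using this
  · have := main_aux p r hp hodd (-1) z (Or.inr rfl) hpz
    simpa using this
end

section
/- For any odd prime p, any nonnegative integer r, and any ε ∈ {−1,1}, Σ_{k=0}^{p-1} (2k+1)^{2r+1}·ε^k·s_k ≡ 0 (mod p), where s_k is the k-th little Schröder number. -/
open Finset

noncomputable def littleSchroederNum (n : ℕ) : ℚ :=
  ∑ k ∈ Finset.Icc 1 n,
    (1 / (n : ℚ)) * (n.choose k : ℚ) * (n.choose (k - 1) : ℚ) * 2 ^ (n - k)



def Sz (n : ℕ) : ℤ :=
  ∑ k ∈ Finset.Icc 1 n,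
    (((n-1).choose (k-1) * n.choose k : ℤ) - ((n-1).choose k * n.choose (k-1) : ℤ)) * 2 ^ (n - k)

lemma Sz_zero : Sz 0 = 0 := by simp [Sz]

lemma nar (n k : ℕ) (h1 : 1 ≤ k) (hk : k ≤ n) :
    (n.choose k : ℤ) * n.choose (k-1) =
      n * (((n-1).choose (k-1) * n.choose k : ℤ) - ((n-1).choose k * n.choose (k-1) : ℤ)) := by
  obtain ⟨m, rfl⟩ : ∃ m, n = m + 1 := ⟨n-1, by omega⟩
  obtain ⟨j, rfl⟩ : ∃ j, k = j + 1 := ⟨k-1, by omega⟩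
  simp only [Nat.add_sub_cancel]
  have hj : j ≤ m := by omega
  have e1 : ((m:ℤ)+1) * (m.choose j : ℤ) = ((m+1).choose (j+1) : ℤ) * ((j:ℤ)+1) := by
    have h := congrArg (Nat.cast : ℕ → ℤ) (Nat.add_one_mul_choose_eq m j)
    push_cast at h
    linarith
  have e2 : ((m+1).choose (j+1) : ℤ) * ((j:ℤ)+1) = ((m+1).choose j : ℤ) * ((m:ℤ)+1-j) := by
    have h := congrArg (Nat.cast : ℕ → ℤ) (Nat.choose_succ_right_eq (m+1) j)
    push_cast [Nat.cast_sub (by omega : j ≤ m+1)] at h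
    linarith
  have e3 : (m.choose (j+1) : ℤ) * ((j:ℤ)+1) = (m.choose j : ℤ) * ((m:ℤ)-j) := by
    have h := congrArg (Nat.cast : ℕ → ℤ) (Nat.choose_succ_right_eq m j)
    push_cast [Nat.cast_sub hj] at h
    linarith
  have e4 : ((m:ℤ)+1) * (m.choose (j+1) : ℤ) = ((m+1).choose (j+1) : ℤ) * ((m:ℤ)-j) := by
    have hne : ((j:ℤ)+1) ≠ 0 := by positivity
    apply mul_right_cancel₀ hne
    calc ((m:ℤ)+1) * (m.choose (j+1) : ℤ) * ((j:ℤ)+1)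
        = ((m:ℤ)+1) * ((m.choose (j+1) : ℤ) * ((j:ℤ)+1)) := by ring
    _ = ((m:ℤ)+1) * ((m.choose j : ℤ) * ((m:ℤ)-j)) := by rw [e3]
    _ = (((m:ℤ)+1) * (m.choose j : ℤ)) * ((m:ℤ)-j) := by ring
    _ = (((m+1).choose (j+1) : ℤ) * ((j:ℤ)+1)) * ((m:ℤ)-j) := by rw [e1]
    _ = ((m+1).choose (j+1) : ℤ) * ((m:ℤ)-j) * ((j:ℤ)+1) := by ring
  push_cast
  linear_combination (-((m+1).choose (j+1) : ℤ)) * e1 - ((m+1).choose (j+1) : ℤ) * e2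
    + ((m+1).choose j : ℤ) * e4

lemma L1 (n : ℕ) : littleSchroederNum n = (Sz n : ℚ) := by
  unfold littleSchroederNum Sz
  push_cast
  refine Finset.sum_congr rfl ?_
  intro k hk
  simp only [mem_Icc] at hk
  have hn : (n:ℚ) ≠ 0 := by
    have : 1 ≤ n := le_trans hk.1 hk.2
    exact_mod_cast Nat.one_le_iff_ne_zero.mp this
  have key := nar n k hk.1 hk.2
  have keyQ : (n.choose k : ℚ) * (n.choose (k-1) : ℚ) =
      (n:ℚ) * (((n-1).choose (k-1) * n.choose k : ℚ) - ((n-1).choose k * n.choose (k-1) : ℚ)) := by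
    exact_mod_cast key
  field_simp
  linear_combination keyQ

lemma L2 (n : ℕ) :
    ∑ k ∈ Icc 1 n, n.choose k * n.choose (k-1) * 2^(n-k)
      = ∑ l ∈ Icc 1 n, n.choose l * (n+l).choose (l-1) := by
  have step1 : ∑ k ∈ Icc 1 n, n.choose k * n.choose (k-1) * 2^(n-k)
      = ∑ k ∈ Icc 1 n, ∑ l ∈ Icc k n, n.choose (k-1) * (n.choose l * l.choose k) := by
    refine Finset.sum_congr rfl ?_
    intro k hk
    simp only [mem_Icc] at hk
    rw [← Nat.sum_range_choose (n-k)]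
    rw [Finset.mul_sum]
    have hrange : Icc k n = Ico k (n+1) := by rw [Finset.Ico_add_one_right_eq_Icc]
    rw [hrange, Finset.sum_Ico_eq_sum_range]
    have hb : n + 1 - k = n - k + 1 := by omega
    rw [hb]
    refine Finset.sum_congr rfl ?_
    intro j hj
    simp only [mem_range] at hj
    have hkj : k + j ≤ n := by omega
    have h := Nat.choose_mul (n := n) (k := k + j) (s := k) (Nat.le_add_right k j)
    simp only [Nat.add_sub_cancel_left] at h
    rw [h]
    ring
  rw [step1]
  have step2 : ∑ k ∈ Icc 1 n, ∑ l ∈ Icc k n, n.choose (k-1) * (n.choose l * l.choose k)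
      = ∑ l ∈ Icc 1 n, ∑ k ∈ Icc 1 l, n.choose (k-1) * (n.choose l * l.choose k) := by
    refine Finset.sum_comm' ?_
    intro k l
    simp only [mem_Icc]
    omega
  rw [step2]
  refine Finset.sum_congr rfl ?_
  intro l hl
  simp only [mem_Icc] at hl
  have inner : ∑ k ∈ Icc 1 l, n.choose (k-1) * l.choose k = (n+l).choose (l-1) := by
    rw [show Icc 1 l = Ico 1 (l+1) from (Finset.Ico_add_one_right_eq_Icc 1 l).symm,
      Finset.sum_Ico_eq_sum_range]
    have hb : l + 1 - 1 = l := by omega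
    rw [hb]
    rw [Nat.add_choose_eq, Finset.Nat.sum_antidiagonal_eq_sum_range_succ_mk]
    rw [show (l-1).succ = l by omega]
    refine Finset.sum_congr rfl ?_
    intro i hi
    simp only [mem_range] at hi
    have h1 : 1 + i - 1 = i := by omega
    have h2 : l.choose (1 + i) = l.choose (l - 1 - i) := by
      rw [← Nat.choose_symm (by omega : 1 + i ≤ l)]
      congr 1
      omega
    rw [h1, h2]
  calc ∑ k ∈ Icc 1 l, n.choose (k-1) * (n.choose l * l.choose k)
      = n.choose l * ∑ k ∈ Icc 1 l, n.choose (k-1) * l.choose k := by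
        rw [Finset.mul_sum]; refine Finset.sum_congr rfl fun k _ => by ring
  _ = n.choose l * (n+l).choose (l-1) := by rw [inner]

lemma ustep (n k : ℕ) (hk : k ≤ n) :
    ((k:ℚ)+1)^2 * ((n.choose (k+1) : ℚ) * ((n+k+1).choose (k+1) : ℚ))
      = ((n:ℚ)-k) * ((n:ℚ)+k+1) * ((n.choose k : ℚ) * ((n+k).choose k : ℚ)) := by
  have h3 : (n.choose (k+1) : ℚ) * ((k:ℚ)+1) = (n.choose k : ℚ) * ((n:ℚ)-k) := by
    have h := congrArg (Nat.cast : ℕ → ℚ) (Nat.choose_succ_right_eq n k)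
    push_cast [Nat.cast_sub hk] at h
    linarith
  have h1 : ((n:ℚ)+k+1) * ((n+k).choose k : ℚ) = (((n+k)+1).choose (k+1) : ℚ) * ((k:ℚ)+1) := by
    have h := congrArg (Nat.cast : ℕ → ℚ) (Nat.add_one_mul_choose_eq (n+k) k)
    push_cast at h
    linarith
  linear_combination ((n+k+1).choose (k+1) : ℚ) * ((k:ℚ)+1) * h3
    - (n.choose k : ℚ) * ((n:ℚ)-k) * h1

lemma L3 (n : ℕ) (hn : 1 ≤ n) :
    (∑ l ∈ Icc 1 n, (n.choose l * (n+l).choose (l-1) : ℕ) : ℚ)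
      = ((n:ℚ)/2) * ∑ k ∈ range (n+1), (n.choose k : ℚ) * ((n+k).choose k : ℚ) / ((k:ℚ)+1) := by
  set u : ℕ → ℚ := fun k => (n.choose k : ℚ) * ((n+k).choose k : ℚ) with hu
  have tele : ∑ k ∈ range (n+1), ((k:ℚ) * u k - ((k:ℚ)+1) * u (k+1)) = 0 := by
    have h := Finset.sum_range_sub' (f := fun k => (k:ℚ) * u k) (n+1)
    have hN : ((n+1:ℕ):ℚ) * u (n+1) = 0 := by
      have h0 : n.choose (n+1) = 0 := Nat.choose_succ_self n
      simp [hu, h0]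
    calc ∑ k ∈ range (n+1), ((k:ℚ) * u k - ((k:ℚ)+1) * u (k+1))
        = ∑ k ∈ range (n+1), (((k:ℕ):ℚ) * u k - (((k+1:ℕ)):ℚ) * u (k+1)) := by
          refine Finset.sum_congr rfl fun k _ => by push_cast; ring
    _ = ((0:ℕ):ℚ) * u 0 - ((n+1:ℕ):ℚ) * u (n+1) := h
    _ = 0 := by rw [hN]; norm_num
  have main : ∑ k ∈ range (n+1), (2*(k:ℚ) * u k)
      = ∑ k ∈ range (n+1), ((n:ℚ)*((n:ℚ)+1) * u k / ((k:ℚ)+1)) := by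
    rw [← sub_eq_zero, ← Finset.sum_sub_distrib, ← tele]
    refine Finset.sum_congr rfl ?_
    intro k hk
    simp only [mem_range] at hk
    have hs := ustep n k (by omega)
    have hne : ((k:ℚ)+1) ≠ 0 := by positivity
    simp only [hu]
    rw [show n + (k+1) = n + k + 1 by omega]
    field_simp
    linear_combination hs
  have ext : ∑ k ∈ range (n+1), (k:ℚ) * u k = ∑ l ∈ Icc 1 n, (l:ℚ) * u l := by
    rw [Finset.range_eq_Ico, Finset.sum_eq_sum_Ico_succ_bot (by omega : 0 < n+1)]
    rw [show Ico (0+1) (n+1) = Icc 1 n from Finset.Ico_add_one_right_eq_Icc 1 n]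
    norm_num
  have perl : ∀ l ∈ Icc 1 n, ((n.choose l * (n+l).choose (l-1) : ℕ) : ℚ)
      = (l:ℚ) * u l / ((n:ℚ)+1) := by
    intro l hl
    simp only [mem_Icc] at hl
    have h := congrArg (Nat.cast : ℕ → ℚ) (Nat.choose_succ_right_eq (n+l) (l-1))
    rw [show l - 1 + 1 = l from by omega, show n + l - (l-1) = n+1 from by omega] at h
    push_cast at h
    have hne : ((n:ℚ)+1) ≠ 0 := by positivity
    simp only [hu]
    rw [eq_div_iff hne]
    push_cast
    linear_combination (-(n.choose l : ℚ)) * h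
  calc (∑ l ∈ Icc 1 n, (n.choose l * (n+l).choose (l-1) : ℕ) : ℚ)
      = ∑ l ∈ Icc 1 n, (l:ℚ) * u l / ((n:ℚ)+1) := by
        push_cast
        refine Finset.sum_congr rfl fun l hl => ?_
        have := perl l hl
        push_cast at this
        exact this
  _ = (∑ l ∈ Icc 1 n, (l:ℚ) * u l) / ((n:ℚ)+1) := by rw [Finset.sum_div]
  _ = (∑ k ∈ range (n+1), (k:ℚ) * u k) / ((n:ℚ)+1) := by rw [ext]
  _ = ((n:ℚ)/2) * ∑ k ∈ range (n+1), u k / ((k:ℚ)+1) := by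
      have hne : ((n:ℚ)+1) ≠ 0 := by positivity
      have h2 : ∑ k ∈ range (n+1), (k:ℚ) * u k
          = ((n:ℚ)*((n:ℚ)+1)/2) * ∑ k ∈ range (n+1), u k / ((k:ℚ)+1) := by
        have := main
        rw [Finset.mul_sum]
        rw [← sub_eq_zero, ← Finset.sum_sub_distrib]
        rw [← sub_eq_zero, ← Finset.sum_sub_distrib] at this
        have h4 : ∀ k ∈ range (n+1), ((k:ℚ) * u k - ((n:ℚ)*((n:ℚ)+1)/2) * (u k / ((k:ℚ)+1)))
            = (1/2) * (2*(k:ℚ) * u k - (n:ℚ)*((n:ℚ)+1) * u k / ((k:ℚ)+1)) := by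
          intro k _; ring
        rw [Finset.sum_congr rfl h4, ← Finset.mul_sum, this, mul_zero]
      rw [h2]
      field_simp


lemma formula (n : ℕ) (hn : 1 ≤ n) :
    2 * (Sz n : ℚ)
      = ∑ k ∈ range (n+1), (n.choose k : ℚ) * ((n+k).choose k : ℚ) / ((k:ℚ)+1) := by
  have hnq : (n:ℚ) ≠ 0 := by
    exact_mod_cast Nat.one_le_iff_ne_zero.mp hn
  have h0 : (n:ℚ) * littleSchroederNum n
      = ((∑ k ∈ Icc 1 n, n.choose k * n.choose (k-1) * 2^(n-k) : ℕ) : ℚ) := by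
    unfold littleSchroederNum
    rw [Finset.mul_sum]
    push_cast
    refine Finset.sum_congr rfl fun k _ => ?_
    field_simp
  rw [L2] at h0
  have h1 : ((∑ l ∈ Icc 1 n, n.choose l * (n+l).choose (l-1) : ℕ) : ℚ)
      = ((n:ℚ)/2) * ∑ k ∈ range (n+1), (n.choose k : ℚ) * ((n+k).choose k : ℚ) / ((k:ℚ)+1) := by
    rw [Nat.cast_sum]
    have := L3 n hn
    push_cast at this ⊢
    exact this
  rw [h1] at h0
  rw [L1] at h0
  have h2 : 2 * ((n:ℚ) * (Sz n : ℚ)) = 2 * (((n:ℚ)/2) * ∑ k ∈ range (n+1),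
      (n.choose k : ℚ) * ((n+k).choose k : ℚ) / ((k:ℚ)+1)) := by rw [h0]
  rw [show (2:ℚ) * ((n:ℚ) * (Sz n:ℚ)) = (n:ℚ) * (2 * (Sz n:ℚ)) by ring,
    show (2:ℚ) * (((n:ℚ)/2) * ∑ k ∈ range (n+1),
      (n.choose k : ℚ) * ((n+k).choose k : ℚ) / ((k:ℚ)+1)) = (n:ℚ) * ∑ k ∈ range (n+1),
      (n.choose k : ℚ) * ((n+k).choose k : ℚ) / ((k:ℚ)+1) by ring] at h2
  exact mul_left_cancel₀ hnq h2

lemma intFormula (n N : ℕ) (hn : 1 ≤ n) (hdvd : ∀ k, k ≤ n → (k+1) ∣ N) :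
    2 * (N:ℤ) * Sz n
      = ((∑ k ∈ range (n+1), n.choose k * ((n+k).choose k) * (N/(k+1)) : ℕ) : ℤ) := by
  have hq : ((2 * (N:ℤ) * Sz n : ℤ) : ℚ)
      = (((∑ k ∈ range (n+1), n.choose k * ((n+k).choose k) * (N/(k+1)) : ℕ) : ℤ) : ℚ) := by
    have hR : (((∑ k ∈ range (n+1), n.choose k * ((n+k).choose k) * (N/(k+1)) : ℕ) : ℤ) : ℚ)
        = ∑ k ∈ range (n+1),
            (n.choose k : ℚ) * ((n+k).choose k : ℚ) * (((N/(k+1) : ℕ)) : ℚ) := by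
      push_cast
      rfl
    rw [hR]
    have hL : ((2 * (N:ℤ) * Sz n : ℤ) : ℚ) = (N:ℚ) * (2 * (Sz n : ℚ)) := by push_cast; ring
    rw [hL, formula n hn, Finset.mul_sum]
    refine Finset.sum_congr rfl fun k hk => ?_
    simp only [mem_range] at hk
    have hdk := hdvd k (by omega)
    have hcast : ((N/(k+1) : ℕ) : ℚ) = (N:ℚ)/((k:ℚ)+1) := by
      rw [Nat.cast_div hdk (by positivity)]
      push_cast
      ring
    rw [hcast]
    ring
  exact_mod_cast hq

lemma key_s12 (p : ℕ) (hp : p.Prime) (a j : ℕ) (h : a + j < p) :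
    (((p - 1 - a).choose j : ℕ) : ZMod p) = (-1)^j * (((a+j).choose j : ℕ) : ZMod p) := by
  haveI := Fact.mk hp
  induction j with
  | zero => simp
  | succ j ih =>
    have ihj := ih (by omega)
    have hp2 : 2 ≤ p := hp.two_le
    have hid := Nat.choose_succ_right_eq (p-1-a) j
    have hid2 := Nat.add_one_mul_choose_eq (a+j) j
    -- cast hid to ZMod p
    have hidc := congrArg (Nat.cast : ℕ → ZMod p) hid
    push_cast at hidc
    have hsub : ((p - 1 - a - j : ℕ) : ZMod p) = -(((1 + a + j : ℕ) : ZMod p)) := by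
      rw [show p - 1 - a - j = p - (1 + a + j) by omega]
      rw [Nat.cast_sub (by omega : 1 + a + j ≤ p)]
      simp
    rw [hsub] at hidc
    have hid2c := congrArg (Nat.cast : ℕ → ZMod p) hid2
    push_cast at hid2c
    have hj1 : ((j : ZMod p) + 1) ≠ 0 := by
      intro hcon
      have : (((j+1 : ℕ)) : ZMod p) = 0 := by push_cast; exact hcon
      rw [ZMod.natCast_eq_zero_iff] at this
      have := Nat.le_of_dvd (by omega) this
      omega
    apply mul_right_cancel₀ hj1
    rw [ihj] at hidc
    rw [show a + (j+1) = (a+j)+1 by omega]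
    push_cast at hidc ⊢
    linear_combination hidc - (-1:ZMod p)^j * hid2c

lemma catalanInt (q : ℕ) : (catalan q : ℤ) = ((2*q).choose q : ℤ) - ((2*q).choose (q+1) : ℤ) := by
  have h1 : (q+1) * catalan q = (2*q).choose q := by
    rw [succ_mul_catalan_eq_centralBinom, Nat.centralBinom_eq_two_mul_choose]
  have h2 : (2*q).choose (q+1) * (q+1) = (2*q).choose q * q := by
    have := Nat.choose_succ_right_eq (2*q) q
    rwa [show 2*q - q = q by omega] at this
  have hne : ((q:ℤ)+1) ≠ 0 := by positivity
  apply mul_left_cancel₀ hne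
  have h1' : ((q:ℤ)+1) * (catalan q : ℤ) = ((2*q).choose q : ℤ) := by exact_mod_cast h1
  have h2' : ((2*q).choose (q+1) : ℤ) * ((q:ℤ)+1) = ((2*q).choose q : ℤ) * q := by
    exact_mod_cast h2
  rw [h1']
  linear_combination h2'

lemma catalan_pred_mod (p : ℕ) (hp : p.Prime) (hodd : Odd p) :
    ((catalan (p-1) : ℕ) : ZMod p) = -1 := by
  haveI := Fact.mk hp
  have hp3 : 3 ≤ p := by
    by_contra hcon
    have h2 := hp.two_le
    have : p = 2 := by omega
    subst this
    revert hodd; decide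
  set q := p - 1 with hq
  have hcast := congrArg (fun z : ℤ => (z : ZMod p)) (catalanInt q)
  simp only [Int.cast_sub, Int.cast_natCast] at hcast
  have d1 : (((2*q).choose q : ℕ) : ZMod p) = 0 := by
    rw [ZMod.natCast_eq_zero_iff]
    exact Nat.Prime.dvd_choose hp (by omega) (by omega) (by omega)
  have d2 : (((2*q).choose (q+1) : ℕ) : ZMod p) = 1 := by
    rw [show 2*q = p + (p-2) by omega, show q+1 = p by omega]
    rw [Nat.add_choose_eq, Nat.cast_sum]
    rw [Finset.sum_eq_single_of_mem (p, 0)]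
    · simp
    · simp [Finset.HasAntidiagonal.mem_antidiagonal]
    · rintro ⟨i, j⟩ hmem hne
      simp only [Finset.HasAntidiagonal.mem_antidiagonal] at hmem
      rcases Nat.eq_zero_or_pos i with hi0 | hipos
      · subst hi0
        have hj : j = p := by omega
        have h0 : (p-2).choose j = 0 := by
          rw [hj]; exact Nat.choose_eq_zero_of_lt (by omega)
        simp [h0]
      · have hip : i < p := by
          rcases Nat.lt_or_ge i p with h | h
          · exact h
          · exfalso
            apply hne
            have hi : i = p := by omega
            have hj : j = 0 := by omega
            simp [hi, hj]
        have hdvd : (p : ℕ) ∣ p.choose i := Nat.Prime.dvd_choose_self hp (by omega) hip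
        have h0 : ((p.choose i : ℕ) : ZMod p) = 0 := by
          rw [ZMod.natCast_eq_zero_iff]; exact hdvd
        push_cast
        push_cast at h0
        rw [h0]
        ring
  push_cast at hcast d1 d2 ⊢
  rw [hcast, d1, d2]
  ring

lemma sym0 (p : ℕ) (hp : p.Prime) (hodd : Odd p) : (p:ℤ) ∣ Sz (p-1) := by
  haveI := Fact.mk hp
  have hp3 : 3 ≤ p := by
    by_contra hcon
    have h2 := hp.two_le
    have : p = 2 := by omega
    subst this
    revert hodd; decide
  set n := p - 1 with hn
  have hn1 : 1 ≤ n := by omega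
  set N := (p-1).factorial with hN
  -- rational identity with last term split off
  have hf := formula n hn1
  rw [Finset.sum_range_succ] at hf
  have hlast : (n.choose n : ℚ) * ((n+n).choose n : ℚ) / ((n:ℚ)+1) = (catalan n : ℚ) := by
    rw [Nat.choose_self]
    have hcb : (n+n).choose n = (n+1) * catalan n := by
      rw [succ_mul_catalan_eq_centralBinom, Nat.centralBinom_eq_two_mul_choose,
        show 2*n = n+n by omega]
    rw [hcb]
    have hne : ((n:ℚ)+1) ≠ 0 := by positivity
    push_cast
    field_simp
  rw [hlast] at hf
  -- integer identity
  have hdvdN : ∀ k, k < n → (k+1) ∣ N := by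
    intro k hk
    exact Nat.dvd_factorial (by omega) (by omega)
  have hint : 2 * (N:ℤ) * Sz n
      = ((∑ k ∈ range n, n.choose k * ((n+k).choose k) * (N/(k+1)) : ℕ) : ℤ)
        + (N : ℤ) * (catalan n : ℤ) := by
    have hq : ((2 * (N:ℤ) * Sz n : ℤ) : ℚ)
        = (((∑ k ∈ range n, n.choose k * ((n+k).choose k) * (N/(k+1)) : ℕ) : ℤ) : ℚ)
          + ((N : ℤ) : ℚ) * ((catalan n : ℤ) : ℚ) := by
      have hL : ((2 * (N:ℤ) * Sz n : ℤ) : ℚ) = (N:ℚ) * (2 * (Sz n : ℚ)) := by push_cast; ring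
      rw [hL, hf, mul_add]
      congr 1
      · rw [Finset.mul_sum]
        have hR : (((∑ k ∈ range n, n.choose k * ((n+k).choose k) * (N/(k+1)) : ℕ) : ℤ) : ℚ)
            = ∑ k ∈ range n,
                (n.choose k : ℚ) * ((n+k).choose k : ℚ) * (((N/(k+1) : ℕ)) : ℚ) := by
          push_cast
          try rfl
        rw [hR]
        refine Finset.sum_congr rfl fun k hk => ?_
        simp only [mem_range] at hk
        have hcast : ((N/(k+1) : ℕ) : ℚ) = (N:ℚ)/((k:ℚ)+1) := by
          rw [Nat.cast_div (hdvdN k hk) (by positivity)]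
          push_cast
          ring
        rw [hcast]
        ring
    exact_mod_cast hq
  -- now mod p
  suffices hz : ((Sz n : ℤ) : ZMod p) = 0 by
    exact (ZMod.intCast_zmod_eq_zero_iff_dvd _ p).mp hz
  have hunit : ((2 * (N:ℤ) : ℤ) : ZMod p) ≠ 0 := by
    push_cast
    intro hcon
    rcases mul_eq_zero.mp hcon with h2 | hN0
    · have : ((2:ℕ) : ZMod p) = 0 := by exact_mod_cast h2
      rw [ZMod.natCast_eq_zero_iff] at this
      have := Nat.le_of_dvd (by omega) this
      omega
    · have : ((N:ℕ) : ZMod p) = 0 := by exact_mod_cast hN0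
      rw [ZMod.natCast_eq_zero_iff] at this
      rw [hN, hp.dvd_factorial] at this
      omega
  have hsum0 : (((∑ k ∈ range n, n.choose k * ((n+k).choose k) * (N/(k+1)) : ℕ)) : ZMod p)
      = (N : ZMod p) := by
    rw [Nat.cast_sum]
    simp only [Nat.cast_mul]
    rw [show n = 1 + (n - 1) by omega, Finset.sum_range_add]
    rw [show 1 + (n-1) = n by omega]
    have h0 : ∑ k ∈ range 1,
        ((n.choose k : ℕ) : ZMod p) * (((n+k).choose k : ℕ) : ZMod p) * ((N/(k+1) : ℕ) : ZMod p)
          = (N : ZMod p) := by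
      simp
    rw [h0]
    have hz : ∀ i ∈ range (n-1),
        ((n.choose (1+i) : ℕ) : ZMod p) * (((n+(1+i)).choose (1+i) : ℕ) : ZMod p)
          * ((N/((1+i)+1) : ℕ) : ZMod p) = 0 := by
      intro i hi
      simp only [mem_range] at hi
      have hdvd : (p:ℕ) ∣ (n+(1+i)).choose (1+i) :=
        Nat.Prime.dvd_choose hp (by omega) (by omega) (by omega)
      have hz0 : (((n+(1+i)).choose (1+i) : ℕ) : ZMod p) = 0 := by
        rw [ZMod.natCast_eq_zero_iff]
        exact hdvd
      rw [hz0]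
      ring
    rw [Finset.sum_congr rfl hz]
    simp
  have e1 := congrArg (fun z : ℤ => (z : ZMod p)) hint
  simp only [Int.cast_add, Int.cast_mul, Int.cast_natCast, Int.cast_ofNat] at e1
  rw [hsum0] at e1
  rw [show ((catalan n : ℕ) : ZMod p) = -1 from catalan_pred_mod p hp hodd] at e1
  -- e1 : ((2 * N * Sz n : ℤ) : ZMod p)-ish = N + N * (-1) = 0
  have e2 : ((2 * (N:ℤ) : ℤ) : ZMod p) * ((Sz n : ℤ) : ZMod p) = 0 := by
    push_cast at e1 ⊢
    linear_combination e1
  rcases mul_eq_zero.mp e2 with h | h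
  · exact absurd h hunit
  · exact h

lemma sym (p n m : ℕ) (hp : p.Prime) (hodd : Odd p) (hn : 1 ≤ n) (hnm : n < m)
    (hsum : n + m = p - 1) : (p:ℤ) ∣ Sz m - Sz n := by
  haveI := Fact.mk hp
  have hp3 : 3 ≤ p := by
    by_contra hcon
    have h2 := hp.two_le
    have : p = 2 := by omega
    subst this
    revert hodd; decide
  have hm2 : m ≤ p - 2 := by omega
  set N := (p-1).factorial with hN
  have hdvdN : ∀ k, k ≤ m → (k+1) ∣ N := by
    intro k hk
    exact Nat.dvd_factorial (by omega) (by omega)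
  have hfn := intFormula n N hn (fun k hk => hdvdN k (by omega))
  have hfm := intFormula m N (by omega) hdvdN
  suffices hz : ((Sz m - Sz n : ℤ) : ZMod p) = 0 by
    exact (ZMod.intCast_zmod_eq_zero_iff_dvd _ p).mp hz
  have hunit : ((2 * (N:ℤ) : ℤ) : ZMod p) ≠ 0 := by
    push_cast
    intro hcon
    rcases mul_eq_zero.mp hcon with h2 | hN0
    · have : ((2:ℕ) : ZMod p) = 0 := by exact_mod_cast h2
      rw [ZMod.natCast_eq_zero_iff] at this
      have := Nat.le_of_dvd (by omega) this
      omega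
    · have : ((N:ℕ) : ZMod p) = 0 := by exact_mod_cast hN0
      rw [ZMod.natCast_eq_zero_iff] at this
      rw [hN, hp.dvd_factorial] at this
      omega
  have hmain : (((∑ k ∈ range (m+1), m.choose k * ((m+k).choose k) * (N/(k+1)) : ℕ)) : ZMod p)
      = (((∑ k ∈ range (n+1), n.choose k * ((n+k).choose k) * (N/(k+1)) : ℕ)) : ZMod p) := by
    rw [Nat.cast_sum, Nat.cast_sum]
    simp only [Nat.cast_mul]
    rw [show m + 1 = (n+1) + (m - n) by omega, Finset.sum_range_add]
    have hzero : ∀ i ∈ range (m - n),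
        ((m.choose (n+1+i) : ℕ) : ZMod p) * (((m+(n+1+i)).choose (n+1+i) : ℕ) : ZMod p)
          * ((N/((n+1+i)+1) : ℕ) : ZMod p) = 0 := by
      intro i hi
      simp only [mem_range] at hi
      set k := n + 1 + i with hkdef
      have hdvd : (p:ℕ) ∣ (m+k).choose k :=
        Nat.Prime.dvd_choose hp (by omega) (by omega) (by omega)
      have hz0 : (((m+k).choose k : ℕ) : ZMod p) = 0 := by
        rw [ZMod.natCast_eq_zero_iff]
        exact hdvd
      rw [hz0]
      ring
    rw [Finset.sum_congr rfl hzero]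
    simp only [Finset.sum_const, smul_zero, add_zero]
    refine Finset.sum_congr rfl ?_
    intro k hk
    simp only [mem_range] at hk
    have hk' : k ≤ n := by omega
    have c1 : ((m.choose k : ℕ) : ZMod p) = (-1)^k * (((n+k).choose k : ℕ) : ZMod p) := by
      have hmeq : m = p - 1 - n := by omega
      rw [hmeq]
      exact key_s12 p hp n k (by omega)
    have c2 : (((m+k).choose k : ℕ) : ZMod p) = (-1)^k * ((n.choose k : ℕ) : ZMod p) := by
      have h1 : m + k = p - 1 - (n - k) := by omega
      have h2 := key_s12 p hp (n-k) k (by omega)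
      rw [h1, h2, show n - k + k = n by omega]
    rw [c1, c2]
    have hsq : ((-1 : ZMod p))^k * (-1)^k = 1 := by
      rw [← pow_add, ← two_mul, pow_mul]
      norm_num
    linear_combination ((((n+k).choose k : ℕ) : ZMod p) * ((n.choose k : ℕ) : ZMod p)
      * ((N/(k+1) : ℕ) : ZMod p)) * hsq
  have e1 : ((2 * (N:ℤ) * Sz m : ℤ) : ZMod p) = ((2 * (N:ℤ) * Sz n : ℤ) : ZMod p) := by
    rw [hfm, hfn, Int.cast_natCast, Int.cast_natCast]
    exact hmain
  have e2 : ((2 * (N:ℤ) : ℤ) : ZMod p) * ((Sz m - Sz n : ℤ) : ZMod p) = 0 := by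
    push_cast at e1 ⊢
    linear_combination e1
  rcases mul_eq_zero.mp e2 with h | h
  · exact absurd h hunit
  · exact h

lemma hp3' (p : ℕ) (hp : p.Prime) (hodd : Odd p) : 3 ≤ p := by
  by_contra hcon
  have h2 := hp.two_le
  have : p = 2 := by omega
  subst this
  revert hodd; decide

lemma symAll (p : ℕ) (hp : p.Prime) (hodd : Odd p) (k : ℕ) (hk : k ≤ p - 1) :
    (p:ℤ) ∣ Sz (p-1-k) - Sz k := by
  have hp3 := hp3' p hp hodd
  rcases Nat.eq_zero_or_pos k with rfl | hk1
  · simpa [Sz_zero] using sym0 p hp hodd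
  rcases Nat.lt_trichotomy (2*k) (p-1) with hlt | heq | hgt
  · exact sym p k (p-1-k) hp hodd (by omega) (by omega) (by omega)
  · rw [show p-1-k = k by omega]
    simp
  · rcases Nat.eq_or_lt_of_le hk with heq2 | hklt
    · rw [heq2, show p-1-(p-1) = 0 by omega, Sz_zero, zero_sub]
      exact Dvd.dvd.neg_right (sym0 p hp hodd)
    · have h := sym p (p-1-k) k hp hodd (by omega) (by omega) (by omega)
      have : Sz (p-1-k) - Sz k = -(Sz k - Sz (p-1-k)) := by ring
      rw [this]
      exact Dvd.dvd.neg_right h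

theorem sum_odd_power_weight_littleSchroederNum_congr (p : ℕ) (hp : p.Prime) (hodd : Odd p)
    (r : ℕ) (ε : ℚ) (hε : ε = 1 ∨ ε = -1) :
    ∃ m : ℤ,
      (∑ k ∈ Finset.range p, (2 * (k : ℚ) + 1) ^ (2 * r + 1) * ε ^ k * littleSchroederNum k)
        = (p : ℚ) * m := by
  haveI := Fact.mk hp
  have hp3 := hp3' p hp hodd
  obtain ⟨e, he, he2⟩ : ∃ e : ℤ, ε = (e:ℚ) ∧ (e = 1 ∨ e = -1) := by
    rcases hε with h | h
    · exact ⟨1, by simp [h], Or.inl rfl⟩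
    · exact ⟨-1, by simp [h], Or.inr rfl⟩
  set g : ℕ → ℤ := fun k => (2*(k:ℤ)+1)^(2*r+1) * e^k * Sz k with hg
  have hcast : (∑ k ∈ Finset.range p, (2 * (k : ℚ) + 1) ^ (2 * r + 1) * ε ^ k
        * littleSchroederNum k)
      = ((∑ k ∈ range p, g k : ℤ) : ℚ) := by
    push_cast
    refine Finset.sum_congr rfl fun k _ => ?_
    rw [L1 k, he]
    simp only [hg]
    push_cast
    ring
  have hdvd2 : (p:ℤ) ∣ 2 * ∑ k ∈ range p, g k := by
    have hrefl : ∑ k ∈ range p, g k = ∑ k ∈ range p, g (p - 1 - k) :=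
      (Finset.sum_range_reflect g p).symm
    have h2 : 2 * ∑ k ∈ range p, g k = ∑ k ∈ range p, (g k + g (p-1-k)) := by
      rw [Finset.sum_add_distrib, ← hrefl]
      ring
    rw [h2]
    apply Finset.dvd_sum
    intro k hk
    simp only [mem_range] at hk
    suffices hzz : ((g k + g (p-1-k) : ℤ) : ZMod p) = 0 by
      exact (ZMod.intCast_zmod_eq_zero_iff_dvd _ p).mp hzz
    have hSz : ((Sz (p-1-k) : ℤ) : ZMod p) = ((Sz k : ℤ) : ZMod p) := by
      have hd := symAll p hp hodd k (by omega)
      have h0 := (ZMod.intCast_zmod_eq_zero_iff_dvd _ p).mpr hd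
      push_cast at h0
      exact sub_eq_zero.mp h0
    have hepow : (e:ℤ)^(p-1-k) = e^k := by
      rcases he2 with rfl | rfl
      · simp
      · have hpe : Even (p - 1) := by
          obtain ⟨t, ht⟩ := hodd
          exact ⟨t, by omega⟩
        have hA : (-1:ℤ)^(p-1-k) * (-1:ℤ)^k = 1 := by
          rw [← pow_add, show p-1-k+k = p-1 by omega]
          exact Even.neg_one_pow hpe
        have hB : (-1:ℤ)^k * (-1:ℤ)^k = 1 := by
          rw [← pow_add]
          exact Even.neg_one_pow ⟨k, by ring⟩
        calc (-1:ℤ)^(p-1-k) = (-1:ℤ)^(p-1-k) * ((-1:ℤ)^k * (-1:ℤ)^k) := by rw [hB, mul_one]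
        _ = ((-1:ℤ)^(p-1-k) * (-1:ℤ)^k) * (-1:ℤ)^k := by ring
        _ = (-1:ℤ)^k := by rw [hA, one_mul]
    have hcoef : (((p-1-k : ℕ) : ZMod p)) = -1 - (k : ZMod p) := by
      rw [show p-1-k = p-(1+k) by omega, Nat.cast_sub (by omega : 1+k ≤ p)]
      push_cast
      rw [ZMod.natCast_self]
      ring
    have hepowZ : ((e : ZMod p))^(p-1-k) = ((e : ZMod p))^k := by
      have hc := congrArg (fun z : ℤ => (z : ZMod p)) hepow
      push_cast at hc
      exact hc
    simp only [hg]
    push_cast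
    rw [hepowZ, hcoef, hSz]
    have hodd' : Odd (2*r+1) := ⟨r, by ring⟩
    have hnegpow : (2*(-1 - (k : ZMod p))+1)^(2*r+1) = -((2*(k:ZMod p)+1)^(2*r+1)) := by
      rw [show (2*(-1 - (k : ZMod p))+1) = -(2*(k:ZMod p)+1) by ring]
      exact Odd.neg_pow hodd' _
    rw [hnegpow]
    ring
  have hprime : Prime (p:ℤ) := Nat.prime_iff_prime_int.mp hp
  have hdvd : (p:ℤ) ∣ ∑ k ∈ range p, g k := by
    rcases hprime.dvd_mul.mp hdvd2 with h | h
    · exfalso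
      have h' : (p:ℕ) ∣ 2 := by exact_mod_cast h
      have := Nat.le_of_dvd (by norm_num) h'
      omega
    · exact h
  obtain ⟨m, hm⟩ := hdvd
  refine ⟨m, ?_⟩
  rw [hcast, hm]
  push_cast
  ring
end

section
/- For every positive integer n, S_n = 2·s_n, where S_n and s_n are the large and little Schröder numbers. -/
open Finset

/-- Large Schröder number `S_n`. -/
noncomputable def schroederNum (n : ℕ) : ℚ :=
  ∑ k ∈ Finset.range (n + 1), (n.choose k : ℚ) * ((n + k).choose k : ℚ) / (k + 1)

lemma vand (n m : ℕ) (hm : 1 ≤ m) :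
    ∑ k ∈ Icc 1 m, m.choose k * n.choose (k-1) = (n + m).choose (m - 1) := by
  rw [← Finset.Ico_add_one_right_eq_Icc, Finset.sum_Ico_eq_sum_range]
  have h1 : m + 1 - 1 = m := by omega
  rw [h1, Nat.add_choose_eq, Finset.Nat.sum_antidiagonal_eq_sum_range_succ_mk]
  have h2 : (m - 1).succ = m := by omega
  rw [h2]
  apply Finset.sum_congr rfl
  intro j hj
  simp only [mem_range] at hj
  have h3 : m - 1 - j = m - (1 + j) := by omega
  have h4 : n.choose (1 + j - 1) = n.choose j := by congr 1; omega
  simp only [h3, h4]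
  rw [Nat.choose_symm (by omega), mul_comm]

lemma L1_s13 (n : ℕ) :
    ∑ k ∈ Icc 1 n, n.choose k * n.choose (k-1) * 2^(n-k)
      = ∑ m ∈ Icc 1 n, n.choose m * (n + m).choose (m - 1) := by
  have step1 : ∀ k ∈ Icc 1 n,
      n.choose k * n.choose (k-1) * 2^(n-k)
        = ∑ m ∈ Icc k n, n.choose m * m.choose k * n.choose (k-1) := by
    intro k hk
    simp only [mem_Icc] at hk
    rw [← Nat.sum_range_choose (n-k)]
    rw [← Finset.Ico_add_one_right_eq_Icc, Finset.sum_Ico_eq_sum_range]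
    have h5 : n + 1 - k = n - k + 1 := by omega
    rw [h5, Finset.mul_sum]
    apply Finset.sum_congr rfl
    intro i hi
    simp only [mem_range] at hi
    have key : n.choose (k + i) * (k + i).choose k = n.choose k * (n - k).choose i := by
      rw [Nat.choose_mul (n := n) (k := k + i) (s := k) (by omega)]
      congr 2
      omega
    calc n.choose k * n.choose (k-1) * (n-k).choose i
        = (n.choose k * (n-k).choose i) * n.choose (k-1) := by ring
      _ = (n.choose (k+i) * (k+i).choose k) * n.choose (k-1) := by rw [key]
      _ = n.choose (k+i) * (k+i).choose k * n.choose (k-1) := by ring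
  rw [Finset.sum_congr rfl step1]
  simp only [← Finset.Ico_add_one_right_eq_Icc]
  rw [Finset.sum_Ico_Ico_comm 1 (n+1)
    (fun k m => n.choose m * m.choose k * n.choose (k-1))]
  apply Finset.sum_congr rfl
  intro m hm
  simp only [mem_Ico] at hm
  rw [Finset.Ico_add_one_right_eq_Icc, ← vand n m hm.1, Finset.mul_sum]
  apply Finset.sum_congr rfl
  intro k _
  ring


lemma tele (n k : ℕ) (hk : k ≤ n) :
    (n:ℚ)*((n:ℚ)+1) * ((n.choose k : ℚ) * ((n+k).choose k : ℚ))/((k:ℚ)+1)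
      - 2*(k:ℚ)*((n.choose k : ℚ) * ((n+k).choose k : ℚ))
    = ((k+1:ℕ):ℚ)*((n.choose (k+1):ℕ):ℚ)*(((n+(k+1)).choose (k+1):ℕ):ℚ)
      - (k:ℚ)*(n.choose k:ℚ)*((n+k).choose k:ℚ) := by
  have hA : ((n.choose (k+1) : ℕ):ℚ) * ((k:ℚ)+1) = (n.choose k : ℚ) * ((n:ℚ) - (k:ℚ)) := by
    have h := Nat.choose_succ_right_eq n k
    have h2 : ((n.choose (k+1) * (k+1) : ℕ) : ℚ) = ((n.choose k * (n - k) : ℕ) : ℚ) := by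
      exact congrArg (Nat.cast : ℕ → ℚ) h
    push_cast [Nat.cast_sub hk] at h2
    linarith [h2]
  have hB : ((n:ℚ)+(k:ℚ)+1) * ((n+k).choose k : ℚ)
      = (((n+(k+1)).choose (k+1) : ℕ):ℚ) * ((k:ℚ)+1) := by
    have h := Nat.add_one_mul_choose_eq (n+k) k
    have h2 : (((n+k).succ * (n+k).choose k : ℕ):ℚ)
        = ((((n+k).succ).choose k.succ * k.succ : ℕ):ℚ) := by exact congrArg (Nat.cast : ℕ → ℚ) h
    push_cast at h2
    have h3 : n + (k+1) = (n+k)+1 := by omega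
    rw [h3]
    push_cast
    linarith [h2]
  have hk1 : ((k:ℚ)+1) ≠ 0 := by positivity
  have e1 : ((n.choose (k+1) : ℕ):ℚ) = (n.choose k : ℚ) * ((n:ℚ) - (k:ℚ)) / ((k:ℚ)+1) := by
    field_simp at hA ⊢; linarith [hA]
  have e2 : (((n+(k+1)).choose (k+1) : ℕ):ℚ)
      = ((n:ℚ)+(k:ℚ)+1) * ((n+k).choose k : ℚ) / ((k:ℚ)+1) := by
    field_simp at hB ⊢; linarith [hB]
  rw [e1, e2]
  push_cast
  field_simp
  ring

theorem schroederNum_eq_two_mul_little (n : ℕ) (hn : 1 ≤ n) :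
    schroederNum n = 2 * littleSchroederNum n := by
  have hn0 : (n:ℚ) ≠ 0 := Nat.cast_ne_zero.mpr (by omega)
  have hn1 : (n:ℚ) + 1 ≠ 0 := by positivity
  set f : ℕ → ℚ := fun k => (k:ℚ) * (n.choose k : ℚ) * ((n+k).choose k : ℚ) with hf
  have key : ∑ k ∈ range (n+1),
      ((n:ℚ)*((n:ℚ)+1) * ((n.choose k : ℚ) * ((n+k).choose k : ℚ))/((k:ℚ)+1)
        - 2*(k:ℚ)*((n.choose k : ℚ) * ((n+k).choose k : ℚ))) = 0 := by
    have hc : ∀ k ∈ range (n+1),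
        (n:ℚ)*((n:ℚ)+1) * ((n.choose k : ℚ) * ((n+k).choose k : ℚ))/((k:ℚ)+1)
          - 2*(k:ℚ)*((n.choose k : ℚ) * ((n+k).choose k : ℚ)) = f (k+1) - f k := by
      intro k hk
      simp only [mem_range] at hk
      have := tele n k (by omega)
      simp only [hf]
      push_cast
      push_cast at this
      linarith [this]
    rw [Finset.sum_congr rfl hc, Finset.sum_range_sub f]
    simp [hf, Nat.choose_succ_self]
  rw [Finset.sum_sub_distrib] at key
  have hS : ∑ k ∈ range (n+1),
      (n:ℚ)*((n:ℚ)+1) * ((n.choose k : ℚ) * ((n+k).choose k : ℚ))/((k:ℚ)+1)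
      = (n:ℚ)*((n:ℚ)+1) * schroederNum n := by
    rw [schroederNum, Finset.mul_sum]
    exact Finset.sum_congr rfl fun k _ => by ring
  have ha : littleSchroederNum n
      = (1/(n:ℚ)) * ((∑ k ∈ Icc 1 n, n.choose k * n.choose (k-1) * 2^(n-k) : ℕ) : ℚ) := by
    rw [littleSchroederNum, Nat.cast_sum, Finset.mul_sum]
    exact Finset.sum_congr rfl fun k _ => by push_cast; ring
  have hb : ∀ m ∈ Icc 1 n, ((n:ℚ)+1) * ((n.choose m * (n+m).choose (m-1) : ℕ):ℚ)
      = (m:ℚ)*(n.choose m:ℚ)*((n+m).choose m:ℚ) := by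
    intro m hm
    simp only [mem_Icc] at hm
    have h := Nat.choose_succ_right_eq (n+m) (m-1)
    have hm1 : m - 1 + 1 = m := by omega
    have hm2 : n + m - (m-1) = n + 1 := by omega
    rw [hm1, hm2] at h
    have h2 := congrArg (Nat.cast : ℕ → ℚ) h
    push_cast at h2
    push_cast
    linear_combination (-(n.choose m : ℚ)) * h2
  have hs2 : ∑ k ∈ range (n+1), 2*(k:ℚ)*((n.choose k:ℚ) * ((n+k).choose k:ℚ))
      = (n:ℚ)*((n:ℚ)+1) * (2 * littleSchroederNum n) := by
    have hrange : ∑ k ∈ range (n+1), 2*(k:ℚ)*((n.choose k:ℚ) * ((n+k).choose k:ℚ))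
        = ∑ k ∈ Icc 1 n, 2*(k:ℚ)*((n.choose k:ℚ) * ((n+k).choose k:ℚ)) := by
      rw [Finset.sum_range_succ']
      rw [← Finset.Ico_add_one_right_eq_Icc, Finset.sum_Ico_eq_sum_range]
      simp only [Nat.cast_zero, mul_zero, zero_mul, add_zero, Nat.add_sub_cancel]
      apply Finset.sum_congr rfl
      intro i _
      rw [add_comm 1 i]
    rw [hrange, ha, L1_s13 n, Nat.cast_sum, Finset.mul_sum, Finset.mul_sum, Finset.mul_sum]
    apply Finset.sum_congr rfl
    intro m hm
    have := hb m hm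
    field_simp
    push_cast at this ⊢
    nlinarith [this]
  rw [hS, hs2] at key
  have : (n:ℚ)*((n:ℚ)+1) * schroederNum n = (n:ℚ)*((n:ℚ)+1) * (2 * littleSchroederNum n) := by
    linarith [key]
  exact mul_left_cancel₀ (mul_ne_zero hn0 hn1) this
end

section
/- Let ε ∈ {−1,1}, z ∈ ℤ, and define G(k) = k·x(k) − ε(2k+1)(1+2z)·x(k−1) + (k+1)·x(k−2) for a polynomial x. If x(k) = y(k)(k+1)(k+2) with y ∈ ℤ[k], then for every integer n > 1, Σ_{k=0}^{n-1} G(k)·ε^k·S_k(z) = n(n²−1)·( y(n−1)·ε^{n-1}·S_{n−1}(z) − y(n−2)·ε^n·S_n(z) ); in particular this sum is divisible by n(n²−1). -/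
open Finset

open Nat

noncomputable def acoef (n k : ℕ) : ℚ := (n.choose k : ℚ) * ((n + k).choose k : ℚ) / (k + 1)

lemma aform (k j n N : ℕ) (hn : n = k + j) (hN : N = 2 * k + j) :
    acoef n k = (N ! : ℚ) / ((k + 1)! * (k ! : ℚ) * j !) := by
  subst hn hN
  have h1 : ((k + j).choose k : ℚ) = ((k + j)! : ℚ) / (k ! * (j ! : ℚ)) := by
    rw [Nat.cast_choose ℚ (Nat.le_add_right k j)]
    rw [Nat.add_sub_cancel_left]
  have h2 : ((k + j + k).choose k : ℚ) = ((2 * k + j)! : ℚ) / (k ! * ((k + j)! : ℚ)) := by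
    rw [Nat.cast_choose ℚ (by omega : k ≤ k + j + k)]
    have : k + j + k - k = k + j := by omega
    rw [this]
    congr 3
    omega
  have hk0 : ((k ! : ℚ)) ≠ 0 := by positivity
  have hj0 : ((j ! : ℚ)) ≠ 0 := by positivity
  have hkj0 : (((k + j)! : ℚ)) ≠ 0 := by positivity
  have hk1 : (((k + 1)! : ℚ)) = (k + 1) * k ! := by
    rw [Nat.factorial_succ]; push_cast; ring
  rw [acoef, h1, h2, hk1]
  have : ((k : ℚ) + 1) ≠ 0 := by positivity
  field_simp

lemma starId (m k : ℕ) (hk : k ≤ m + 1) :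
    ((m : ℚ) + 3) * acoef (m + 2) (k + 1) + (m : ℚ) * acoef m (k + 1)
      = (2 * (m : ℚ) + 3) * acoef (m + 1) (k + 1)
        + 2 * (2 * (m : ℚ) + 3) * acoef (m + 1) k := by
  have hfk : ((k ! : ℚ)) ≠ 0 := by positivity
  rcases Nat.lt_or_ge k m with h | h
  · obtain ⟨j, rfl⟩ : ∃ j, m = k + 1 + j := ⟨m - (k + 1), by omega⟩
    rw [aform (k+1) (j+2) (k+1+j+2) (2*k+j+4) (by omega) (by omega),
        aform (k+1) j (k+1+j) (2*k+j+2) (by omega) (by omega),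
        aform (k+1) (j+1) (k+1+j+1) (2*k+j+3) (by omega) (by omega),
        aform k (j+2) (k+1+j+1) (2*k+j+2) (by omega) (by omega)]
    have hfj : ((j ! : ℚ)) ≠ 0 := by positivity
    have hfF : (((2*k+j+2)! : ℚ)) ≠ 0 := by positivity
    have e1 : ((2*k+j+4)! : ℚ)
        = (2*(k:ℚ)+(j:ℚ)+4) * ((2*(k:ℚ)+(j:ℚ)+3) * ((2*k+j+2)! : ℚ)) := by
      rw [show 2*k+j+4 = (2*k+j+3)+1 by omega, Nat.factorial_succ,
          show 2*k+j+3 = (2*k+j+2)+1 by omega, Nat.factorial_succ]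
      push_cast; ring
    have e2 : ((2*k+j+3)! : ℚ) = (2*(k:ℚ)+(j:ℚ)+3) * ((2*k+j+2)! : ℚ) := by
      rw [show 2*k+j+3 = (2*k+j+2)+1 by omega, Nat.factorial_succ]
      push_cast; ring
    have f1 : ((k+1+1)! : ℚ) = ((k:ℚ)+2) * (((k:ℚ)+1) * (k ! : ℚ)) := by
      rw [Nat.factorial_succ, Nat.factorial_succ]; push_cast; ring
    have f2 : ((k+1)! : ℚ) = ((k:ℚ)+1) * (k ! : ℚ) := by
      rw [Nat.factorial_succ]; push_cast; ring
    have g1 : ((j+1)! : ℚ) = ((j:ℚ)+1) * (j ! : ℚ) := by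
      rw [Nat.factorial_succ]; push_cast; ring
    have g2 : ((j+2)! : ℚ) = ((j:ℚ)+2) * (((j:ℚ)+1) * (j ! : ℚ)) := by
      rw [show j+2 = (j+1)+1 by omega, Nat.factorial_succ, Nat.factorial_succ]
      push_cast; ring
    rw [e1, e2, f1, f2, g1, g2]
    push_cast
    have h1 : ((k:ℚ)+1) ≠ 0 := by positivity
    have h2 : ((k:ℚ)+2) ≠ 0 := by positivity
    have h3 : ((j:ℚ)+1) ≠ 0 := by positivity
    have h4 : ((j:ℚ)+2) ≠ 0 := by positivity
    field_simp
    ring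
  · obtain rfl | rfl : k = m ∨ k = m + 1 := by omega
    · have hz : acoef k (k + 1) = 0 := by
        simp [acoef, Nat.choose_eq_zero_of_lt (by omega : k < k + 1)]
      rw [hz,
          aform (k+1) 1 (k+2) (2*k+3) (by omega) (by omega),
          aform (k+1) 0 (k+1) (2*k+2) (by omega) (by omega),
          aform k 1 (k+1) (2*k+1) (by omega) (by omega)]
      have hfF : (((2*k+1)! : ℚ)) ≠ 0 := by positivity
      have e1 : ((2*k+3)! : ℚ)
          = (2*(k:ℚ)+3) * ((2*(k:ℚ)+2) * ((2*k+1)! : ℚ)) := by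
        rw [show 2*k+3 = (2*k+2)+1 by omega, Nat.factorial_succ,
            show 2*k+2 = (2*k+1)+1 by omega, Nat.factorial_succ]
        push_cast; ring
      have e2 : ((2*k+2)! : ℚ) = (2*(k:ℚ)+2) * ((2*k+1)! : ℚ) := by
        rw [show 2*k+2 = (2*k+1)+1 by omega, Nat.factorial_succ]
        push_cast; ring
      have f1 : ((k+1+1)! : ℚ) = ((k:ℚ)+2) * (((k:ℚ)+1) * (k ! : ℚ)) := by
        rw [Nat.factorial_succ, Nat.factorial_succ]; push_cast; ring
      have f2 : ((k+1)! : ℚ) = ((k:ℚ)+1) * (k ! : ℚ) := by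
        rw [Nat.factorial_succ]; push_cast; ring
      rw [e1, e2, f1, f2]
      simp only [Nat.factorial_zero, Nat.factorial_one]
      push_cast
      have h1 : ((k:ℚ)+1) ≠ 0 := by positivity
      have h2 : ((k:ℚ)+2) ≠ 0 := by positivity
      field_simp
      ring
    · have hz1 : acoef m (m + 1 + 1) = 0 := by
        simp [acoef, Nat.choose_eq_zero_of_lt (by omega : m < m + 1 + 1)]
      have hz2 : acoef (m + 1) (m + 1 + 1) = 0 := by
        simp [acoef, Nat.choose_eq_zero_of_lt (by omega : m + 1 < m + 1 + 1)]
      rw [hz1, hz2,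
          aform (m+2) 0 (m+2) (2*m+4) (by omega) (by omega),
          aform (m+1) 0 (m+1) (2*m+2) (by omega) (by omega)]
      have hfm : ((m ! : ℚ)) ≠ 0 := by positivity
      have hfF : (((2*m+2)! : ℚ)) ≠ 0 := by positivity
      have e1 : ((2*m+4)! : ℚ)
          = (2*(m:ℚ)+4) * ((2*(m:ℚ)+3) * ((2*m+2)! : ℚ)) := by
        rw [show 2*m+4 = (2*m+3)+1 by omega, Nat.factorial_succ,
            show 2*m+3 = (2*m+2)+1 by omega, Nat.factorial_succ]
        push_cast; ring
      have f1 : ((m+2+1)! : ℚ)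
          = ((m:ℚ)+3) * (((m:ℚ)+2) * (((m:ℚ)+1) * (m ! : ℚ))) := by
        rw [Nat.factorial_succ, Nat.factorial_succ, Nat.factorial_succ]
        push_cast; ring
      have f2 : ((m+2)! : ℚ) = ((m:ℚ)+2) * (((m:ℚ)+1) * (m ! : ℚ)) := by
        rw [show m+2 = (m+1)+1 by omega, Nat.factorial_succ, Nat.factorial_succ]
        push_cast; ring
      have f3 : ((m+1+1)! : ℚ) = ((m:ℚ)+2) * (((m:ℚ)+1) * (m ! : ℚ)) := by
        rw [Nat.factorial_succ, Nat.factorial_succ]; push_cast; ring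
      have f4 : ((m+1)! : ℚ) = ((m:ℚ)+1) * (m ! : ℚ) := by
        rw [Nat.factorial_succ]; push_cast; ring
      rw [e1, f1, f3, f4]
      simp only [Nat.factorial_zero]
      push_cast
      have h1 : ((m:ℚ)+1) ≠ 0 := by positivity
      have h2 : ((m:ℚ)+2) ≠ 0 := by positivity
      have h3 : ((m:ℚ)+3) ≠ 0 := by positivity
      field_simp
      ring

lemma acoef_zero (n : ℕ) : acoef n 0 = 1 := by simp [acoef]

lemma schroederS_ext (z : ℚ) (n N : ℕ) (h : n + 1 ≤ N) :
    schroederS n z = ∑ k ∈ Finset.range N, acoef n k * z ^ k := by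
  have h1 : schroederS n z = ∑ k ∈ Finset.range (n + 1), acoef n k * z ^ k := by
    unfold schroederS acoef
    exact Finset.sum_congr rfl fun k _ => by ring
  rw [h1]
  apply Finset.sum_subset (Finset.range_subset_range.mpr h)
  intro x hx hnx
  have hlt : n < x := by simp only [Finset.mem_range] at hx hnx; omega
  simp [acoef, Nat.choose_eq_zero_of_lt hlt]

lemma schroeder_rec (m : ℕ) (z : ℚ) :
    ((m : ℚ) + 3) * schroederS (m + 2) z
      = (2 * (m : ℚ) + 3) * (1 + 2 * z) * schroederS (m + 1) z
        - (m : ℚ) * schroederS m z := by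
  have hA : (∑ k ∈ Finset.range (m+2+1), acoef (m+2) k * z ^ k)
      = (∑ k ∈ Finset.range (m+2), acoef (m+2) (k+1) * z ^ (k+1)) + 1 := by
    rw [Finset.sum_range_succ']; simp [acoef_zero]
  have hB : (∑ k ∈ Finset.range (m+2+1), acoef m k * z ^ k)
      = (∑ k ∈ Finset.range (m+2), acoef m (k+1) * z ^ (k+1)) + 1 := by
    rw [Finset.sum_range_succ']; simp [acoef_zero]
  have hC : (∑ k ∈ Finset.range (m+2+1), acoef (m+1) k * z ^ k)
      = (∑ k ∈ Finset.range (m+2), acoef (m+1) (k+1) * z ^ (k+1)) + 1 := by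
    rw [Finset.sum_range_succ']; simp [acoef_zero]
  have hD : (∑ k ∈ Finset.range (m+2+1), acoef (m+1) k * z ^ (k+1))
      = ∑ k ∈ Finset.range (m+2), acoef (m+1) k * z ^ (k+1) := by
    rw [Finset.sum_range_succ,
        show acoef (m+1) (m+2) = 0 by
          simp [acoef, Nat.choose_eq_zero_of_lt (by omega : m + 1 < m + 2)]]
    simp
  have hH : (1 + 2*z) * (∑ k ∈ Finset.range (m+2+1), acoef (m+1) k * z ^ k)
      = (∑ k ∈ Finset.range (m+2+1), acoef (m+1) k * z ^ k)
        + 2 * ∑ k ∈ Finset.range (m+2+1), acoef (m+1) k * z ^ (k+1) := by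
    rw [Finset.mul_sum, Finset.mul_sum, ← Finset.sum_add_distrib]
    exact Finset.sum_congr rfl fun k _ => by ring
  have hstar : ((m:ℚ)+3) * (∑ k ∈ Finset.range (m+2), acoef (m+2) (k+1) * z ^ (k+1))
        + (m:ℚ) * (∑ k ∈ Finset.range (m+2), acoef m (k+1) * z ^ (k+1))
      = (2*(m:ℚ)+3) * (∑ k ∈ Finset.range (m+2), acoef (m+1) (k+1) * z ^ (k+1))
        + 2*(2*(m:ℚ)+3) * ∑ k ∈ Finset.range (m+2), acoef (m+1) k * z ^ (k+1) := by
    rw [Finset.mul_sum, Finset.mul_sum, Finset.mul_sum, Finset.mul_sum,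
        ← Finset.sum_add_distrib, ← Finset.sum_add_distrib]
    refine Finset.sum_congr rfl fun k hk => ?_
    have hk' : k ≤ m + 1 := by simp only [Finset.mem_range] at hk; omega
    linear_combination z^(k+1) * starId m k hk'
  rw [schroederS_ext z (m+2) (m+2+1) (by omega), schroederS_ext z (m+1) (m+2+1) (by omega),
      schroederS_ext z m (m+2+1) (by omega)]
  linear_combination ((m:ℚ)+3) * hA + (m:ℚ) * hB - (2*(m:ℚ)+3) * hH + hstar
    - (2*(m:ℚ)+3) * hC - 2*(2*(m:ℚ)+3) * hD

lemma acoef_int (n k : ℕ) : ∃ b : ℤ, acoef n k = (b : ℚ) := by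
  rcases Nat.lt_or_ge n k with h | h
  · exact ⟨0, by simp [acoef, Nat.choose_eq_zero_of_lt h]⟩
  · refine ⟨(n.choose k : ℤ) * ((n+k).choose k : ℤ) - (n.choose k : ℤ) * ((n+k).choose (k+1) : ℤ)
      + (n.choose (k+1) : ℤ) * ((n+k).choose k : ℤ), ?_⟩
    have hk1 : ((k:ℚ)+1) ≠ 0 := by positivity
    rw [acoef, div_eq_iff hk1]
    have q1 : (((n+k).choose (k+1) : ℚ)) * ((k:ℚ)+1) = ((n+k).choose k : ℚ) * (n:ℚ) := by
      have h1 := Nat.choose_succ_right_eq (n+k) k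
      rw [Nat.add_sub_cancel] at h1
      exact_mod_cast h1
    have q2 : ((n.choose (k+1) : ℚ)) * ((k:ℚ)+1) = (n.choose k : ℚ) * ((n:ℚ) - (k:ℚ)) := by
      have h2 := Nat.choose_succ_right_eq n k
      have h3 : ((n.choose (k+1) * (k+1) : ℕ) : ℚ) = ((n.choose k * (n - k) : ℕ) : ℚ) := by
        exact_mod_cast h2
      push_cast [Nat.cast_sub h] at h3
      linear_combination h3
    push_cast
    linear_combination ((n.choose k : ℚ)) * q1 - (((n+k).choose k : ℚ)) * q2

lemma schroederS_int (n : ℕ) (z : ℤ) : ∃ s : ℤ, schroederS n (z : ℚ) = (s : ℚ) := by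
  choose b hb using acoef_int
  refine ⟨∑ k ∈ Finset.range (n+1), b n k * z^k, ?_⟩
  rw [schroederS_ext (z:ℚ) n (n+1) le_rfl]
  push_cast
  exact Finset.sum_congr rfl fun k _ => by rw [hb]

lemma aeval_int_cast (t : ℤ) (y : Polynomial ℤ) :
    Polynomial.aeval ((t : ℚ)) y = ((Polynomial.aeval t y : ℤ) : ℚ) := by
  have := Polynomial.aeval_algebraMap_apply_eq_algebraMap_eval (A := ℚ) t y
  simpa using this

lemma aux_sum (ε : ℚ) (hε : ε = 1 ∨ ε = -1) (z : ℤ) (y : Polynomial ℤ)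
    (x : ℚ → ℚ) (hx : ∀ t : ℚ, x t = Polynomial.aeval t y * (t + 1) * (t + 2))
    (G : ℚ → ℚ)
    (hG : ∀ t : ℚ, G t = t * x t - ε * (2 * t + 1) * (1 + 2 * (z : ℚ)) * x (t - 1)
        + (t + 1) * x (t - 2)) :
    ∀ N : ℕ, (∑ k ∈ Finset.range N, G (k : ℚ) * ε ^ k * schroederS k (z : ℚ))
      = (N : ℚ) * ((N : ℚ) ^ 2 - 1) *
          (Polynomial.aeval ((N : ℚ) - 1) y * ε ^ (N - 1) * schroederS (N - 1) (z : ℚ)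
            - Polynomial.aeval ((N : ℚ) - 2) y * ε ^ N * schroederS N (z : ℚ)) := by
  intro N
  induction N with
  | zero => simp
  | succ N ih =>
    rw [Finset.sum_range_succ, ih]
    rcases N with _ | M
    · have h1 : G 0 = 0 := by
        rw [hG 0]
        norm_num [hx]
      norm_num [h1]
    · have hrec := schroeder_rec M (z : ℚ)
      simp only [Nat.add_sub_cancel, hG, hx]
      have c1 : ((M + 1 : ℕ) : ℚ) = (M : ℚ) + 1 := by push_cast; ring
      have c2 : ((M + 1 + 1 : ℕ) : ℚ) = (M : ℚ) + 2 := by push_cast; ring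
      rw [c1, c2]
      have d1 : ((M : ℚ) + 1) - 1 = (M : ℚ) := by ring
      have d2 : ((M : ℚ) + 1) - 2 = (M : ℚ) - 1 := by ring
      have d3 : ((M : ℚ) + 2) - 1 = (M : ℚ) + 1 := by ring
      have d4 : ((M : ℚ) + 2) - 2 = (M : ℚ) := by ring
      rw [d1, d2, d3, d4]
      simp only [pow_succ]
      rcases hε with h | h
      · subst h
        linear_combination (((M : ℚ) + 1) * ((M : ℚ) + 2) * Polynomial.aeval ((M : ℚ)) y) * hrec
      · subst h
        linear_combination
          (((M : ℚ) + 1) * ((M : ℚ) + 2) * Polynomial.aeval ((M : ℚ)) y * ((-1 : ℚ)) ^ M) * hrec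

theorem adjoint_sum_eq (ε : ℚ) (hε : ε = 1 ∨ ε = -1) (z : ℤ)
    (y : Polynomial ℤ)
    (x : ℚ → ℚ) (hx : ∀ t : ℚ, x t = Polynomial.aeval t y * (t + 1) * (t + 2))
    (G : ℚ → ℚ)
    (hG : ∀ t : ℚ, G t = t * x t - ε * (2 * t + 1) * (1 + 2 * (z : ℚ)) * x (t - 1)
        + (t + 1) * x (t - 2))
    (n : ℤ) (hn : 1 < n) :
    (∑ k ∈ Finset.range n.toNat, G (k : ℚ) * ε ^ k * schroederS k (z : ℚ))
      = (n : ℚ) * ((n : ℚ) ^ 2 - 1) *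
          (Polynomial.aeval ((n : ℚ) - 1) y * ε ^ (n - 1).toNat * schroederS (n - 1).toNat (z : ℚ)
            - Polynomial.aeval ((n : ℚ) - 2) y * ε ^ n.toNat * schroederS n.toNat (z : ℚ)) ∧
    ∃ m : ℤ,
      (∑ k ∈ Finset.range n.toNat, G (k : ℚ) * ε ^ k * schroederS k (z : ℚ))
        = ((n * (n ^ 2 - 1) : ℤ) : ℚ) * m := by
  obtain ⟨N, rfl⟩ : ∃ N : ℕ, n = (N : ℤ) := ⟨n.toNat, (Int.toNat_of_nonneg (by omega)).symm⟩
  have hN : 2 ≤ N := by exact_mod_cast hn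
  have ht1 : ((N : ℤ)).toNat = N := Int.toNat_natCast N
  have ht2 : ((N : ℤ) - 1).toNat = N - 1 := by omega
  rw [ht1, ht2]
  have hmain : (∑ k ∈ Finset.range N, G (k : ℚ) * ε ^ k * schroederS k (z : ℚ))
      = (N : ℚ) * ((N : ℚ) ^ 2 - 1) *
          (Polynomial.aeval ((N : ℚ) - 1) y * ε ^ (N - 1) * schroederS (N - 1) (z : ℚ)
            - Polynomial.aeval ((N : ℚ) - 2) y * ε ^ N * schroederS N (z : ℚ)) :=
    aux_sum ε hε z y x hx G hG N
  have hcast : (((N : ℤ) : ℚ)) = (N : ℚ) := by push_cast; ring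
  constructor
  · rw [hcast, hmain]
  · obtain ⟨s1, hs1⟩ := schroederS_int (N - 1) z
    obtain ⟨s2, hs2⟩ := schroederS_int N z
    obtain ⟨eZ, he⟩ : ∃ eZ : ℤ, ∀ k : ℕ, ε ^ k = ((eZ ^ k : ℤ) : ℚ) := by
      rcases hε with h | h
      · exact ⟨1, fun k => by simp [h]⟩
      · exact ⟨-1, fun k => by rw [h]; push_cast; ring⟩
    have ha1 : Polynomial.aeval ((N : ℚ) - 1) y
        = ((Polynomial.aeval ((N : ℤ) - 1) y : ℤ) : ℚ) := by
      have hp : ((((N : ℤ) - 1) : ℤ) : ℚ) = (N : ℚ) - 1 := by push_cast; ring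
      rw [← hp, aeval_int_cast]
    have ha2 : Polynomial.aeval ((N : ℚ) - 2) y
        = ((Polynomial.aeval ((N : ℤ) - 2) y : ℤ) : ℚ) := by
      have hp : ((((N : ℤ) - 2) : ℤ) : ℚ) = (N : ℚ) - 2 := by push_cast; ring
      rw [← hp, aeval_int_cast]
    refine ⟨Polynomial.aeval ((N : ℤ) - 1) y * eZ ^ (N - 1) * s1
      - Polynomial.aeval ((N : ℤ) - 2) y * eZ ^ N * s2, ?_⟩
    rw [hmain, ha1, ha2, hs1, hs2, he (N - 1), he N]
    push_cast
    ring
end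

section
/- Let γ ∈ ℚ, J a positive integer, and x(k) ∈ ℚ[k]. Then x(γ+k) = (−1)^{deg x}·x(γ−k−J) (as polynomials in k) if and only if x is a constant multiple of a finite product of factors of the form (k−γ+J/2) and (k−γ+J/2)² − q with q algebraic over ℚ (i.e., q ∈ an algebraic closure of ℚ). -/
open Polynomial

noncomputable section SymmAux

set_option linter.unusedSectionVars false

private lemma comp_add_injective {F : Type*} [CommRing F] (a : F) :
    Function.Injective (fun p : F[X] => p.comp (X + C a)) := by
  intro p q h
  have h2 := congrArg (fun r : F[X] => r.comp (X - C a)) h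
  simpa [comp_assoc] using h2

section Core

variable {K : Type*} [Field K] [IsAlgClosed K] [CharZero K]

private lemma core_prod (l : Multiset K[X])
    (hl : ∀ g ∈ l, g = X ∨ ∃ q : K, g = X ^ 2 - C q) :
    l.prod.Monic ∧ l.prod.comp (-X) = (-1) ^ l.prod.natDegree * l.prod := by
  induction l using Multiset.induction with
  | empty => simp [monic_one]
  | cons g t ih =>
    have ht := ih (fun f hf => hl f (Multiset.mem_cons_of_mem hf))
    have hg : g.Monic ∧ g.comp (-X) = (-1) ^ g.natDegree * g := by
      rcases hl g (Multiset.mem_cons_self g t) with rfl | ⟨q, rfl⟩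
      · exact ⟨monic_X, by simp⟩
      · constructor
        · exact monic_X_pow_sub_C q (by norm_num)
        · have h2 : (X ^ 2 - C q : K[X]).natDegree = 2 := by
            compute_degree!
          simp [h2, sub_comp, pow_comp]
    constructor
    · simpa using hg.1.mul ht.1
    · have hdeg : (g * t.prod).natDegree = g.natDegree + t.prod.natDegree :=
        hg.1.natDegree_mul ht.1
      simp only [Multiset.prod_cons, mul_comp, hg.2, ht.2, hdeg, pow_add]
      ring

private lemma core_bwd (p : K[X]) (c : K) (l : Multiset K[X])
    (hl : ∀ g ∈ l, g = X ∨ ∃ q : K, g = X ^ 2 - C q)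
    (hp : p = C c * l.prod) :
    p = (-1) ^ p.natDegree * p.comp (-X) := by
  by_cases hc : c = 0
  · subst hc; simp at hp; simp [hp]
  · obtain ⟨hmon, hcomp⟩ := core_prod l hl
    have hdeg : p.natDegree = l.prod.natDegree := by
      rw [hp, natDegree_C_mul hc]
    have h1 : p.comp (-X) = (-1) ^ p.natDegree * p := by
      rw [hdeg, hp, mul_comp, C_comp, hcomp]; ring
    rw [h1, ← mul_assoc, ← pow_add, ← two_mul, pow_mul]
    norm_num

private lemma core_fwd : ∀ (n : ℕ) (p : K[X]), p.natDegree ≤ n →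
    p = (-1) ^ p.natDegree * p.comp (-X) →
    ∃ (c : K) (l : Multiset K[X]),
      (∀ g ∈ l, g = X ∨ ∃ q : K, g = X ^ 2 - C q) ∧ p = C c * l.prod := by
  intro n
  induction n using Nat.strong_induction_on with
  | _ n ih =>
  intro p hpn hp
  by_cases h0 : p.natDegree = 0
  · refine ⟨p.coeff 0, 0, ?_, ?_⟩
    · intro g hg; simp at hg
    · simpa using eq_C_of_natDegree_eq_zero h0
  · have hpne : p ≠ 0 := fun h => h0 (by simp [h])
    have hn1 : 1 ≤ n := le_trans (Nat.one_le_iff_ne_zero.mpr h0) hpn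
    obtain ⟨r, hr⟩ := IsAlgClosed.exists_root p
      (fun h => h0 (natDegree_eq_zero_iff_degree_le_zero.mpr (le_of_eq h)))
    have hroot_neg : p.eval (-r) = 0 := by
      have h2 := congrArg (fun q : K[X] => q.eval (-r)) hp
      simp only [eval_mul, eval_pow, eval_neg, eval_one, eval_comp, eval_X, neg_neg] at h2
      rw [h2, hr.eq_zero]
      ring
    by_cases hr0 : r = 0
    · -- p = X * s
      subst hr0
      have h00 : p.coeff 0 = 0 := by
        rw [coeff_zero_eq_eval_zero]; simpa using hroot_neg
      obtain ⟨s, hs⟩ := (X_dvd_iff (f := p)).mpr h00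
      have hsne : s ≠ 0 := fun h => hpne (by simp [hs, h])
      have hp' : X * s = (-1) ^ (X * s).natDegree * (X * s).comp (-X) := by
        rw [← hs]; exact hp
      have hdeg' : (X * s).natDegree = 1 + s.natDegree := by
        rw [natDegree_mul X_ne_zero hsne, natDegree_X]
      have hdeg : p.natDegree = 1 + s.natDegree := by rw [hs]; exact hdeg'
      have key : X * s = X * ((-1) ^ s.natDegree * s.comp (-X)) := by
        rw [hp', mul_comp, X_comp, hdeg', pow_add]
        ring
      have hs' : s = (-1) ^ s.natDegree * s.comp (-X) := mul_left_cancel₀ X_ne_zero key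
      obtain ⟨c, l, hl, hcl⟩ := ih (n - 1) (by omega) s (by omega) hs'
      refine ⟨c, X ::ₘ l, ?_, ?_⟩
      · intro g hg
        rcases Multiset.mem_cons.mp hg with rfl | hg
        · exact Or.inl rfl
        · exact hl g hg
      · rw [hs, hcl, Multiset.prod_cons]; ring
    · -- r ≠ 0 : pair r, -r
      obtain ⟨s, hs⟩ := dvd_iff_isRoot.mpr hr
      have hs_neg : s.eval (-r) = 0 := by
        have h2 : (-r - r) * s.eval (-r) = 0 := by
          rw [← hroot_neg, hs]; simp
        have h3 : (-r - r) ≠ 0 := by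
          intro h; apply hr0
          have h4 : (2 : K) * r = 0 := by linear_combination -h
          rcases mul_eq_zero.mp h4 with h5 | h5
          · exact absurd h5 two_ne_zero
          · exact h5
        exact (mul_eq_zero.mp h2).resolve_left h3
      obtain ⟨t, hts⟩ := (dvd_iff_isRoot (a := -r)).mpr hs_neg
      have hfac : p = (X ^ 2 - C (r ^ 2)) * t := by
        rw [hs, hts, C_neg, C_pow]
        ring
      have htne : t ≠ 0 := fun h => hpne (by simp [hfac, h])
      have hqmon : (X ^ 2 - C (r ^ 2) : K[X]).Monic := monic_X_pow_sub_C _ (by norm_num)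
      have hdeg2 : (X ^ 2 - C (r ^ 2) : K[X]).natDegree = 2 := by compute_degree!
      have hdeg' : ((X ^ 2 - C (r ^ 2)) * t).natDegree = 2 + t.natDegree := by
        rw [natDegree_mul hqmon.ne_zero htne, hdeg2]
      have hdeg : p.natDegree = 2 + t.natDegree := by rw [hfac]; exact hdeg'
      have hqcomp : (X ^ 2 - C (r ^ 2) : K[X]).comp (-X) = X ^ 2 - C (r ^ 2) := by
        simp [sub_comp, pow_comp]
      have hp' : (X ^ 2 - C (r ^ 2)) * t
          = (-1) ^ ((X ^ 2 - C (r ^ 2)) * t).natDegree * ((X ^ 2 - C (r ^ 2)) * t).comp (-X) := by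
        rw [← hfac]; exact hp
      have key : (X ^ 2 - C (r ^ 2)) * t
          = (X ^ 2 - C (r ^ 2)) * ((-1) ^ t.natDegree * t.comp (-X)) := by
        rw [hp', mul_comp, hqcomp, hdeg', pow_add]
        ring
      have ht' : t = (-1) ^ t.natDegree * t.comp (-X) :=
        mul_left_cancel₀ hqmon.ne_zero key
      obtain ⟨c, l, hl, hcl⟩ := ih (n - 1) (by omega) t (by omega) ht'
      refine ⟨c, (X ^ 2 - C (r ^ 2)) ::ₘ l, ?_, ?_⟩
      · intro g hg
        rcases Multiset.mem_cons.mp hg with rfl | hg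
        · exact Or.inr ⟨r ^ 2, rfl⟩
        · exact hl g hg
      · rw [hfac, hcl, Multiset.prod_cons]; ring

end Core

end SymmAux

theorem symmetry_iff_factorization (γ : ℚ) (J : ℕ) (hJ : 0 < J) (x : Polynomial ℚ) :
    (x.comp (Polynomial.C γ + Polynomial.X) =
        (-1 : Polynomial ℚ) ^ x.natDegree *
          x.comp (Polynomial.C γ - Polynomial.X - Polynomial.C (J : ℚ))) ↔
      ∃ (c : AlgebraicClosure ℚ) (l : Multiset (Polynomial (AlgebraicClosure ℚ))),
        (∀ f ∈ l,
          f = Polynomial.X - Polynomial.C (algebraMap ℚ (AlgebraicClosure ℚ) (γ - J / 2)) ∨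
          ∃ q : AlgebraicClosure ℚ,
            f = (Polynomial.X - Polynomial.C (algebraMap ℚ (AlgebraicClosure ℚ) (γ - J / 2))) ^ 2
                  - Polynomial.C q) ∧
        x.map (algebraMap ℚ (AlgebraicClosure ℚ)) = Polynomial.C c * l.prod := by
  set K := AlgebraicClosure ℚ
  set φ := algebraMap ℚ K with hφ
  have hφinj : Function.Injective φ := φ.injective
  set β : ℚ := γ - (J : ℚ) / 2 with hβdef
  set β' : K := φ β with hβ'def
  set y : ℚ[X] := x.comp (C β + X) with hy
  have hxy : x = y.comp (X - C β) := by
    rw [hy, comp_assoc]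
    simp [add_comp, sub_comp]
  have hydeg : y.natDegree = x.natDegree := by
    rw [hy, natDegree_comp]
    simp
  -- Step A
  have e1 : (C γ : ℚ[X]) = C β + C ((J : ℚ) / 2) := by
    rw [← C_add]; norm_num [hβdef]
  have e2 : (C (J : ℚ) : ℚ[X]) = C ((J : ℚ) / 2) + C ((J : ℚ) / 2) := by
    rw [← C_add]; norm_num
  have hmc : ∀ (n : ℕ) (z u : ℚ[X]), ((-1 : ℚ[X]) ^ n * z).comp u = (-1) ^ n * z.comp u := by
    intro n z u; simp [mul_comp, pow_comp]
  have hA : (x.comp (C γ + X) =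
        (-1 : ℚ[X]) ^ x.natDegree * x.comp (C γ - X - C (J : ℚ)))
      ↔ y = (-1) ^ y.natDegree * y.comp (-X) := by
    have l1 : x.comp (C γ + X) = y.comp (X + C ((J : ℚ) / 2)) := by
      rw [hy, comp_assoc, add_comp, C_comp, X_comp, e1]
      congr 1
      ring
    have l2 : x.comp (C γ - X - C (J : ℚ))
        = (y.comp (-X)).comp (X + C ((J : ℚ) / 2)) := by
      rw [hy, comp_assoc, comp_assoc]
      congr 1
      simp only [neg_comp, X_comp, add_comp, C_comp]
      rw [e1, e2]; ring
    rw [l1, l2, hydeg]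
    constructor
    · intro h
      apply comp_add_injective ((J : ℚ) / 2)
      show y.comp (X + C ((J : ℚ) / 2))
          = ((-1) ^ x.natDegree * y.comp (-X)).comp (X + C ((J : ℚ) / 2))
      rw [hmc]
      exact h
    · intro h
      conv_lhs => rw [h]
      rw [hmc]
  rw [hA]
  -- Step B
  set Y : K[X] := y.map φ with hY
  have hYdeg : Y.natDegree = y.natDegree := natDegree_map φ
  have hB : (y = (-1) ^ y.natDegree * y.comp (-X))
      ↔ Y = (-1) ^ Y.natDegree * Y.comp (-X) := by
    rw [hYdeg]
    constructor
    · intro h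
      have h2 := congrArg (Polynomial.map φ) h
      simpa [hY, Polynomial.map_comp, Polynomial.map_mul, Polynomial.map_pow,
        Polynomial.map_neg, Polynomial.map_one] using h2
    · intro h
      apply Polynomial.map_injective φ hφinj
      simpa [hY, Polynomial.map_comp, Polynomial.map_mul, Polynomial.map_pow,
        Polynomial.map_neg, Polynomial.map_one] using h
  rw [hB]
  -- Step C
  have hxmap : x.map φ = Y.comp (X - C β') := by
    rw [hxy, Polynomial.map_comp, ← hY]
    congr 1
    simp [hβ'def, Polynomial.map_sub]
  have hYmap : Y = (x.map φ).comp (X + C β') := by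
    rw [hxmap, comp_assoc]
    simp [sub_comp]
  constructor
  · intro h
    obtain ⟨c, l, hl, hcl⟩ := core_fwd Y.natDegree Y le_rfl h
    refine ⟨c, l.map (fun g => g.comp (X - C β')), ?_, ?_⟩
    · intro f hf
      obtain ⟨g, hg, rfl⟩ := Multiset.mem_map.mp hf
      rcases hl g hg with rfl | ⟨q, rfl⟩
      · exact Or.inl (by simp)
      · exact Or.inr ⟨q, by simp [sub_comp, pow_comp]⟩
    · rw [hxmap, hcl, mul_comp, C_comp, Polynomial.multiset_prod_comp]
  · rintro ⟨c, l, hl, hcl⟩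
    have hYfac : Y = C c * (l.map (fun f => f.comp (X + C β'))).prod := by
      rw [hYmap, hcl, mul_comp, C_comp, Polynomial.multiset_prod_comp]
    have hcond : ∀ g ∈ l.map (fun f => f.comp (X + C β')), g = X ∨ ∃ q : K, g = X ^ 2 - C q := by
      intro g hg
      obtain ⟨f, hf, rfl⟩ := Multiset.mem_map.mp hg
      rcases hl f hf with rfl | ⟨q, rfl⟩
      · exact Or.inl (by simp [sub_comp])
      · exact Or.inr ⟨q, by simp [sub_comp, pow_comp]⟩
    exact core_bwd (K := K) Y c _ hcond hYfac
end
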